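/- arXiv:2605.10909 — 4 statements merged into one kernel-verified Lean document; each statement's English description precedes it below -/
import Mathlib

section
/- Let {π̃_α} be a parametrized family of correlated policies such that J^{π̃_α,k}(μ) is differentiable with respect to α and π̃_α(π_det) > 0 for all π_det. Then ∇_α J^{π̃_α,k}(μ) = (1/(1−γ^k)) · E_{s ∼ d_μ^{π̃_α,k}} [ E_{π_det ∼ π̃_α} [ Q^{π̃_α,k}(s, π_det) · ∇_α log π̃_α(π_det) ] ]. (k-step Policy Gradient Theorem.) -/
set_option linter.unusedSectionVars false
set_option linter.unusedVariables false
set_option maxHeartbeats 1000000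


open Finset

noncomputable section

variable {S A D : Type*} [Fintype S] [Fintype A] [Fintype D] [DecidableEq S]

/-- Transition matrix of a deterministic policy `pol`. -/
def detKernel (P : S → A → S → ℝ) (pol : S → A) : Matrix S S ℝ :=
  Matrix.of fun s s' => P s (pol s) s'

/-- Expected discounted cost incurred during the first `k` steps when following the
deterministic policy `pol` starting from state `s`. -/
def detCost (P : S → A → S → ℝ) (g : S → A → ℝ) (γ : ℝ) (pol : S → A) (k : ℕ) (s : S) : ℝ :=
  ∑ t ∈ Finset.range k, γ ^ t * ∑ s', (detKernel P pol ^ t) s s' * g s' (pol s')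

/-- Value function `J^{π_det}(s)` of a deterministic policy. -/
def detJ (P : S → A → S → ℝ) (g : S → A → ℝ) (γ : ℝ) (pol : S → A) (s : S) : ℝ :=
  ∑' t : ℕ, γ ^ t * ∑ s', (detKernel P pol ^ t) s s' * g s' (pol s')

/-- Value `J^{π_det}(μ)` of a deterministic policy from an initial distribution `μ`. -/
def detJInit (P : S → A → S → ℝ) (g : S → A → ℝ) (γ : ℝ) (pol : S → A) (μ : S → ℝ) : ℝ :=
  ∑ s, μ s * detJ P g γ pol s

/-- The `k`-step transition kernel of the correlated policy with weights `w`
over the family `p` of deterministic policies. -/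
def corKernel (P : S → A → S → ℝ) (p : D → S → A) (w : D → ℝ) (k : ℕ) : Matrix S S ℝ :=
  ∑ d, w d • (detKernel P (p d) ^ k)

/-- Expected discounted cost of one `k`-step block of the correlated policy from `s`. -/
def blockCost (P : S → A → S → ℝ) (g : S → A → ℝ) (γ : ℝ) (p : D → S → A) (w : D → ℝ)
    (k : ℕ) (s : S) : ℝ :=
  ∑ d, w d * detCost P g γ (p d) k s

/-- The `k`-step value function `J^{π̃,k}(s)` of the correlated policy `w`. -/
def Jk (P : S → A → S → ℝ) (g : S → A → ℝ) (γ : ℝ) (p : D → S → A) (w : D → ℝ)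
    (k : ℕ) (s : S) : ℝ :=
  ∑' m : ℕ, γ ^ (m * k) * ∑ s', (corKernel P p w k ^ m) s s' * blockCost P g γ p w k s'

/-- `J^{π̃,k}(μ)`. -/
def JkInit (P : S → A → S → ℝ) (g : S → A → ℝ) (γ : ℝ) (p : D → S → A) (w : D → ℝ)
    (k : ℕ) (μ : S → ℝ) : ℝ :=
  ∑ s, μ s * Jk P g γ p w k s

/-- The `k`-step Q-function `Q^{π̃,k}(s, π')` with deterministic second argument `pol`. -/
def Qk (P : S → A → S → ℝ) (g : S → A → ℝ) (γ : ℝ) (p : D → S → A) (w : D → ℝ)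
    (k : ℕ) (s : S) (pol : S → A) : ℝ :=
  detCost P g γ pol k s + γ ^ k * ∑ s', (detKernel P pol ^ k) s s' * Jk P g γ p w k s'

/-- The `k`-step Q-function `Q^{π̃,k}(s, π̃')` with correlated second argument `w'`. -/
def QkCor (P : S → A → S → ℝ) (g : S → A → ℝ) (γ : ℝ) (p : D → S → A) (w : D → ℝ)
    (k : ℕ) (s : S) (w' : D → ℝ) : ℝ :=
  ∑ d, w' d * Qk P g γ p w k s (p d)

/-- The `k`-step discounted state occupancy measure `d_μ^{π̃,k}(s)`. -/
def dOcc (P : S → A → S → ℝ) (γ : ℝ) (p : D → S → A) (w : D → ℝ) (k : ℕ)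
    (μ : S → ℝ) (s : S) : ℝ :=
  (1 - γ ^ k) * ∑' m : ℕ, γ ^ (m * k) * ∑ s0, μ s0 * (corKernel P p w k ^ m) s0 s


attribute [local instance] Matrix.linftyOpNormedRing Matrix.linftyOpNormedAlgebra

section Generic
lemma rowsum_pow {M : Matrix S S ℝ} {σ : ℝ} (h : ∀ s, ∑ s', M s s' = σ) (m : ℕ) :
    ∀ s, ∑ s', (M ^ m) s s' = σ ^ m := by
  induction m with
  | zero => intro s; simp [Matrix.one_apply]
  | succ m ih =>
    intro s
    rw [pow_succ']
    simp only [Matrix.mul_apply]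
    rw [Finset.sum_comm]
    calc ∑ t, ∑ s', M s t * (M ^ m) t s' = ∑ t, M s t * σ ^ m := by
          refine Finset.sum_congr rfl fun t _ => ?_
          rw [← Finset.mul_sum, ih t]
      _ = σ ^ (m + 1) := by rw [← Finset.sum_mul, h s, pow_succ, mul_comm]

lemma entry_pow_nonneg {M : Matrix S S ℝ} (h : ∀ s s', 0 ≤ M s s') (m : ℕ) :
    ∀ s s', 0 ≤ (M ^ m) s s' := by
  induction m with
  | zero => intro s s'; rw [pow_zero, Matrix.one_apply]; positivity
  | succ m ih =>
    intro s s'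
    rw [pow_succ', Matrix.mul_apply]
    exact Finset.sum_nonneg fun t _ => mul_nonneg (h s t) (ih t s')

lemma entry_pow_le {M : Matrix S S ℝ} {σ : ℝ} (h0 : ∀ s s', 0 ≤ M s s')
    (h : ∀ s, ∑ s', M s s' = σ) (m : ℕ) (s s' : S) : (M ^ m) s s' ≤ σ ^ m := by
  rw [← rowsum_pow h m s]
  exact Finset.single_le_sum (fun t _ => entry_pow_nonneg h0 m s t) (Finset.mem_univ s')

lemma norm_le_of_rows {B : Matrix S S ℝ} {c : ℝ} (hc : 0 ≤ c)
    (h : ∀ s, ∑ s', |B s s'| ≤ c) : ‖B‖ ≤ c := by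
  rw [Matrix.linfty_opNorm_def]
  have : ((Finset.univ : Finset S).sup fun i => ∑ j, ‖B i j‖₊) ≤ ⟨c, hc⟩ := by
    refine Finset.sup_le fun s _ => ?_
    refine NNReal.coe_le_coe.mp ?_
    push_cast
    exact (by simpa [Real.norm_eq_abs] using h s : ∑ j, ‖B s j‖ ≤ c)
  exact_mod_cast this

lemma sum_mul_assoc (A B : Matrix S S ℝ) (x : S → ℝ) (s : S) :
    ∑ j, (A * B) s j * x j = ∑ t, A s t * ∑ j, B t j * x j := by
  simp only [Matrix.mul_apply, Finset.sum_mul]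
  rw [Finset.sum_comm]
  exact Finset.sum_congr rfl fun t _ => by
    rw [Finset.mul_sum]; exact Finset.sum_congr rfl fun j _ => by ring

lemma sum_mul_assoc' (x : S → ℝ) (A B : Matrix S S ℝ) (s : S) :
    ∑ j, (∑ t, x t * A t j) * B j s = ∑ t, x t * (A * B) t s := by
  simp only [Matrix.mul_apply, Finset.sum_mul, Finset.mul_sum]
  exact Finset.sum_comm.trans
    (Finset.sum_congr rfl fun t _ => Finset.sum_congr rfl fun j _ => by ring)

lemma swap_lem {ι κ : Type*} [Fintype ι] [Fintype κ] (a : ι → ℝ) (B : ι → κ → ℝ) (x : κ → ℝ) :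
    ∑ i, a i * ∑ j, B i j * x j = ∑ j, x j * ∑ i, a i * B i j := by
  simp only [Finset.mul_sum]
  exact Finset.sum_comm.trans
    (Finset.sum_congr rfl fun j _ => Finset.sum_congr rfl fun i _ => by ring)
end Generic

section MDP
variable {P : S → A → S → ℝ}

def IsMDP (P : S → A → S → ℝ) : Prop := ∀ s a, (∀ s', 0 ≤ P s a s') ∧ ∑ s', P s a s' = 1

lemma detKernel_nonneg (hP : IsMDP P) (pol : S → A) (s s' : S) : 0 ≤ detKernel P pol s s' := (hP s (pol s)).1 s'

lemma detKernel_rowsum (hP : IsMDP P) (pol : S → A) (s : S) : ∑ s', detKernel P pol s s' = 1 := (hP s (pol s)).2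

lemma corKernel_nonneg (hP : IsMDP P) {p : D → S → A} {v : D → ℝ} (hv : ∀ d, 0 ≤ v d) (k : ℕ) (s s' : S) :
    0 ≤ corKernel P p v k s s' := by
  simp only [corKernel, Matrix.sum_apply, Matrix.smul_apply, smul_eq_mul]
  exact Finset.sum_nonneg fun d _ =>
    mul_nonneg (hv d) (entry_pow_nonneg (detKernel_nonneg hP (p d)) k s s')

lemma corKernel_rowsum (hP : IsMDP P) {p : D → S → A} (v : D → ℝ) (k : ℕ) (s : S) :
    ∑ s', corKernel P p v k s s' = ∑ d, v d := by
  simp only [corKernel, Matrix.sum_apply, Matrix.smul_apply, smul_eq_mul]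
  rw [Finset.sum_comm]
  refine Finset.sum_congr rfl fun d _ => ?_
  rw [← Finset.mul_sum, rowsum_pow (detKernel_rowsum hP (p d)) k s, one_pow, mul_one]

variable {γ : ℝ} {p : D → S → A} {v : D → ℝ} {k : ℕ}

/-- summability of weighted rows of powers of the corKernel against any vector -/
lemma summable_core (hP : IsMDP P) (hγ0 : 0 < γ) (hv : ∀ d, 0 ≤ v d) (hσ : γ ^ k * ∑ d, v d < 1)
    (y : S → ℝ) (hy : ∀ s, 0 ≤ y s) (hy1 : ∑ s, y s = 1) (x : S → ℝ) :
    Summable (fun m : ℕ => γ ^ (m * k) * ∑ s', (∑ s0, y s0 * (corKernel P p v k ^ m) s0 s') * x s') := by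
  set M := corKernel P p v k
  set σ := ∑ d, v d with hσdef
  have hσ0 : 0 ≤ σ := Finset.sum_nonneg fun d _ => hv d
  have hq0 : 0 ≤ γ ^ k * σ := mul_nonneg (pow_nonneg hγ0.le k) hσ0
  have hM0 : ∀ s s', 0 ≤ M s s' := corKernel_nonneg hP hv k
  have hMrow : ∀ s, ∑ s', M s s' = σ := corKernel_rowsum hP v k
  refine Summable.of_norm_bounded
    ((summable_geometric_of_lt_one hq0 hσ).mul_right (∑ s', |x s'|)) (fun m => ?_)
  have hrow : ∀ s0 s', (M ^ m) s0 s' ≤ σ ^ m := entry_pow_le hM0 hMrow m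
  have hpos : ∀ s0 s', 0 ≤ (M ^ m) s0 s' := entry_pow_nonneg hM0 m
  have hent : ∀ s', |∑ s0, y s0 * (M ^ m) s0 s'| ≤ σ ^ m := by
    intro s'
    rw [abs_of_nonneg (Finset.sum_nonneg fun s0 _ => mul_nonneg (hy s0) (hpos s0 s'))]
    calc ∑ s0, y s0 * (M ^ m) s0 s' ≤ ∑ s0, y s0 * σ ^ m :=
          Finset.sum_le_sum fun s0 _ => mul_le_mul_of_nonneg_left (hrow s0 s') (hy s0)
      _ = σ ^ m := by rw [← Finset.sum_mul, hy1, one_mul]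
  rw [Real.norm_eq_abs, abs_mul, abs_of_nonneg (by positivity : (0:ℝ) ≤ γ ^ (m * k))]
  have h1 : |∑ s', (∑ s0, y s0 * (M ^ m) s0 s') * x s'| ≤ σ ^ m * ∑ s', |x s'| := by
    calc |∑ s', (∑ s0, y s0 * (M ^ m) s0 s') * x s'| ≤ ∑ s', |(∑ s0, y s0 * (M ^ m) s0 s') * x s'| :=
          Finset.abs_sum_le_sum_abs _ _
      _ ≤ ∑ s', σ ^ m * |x s'| := Finset.sum_le_sum fun s' _ => by
          rw [abs_mul]
          exact mul_le_mul_of_nonneg_right (hent s') (abs_nonneg _)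
      _ = σ ^ m * ∑ s', |x s'| := by rw [Finset.mul_sum]
  calc γ ^ (m * k) * |∑ s', (∑ s0, y s0 * (M ^ m) s0 s') * x s'|
      ≤ γ ^ (m * k) * (σ ^ m * ∑ s', |x s'|) :=
        mul_le_mul_of_nonneg_left h1 (by positivity)
    _ = (γ ^ k * σ) ^ m * ∑ s', |x s'| := by
        rw [mul_comm m k, pow_mul, mul_pow, mul_assoc]

end MDP

section MDP2
variable {P : S → A → S → ℝ} {g : S → A → ℝ} {γ : ℝ} {p : D → S → A} {v : D → ℝ} {k : ℕ}

lemma summable_Jk (hP : IsMDP P) (hγ0 : 0 < γ) (hv : ∀ d, 0 ≤ v d)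
    (hσ : γ ^ k * ∑ d, v d < 1) (x : S → ℝ) (s : S) :
    Summable (fun m : ℕ => γ ^ (m * k) * ∑ s', (corKernel P p v k ^ m) s s' * x s') := by
  have h := summable_core (p := p) hP hγ0 hv hσ (fun s0 => if s0 = s then 1 else 0)
    (fun s0 => by positivity) (by simp) x
  refine h.congr fun m => ?_
  congr 1
  refine Finset.sum_congr rfl fun s' _ => ?_
  congr 1
  simp [Finset.sum_ite_eq]

lemma summable_nu (hP : IsMDP P) (hγ0 : 0 < γ) (hv : ∀ d, 0 ≤ v d)
    (hσ : γ ^ k * ∑ d, v d < 1) {μ : S → ℝ} (hμ0 : ∀ s, 0 ≤ μ s) (hμ1 : ∑ s, μ s = 1) (s : S) :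
    Summable (fun m : ℕ => γ ^ (m * k) * ∑ s0, μ s0 * (corKernel P p v k ^ m) s0 s) := by
  have h := summable_core (p := p) hP hγ0 hv hσ μ hμ0 hμ1 (fun s' => if s' = s then 1 else 0)
  refine h.congr fun m => ?_
  congr 1
  simp only [mul_boole]
  rw [Finset.sum_ite_eq' Finset.univ s]
  simp

lemma Jk_bellman (hP : IsMDP P) (hγ0 : 0 < γ) (hv : ∀ d, 0 ≤ v d)
    (hσ : γ ^ k * ∑ d, v d < 1) (s : S) :
    Jk P g γ p v k s = blockCost P g γ p v k s
      + γ ^ k * ∑ s', corKernel P p v k s s' * Jk P g γ p v k s' := by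
  set M := corKernel P p v k with hM
  set c := blockCost P g γ p v k with hc
  have hsum : ∀ t, Summable (fun m : ℕ => γ ^ (m * k) * ∑ s', (M ^ m) t s' * c s') :=
    fun t => summable_Jk hP hγ0 hv hσ c t
  have h0 : ∀ t, Jk P g γ p v k t = ∑' m : ℕ, γ ^ (m * k) * ∑ s', (M ^ m) t s' * c s' :=
    fun t => rfl
  simp only [h0]
  rw [Summable.tsum_eq_zero_add (hsum s)]
  congr 1
  · simp [Matrix.one_apply, Finset.sum_ite_eq]
  · have h1 : ∀ m : ℕ, γ ^ ((m + 1) * k) * ∑ s', (M ^ (m + 1)) s s' * c s'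
        = ∑ t, M s t * (γ ^ k * (γ ^ (m * k) * ∑ s', (M ^ m) t s' * c s')) := by
      intro m
      have hkk : (m + 1) * k = k + m * k := by ring
      rw [hkk, pow_add, pow_succ']
      rw [sum_mul_assoc M (M ^ m) c s, Finset.mul_sum]
      exact Finset.sum_congr rfl fun t _ => by ring
    calc ∑' m : ℕ, γ ^ ((m + 1) * k) * ∑ s', (M ^ (m + 1)) s s' * c s'
        = ∑' m : ℕ, ∑ t, M s t * (γ ^ k * (γ ^ (m * k) * ∑ s', (M ^ m) t s' * c s')) :=
          tsum_congr h1
      _ = ∑ t, ∑' m : ℕ, M s t * (γ ^ k * (γ ^ (m * k) * ∑ s', (M ^ m) t s' * c s')) :=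
          Summable.tsum_finsetSum fun t _ => (((hsum t).mul_left (γ ^ k)).mul_left (M s t))
      _ = γ ^ k * ∑ t, M s t * (∑' m : ℕ, γ ^ (m * k) * ∑ s', (M ^ m) t s' * c s') := by
          rw [Finset.mul_sum]
          exact Finset.sum_congr rfl fun t _ => by rw [tsum_mul_left, tsum_mul_left]; ring

def nuF (P : S → A → S → ℝ) (γ : ℝ) (p : D → S → A) (v : D → ℝ) (k : ℕ) (μ : S → ℝ)
    (s : S) : ℝ :=
  ∑' m : ℕ, γ ^ (m * k) * ∑ s0, μ s0 * (corKernel P p v k ^ m) s0 s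

lemma nu_bellman (hP : IsMDP P) (hγ0 : 0 < γ) (hv : ∀ d, 0 ≤ v d)
    (hσ : γ ^ k * ∑ d, v d < 1) {μ : S → ℝ} (hμ0 : ∀ s, 0 ≤ μ s) (hμ1 : ∑ s, μ s = 1) (s : S) :
    nuF P γ p v k μ s = μ s + γ ^ k * ∑ t, nuF P γ p v k μ t * corKernel P p v k t s := by
  set M := corKernel P p v k with hM
  have hsum : ∀ t, Summable (fun m : ℕ => γ ^ (m * k) * ∑ s0, μ s0 * (M ^ m) s0 t) :=
    fun t => summable_nu hP hγ0 hv hσ hμ0 hμ1 t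
  rw [nuF, Summable.tsum_eq_zero_add (hsum s)]
  congr 1
  · simp [Matrix.one_apply, Finset.sum_ite_eq']
  · have h1 : ∀ m : ℕ, γ ^ ((m + 1) * k) * ∑ s0, μ s0 * (M ^ (m + 1)) s0 s
        = ∑ j, (γ ^ k * (γ ^ (m * k) * ∑ t, μ t * (M ^ m) t j)) * M j s := by
      intro m
      have hkk : (m + 1) * k = k + m * k := by ring
      rw [hkk, pow_add, pow_succ, ← sum_mul_assoc' μ (M ^ m) M s, Finset.mul_sum]
      exact Finset.sum_congr rfl fun j _ => by ring
    calc ∑' m : ℕ, γ ^ ((m + 1) * k) * ∑ s0, μ s0 * (M ^ (m + 1)) s0 s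
        = ∑' m : ℕ, ∑ j, (γ ^ k * (γ ^ (m * k) * ∑ t, μ t * (M ^ m) t j)) * M j s :=
          tsum_congr h1
      _ = ∑ j, ∑' m : ℕ, (γ ^ k * (γ ^ (m * k) * ∑ t, μ t * (M ^ m) t j)) * M j s :=
          Summable.tsum_finsetSum fun j _ => (((hsum j).mul_left (γ ^ k)).mul_right (M j s))
      _ = γ ^ k * ∑ j, nuF P γ p v k μ j * M j s := by
          rw [Finset.mul_sum]
          refine Finset.sum_congr rfl fun j _ => ?_
          rw [tsum_mul_right, tsum_mul_left, nuF]
          ring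
end MDP2

section Inv
variable {P : S → A → S → ℝ} {g : S → A → ℝ} {γ : ℝ} {p : D → S → A} {v : D → ℝ} {k : ℕ}

lemma norm_smul_cor_lt (hP : IsMDP P) (hγ0 : 0 < γ) (hv : ∀ d, 0 ≤ v d)
    (hσ : γ ^ k * ∑ d, v d < 1) : ‖γ ^ k • corKernel P p v k‖ < 1 := by
  have hσ0 : 0 ≤ ∑ d, v d := Finset.sum_nonneg fun d _ => hv d
  have h1 : ‖corKernel P p v k‖ ≤ ∑ d, v d := by
    refine norm_le_of_rows hσ0 fun s => ?_
    rw [Finset.sum_congr rfl fun s' _ => abs_of_nonneg (corKernel_nonneg hP hv k s s')]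
    rw [corKernel_rowsum hP v k s]
  calc ‖γ ^ k • corKernel P p v k‖ = |γ ^ k| * ‖corKernel P p v k‖ := by
        rw [norm_smul, Real.norm_eq_abs]
    _ ≤ γ ^ k * ∑ d, v d := by
        rw [abs_of_nonneg (by positivity)]
        exact mul_le_mul_of_nonneg_left h1 (by positivity)
    _ < 1 := hσ

def Rmat (P : S → A → S → ℝ) (γ : ℝ) (p : D → S → A) (v : D → ℝ) (k : ℕ) : Matrix S S ℝ :=
  Ring.inverse ((1 : Matrix S S ℝ) - γ ^ k • corKernel P p v k)

lemma RA_one (hP : IsMDP P) (hγ0 : 0 < γ) (hv : ∀ d, 0 ≤ v d)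
    (hσ : γ ^ k * ∑ d, v d < 1) :
    Rmat P γ p v k * ((1 : Matrix S S ℝ) - γ ^ k • corKernel P p v k) = 1 := by
  have h := norm_smul_cor_lt (p := p) hP hγ0 hv hσ
  rw [Rmat, NormedRing.inverse_one_sub _ h]
  have := (Units.oneSub (γ ^ k • corKernel P p v k) h).inv_mul
  rwa [Units.val_oneSub] at this

lemma AR_one (hP : IsMDP P) (hγ0 : 0 < γ) (hv : ∀ d, 0 ≤ v d)
    (hσ : γ ^ k * ∑ d, v d < 1) :
    ((1 : Matrix S S ℝ) - γ ^ k • corKernel P p v k) * Rmat P γ p v k = 1 := by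
  have h := norm_smul_cor_lt (p := p) hP hγ0 hv hσ
  rw [Rmat, NormedRing.inverse_one_sub _ h]
  have := (Units.oneSub (γ ^ k • corKernel P p v k) h).mul_inv
  rwa [Units.val_oneSub] at this

lemma Jvec_eq (hP : IsMDP P) (hγ0 : 0 < γ) (hv : ∀ d, 0 ≤ v d)
    (hσ : γ ^ k * ∑ d, v d < 1) (s : S) :
    Jk P g γ p v k s = ∑ s', Rmat P γ p v k s s' * blockCost P g γ p v k s' := by
  set M := corKernel P p v k with hM
  set c := blockCost P g γ p v k with hc
  set jv := Jk P g γ p v k with hjv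
  set Am := (1 : Matrix S S ℝ) - γ ^ k • M with hAm
  have hAjv : ∀ j, ∑ t, Am j t * jv t = c j := by
    intro j
    have hb := Jk_bellman (p := p) (g := g) hP hγ0 hv hσ j
    simp only [hAm, Matrix.sub_apply, Matrix.one_apply, Matrix.smul_apply, smul_eq_mul,
      sub_mul, Finset.sum_sub_distrib, ite_mul, one_mul, zero_mul]
    rw [Finset.sum_ite_eq Finset.univ j jv]
    simp only [Finset.mem_univ, if_true]
    have h2 : ∑ x, γ ^ k * M j x * jv x = γ ^ k * ∑ x, M j x * jv x := by
      rw [Finset.mul_sum]; exact Finset.sum_congr rfl fun x _ => by ring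
    rw [h2, show jv j = c j + γ ^ k * ∑ s', M j s' * jv s' from hb]
    ring
  symm
  calc ∑ s', Rmat P γ p v k s s' * c s'
      = ∑ s', Rmat P γ p v k s s' * ∑ t, Am s' t * jv t := by
        exact Finset.sum_congr rfl fun s' _ => by rw [hAjv s']
    _ = ∑ t, (Rmat P γ p v k * Am) s t * jv t := (sum_mul_assoc _ _ _ s).symm
    _ = jv s := by
        rw [RA_one hP hγ0 hv hσ]
        simp [Matrix.one_apply, Finset.sum_ite_eq]

lemma nu_eq (hP : IsMDP P) (hγ0 : 0 < γ) (hv : ∀ d, 0 ≤ v d)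
    (hσ : γ ^ k * ∑ d, v d < 1) {μ : S → ℝ} (hμ0 : ∀ s, 0 ≤ μ s) (hμ1 : ∑ s, μ s = 1) (s : S) :
    nuF P γ p v k μ s = ∑ s0, μ s0 * Rmat P γ p v k s0 s := by
  set M := corKernel P p v k with hM
  set nu := nuF P γ p v k μ with hnu
  set Am := (1 : Matrix S S ℝ) - γ ^ k • M with hAm
  have hnuA : ∀ j, ∑ t, nu t * Am t j = μ j := by
    intro j
    have hb := nu_bellman (p := p) hP hγ0 hv hσ hμ0 hμ1 j
    simp only [hAm, Matrix.sub_apply, Matrix.one_apply, Matrix.smul_apply, smul_eq_mul,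
      mul_sub, Finset.sum_sub_distrib, mul_ite, mul_one, mul_zero]
    rw [Finset.sum_ite_eq' Finset.univ j nu]
    simp only [Finset.mem_univ, if_true]
    have h2 : ∑ t, nu t * (γ ^ k * M t j) = γ ^ k * ∑ t, nu t * M t j := by
      rw [Finset.mul_sum]; exact Finset.sum_congr rfl fun t _ => by ring
    rw [h2, show nu j = μ j + γ ^ k * ∑ t, nu t * M t j from hb]
    ring
  symm
  calc ∑ s0, μ s0 * Rmat P γ p v k s0 s
      = ∑ s0, (∑ t, nu t * Am t s0) * Rmat P γ p v k s0 s := by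
        exact Finset.sum_congr rfl fun s0 _ => by rw [hnuA s0]
    _ = ∑ t, nu t * (Am * Rmat P γ p v k) t s := sum_mul_assoc' _ _ _ s
    _ = nu s := by
        rw [AR_one hP hγ0 hv hσ]
        simp [Matrix.one_apply, Finset.sum_ite_eq']
end Inv

section KeyAlg
variable {S' D' : Type*} [Fintype S'] [Fintype D'] [DecidableEq S']

lemma sum_swap_mul (x : D' → ℝ) (B : D' → S' → ℝ) (y : S' → ℝ) :
    ∑ j, (∑ i, x i * B i j) * y j = ∑ i, x i * ∑ j, B i j * y j := by
  simp only [Finset.sum_mul, Finset.mul_sum]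
  exact Finset.sum_comm.trans
    (Finset.sum_congr rfl fun i _ => Finset.sum_congr rfl fun j _ => by ring)

lemma key_alg_aux (μ ν J c₀ : S' → ℝ) (R Mu : Matrix S' S' ℝ)
    (K : D' → Matrix S' S' ℝ) (cd : D' → S' → ℝ) (gk : ℝ) (u : D' → ℝ)
    (hν : ∀ t, ∑ s, μ s * R s t = ν t) (hJ : ∀ t, ∑ s', R t s' * c₀ s' = J t)
    (hMu : ∀ t r, Mu t r = ∑ d, u d * K d t r) :
    ∑ s, μ s * ∑ s', (R s s' * (∑ d, u d * cd d s')
        + c₀ s' * (gk * ((R * Mu * R) s s')))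
      = ∑ d, u d * ∑ t, ν t * (cd d t + gk * ∑ r, K d t r * J r) := by
  have hsplit : ∑ s, μ s * ∑ s', (R s s' * (∑ d, u d * cd d s')
        + c₀ s' * (gk * ((R * Mu * R) s s')))
      = (∑ s, μ s * ∑ s', R s s' * (∑ d, u d * cd d s'))
        + ∑ s, μ s * ∑ s', c₀ s' * (gk * ((R * Mu * R) s s')) := by
    rw [← Finset.sum_add_distrib]
    exact Finset.sum_congr rfl fun s _ => by rw [Finset.sum_add_distrib, mul_add]
  rw [hsplit]
  -- T1
  have hT1 : ∑ s, μ s * ∑ s', R s s' * (∑ d, u d * cd d s')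
      = ∑ d, u d * ∑ t, cd d t * ν t := by
    rw [swap_lem μ R (fun s' => ∑ d, u d * cd d s')]
    simp only [fun j => hν j]
    rw [sum_swap_mul u (fun d j => cd d j) ν]
  -- T2
  have hY : ∀ s, ∑ s', (R * Mu * R) s s' * c₀ s' = ∑ t, R s t * ∑ r, Mu t r * J r := by
    intro s
    rw [mul_assoc, sum_mul_assoc R (Mu * R) c₀ s]
    refine Finset.sum_congr rfl fun t _ => ?_
    rw [sum_mul_assoc Mu R c₀ t]
    exact congrArg _ (Finset.sum_congr rfl fun r _ => by rw [hJ r])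
  have hT2 : ∑ s, μ s * ∑ s', c₀ s' * (gk * ((R * Mu * R) s s'))
      = ∑ d, u d * (gk * ∑ t, ν t * ∑ r, K d t r * J r) := by
    have h1 : ∀ s, ∑ s', c₀ s' * (gk * ((R * Mu * R) s s'))
        = gk * ∑ s', (R * Mu * R) s s' * c₀ s' := by
      intro s
      rw [Finset.mul_sum]
      exact Finset.sum_congr rfl fun s' _ => by ring
    simp only [h1, hY]
    have h2 : ∑ s, μ s * (gk * ∑ t, R s t * ∑ r, Mu t r * J r)
        = gk * ∑ s, μ s * ∑ t, R s t * ∑ r, Mu t r * J r := by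
      rw [Finset.mul_sum]
      exact Finset.sum_congr rfl fun s _ => by ring
    rw [h2, swap_lem μ R (fun t => ∑ r, Mu t r * J r)]
    simp only [fun t => hν t]
    have h3 : ∀ t, ∑ r, Mu t r * J r = ∑ d, u d * ∑ r, K d t r * J r := by
      intro t
      simp only [fun r => hMu t r]
      rw [sum_swap_mul u (fun d r => K d t r) J]
    simp only [h3]
    rw [sum_swap_mul u (fun d j => ∑ r, K d j r * J r) ν, Finset.mul_sum]
    refine Finset.sum_congr rfl fun d _ => ?_
    have h4 : ∑ j, (∑ r, K d j r * J r) * ν j = ∑ t, ν t * ∑ r, K d t r * J r :=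
      Finset.sum_congr rfl fun t _ => by ring
    rw [h4]
    ring
  rw [hT1, hT2, ← Finset.sum_add_distrib]
  refine Finset.sum_congr rfl fun d _ => ?_
  rw [← mul_add]
  congr 1
  rw [Finset.mul_sum, ← Finset.sum_add_distrib]
  exact Finset.sum_congr rfl fun t _ => by ring

lemma key_alg (μ ν J c₀ : S' → ℝ) (R : Matrix S' S' ℝ)
    (K : D' → Matrix S' S' ℝ) (cd : D' → S' → ℝ) (gk : ℝ) (u : D' → ℝ)
    (hν : ∀ t, ∑ s, μ s * R s t = ν t) (hJ : ∀ t, ∑ s', R t s' * c₀ s' = J t) :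
    ∑ s, μ s * ∑ s', (R s s' * (∑ d, u d * cd d s')
        + c₀ s' * (gk * ((R * (∑ d, u d • K d) * R) s s')))
      = ∑ d, u d * ∑ t, ν t * (cd d t + gk * ∑ r, K d t r * J r) :=
  key_alg_aux μ ν J c₀ R _ K cd gk u hν hJ
    (fun t r => by simp [Matrix.sum_apply])
end KeyAlg

section CLMs
variable (P : S → A → S → ℝ) (g : S → A → ℝ) (γ : ℝ) (p : D → S → A) (k : ℕ)

def LcLM : (D → ℝ) →L[ℝ] Matrix S S ℝ :=
  LinearMap.toContinuousLinearMap
    { toFun := fun v => γ ^ k • corKernel P p v k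
      map_add' := by
        intro v v'
        ext s s'
        simp [corKernel, Matrix.sum_apply, add_mul, Finset.sum_add_distrib, mul_add]
      map_smul' := by
        intro a v
        ext s s'
        simp [corKernel, Matrix.sum_apply, Finset.mul_sum]
        exact Finset.sum_congr rfl fun d _ => by ring }

@[simp] lemma LcLM_apply (v : D → ℝ) : LcLM P γ p k v = γ ^ k • corKernel P p v k := rfl

def cCLM (s' : S) : (D → ℝ) →L[ℝ] ℝ :=
  LinearMap.toContinuousLinearMap
    { toFun := fun v => blockCost P g γ p v k s'
      map_add' := by
        intro v v'
        simp [blockCost, add_mul, Finset.sum_add_distrib]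
      map_smul' := by
        intro a v
        simp [blockCost, Finset.mul_sum]
        exact Finset.sum_congr rfl fun d _ => by ring
      }

@[simp] lemma cCLM_apply (s' : S) (v : D → ℝ) : cCLM P g γ p k s' v = blockCost P g γ p v k s' := rfl

def entCLM (s s' : S) : Matrix S S ℝ →L[ℝ] ℝ :=
  LinearMap.toContinuousLinearMap
    { toFun := fun m => m s s'
      map_add' := fun _ _ => rfl
      map_smul' := fun _ _ => rfl }

@[simp] lemma entCLM_apply (s s' : S) (m : Matrix S S ℝ) : entCLM (S := S) s s' m = m s s' := rfl
end CLMs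

/-- **k-step Policy Gradient Theorem.** For a family of correlated policies `w α`
parametrized by `α` ranging over an open subset `U` of `ℝ^n`, with `w α ∈ Δ(Π_det)`,
`w α d > 0` differentiable in `α`, and with `J^{π̃_α,k}(μ)` differentiable with respect
to `α`, the gradient of the `k`-step value satisfies
`∇_α J^{π̃_α,k}(μ) = (1/(1−γ^k)) E_{s ∼ d_μ^{π̃_α,k}} E_{π_det ∼ π̃_α}
  [Q^{π̃_α,k}(s, π_det) ∇_α log π̃_α(π_det)]`. -/
theorem kstep_policy_gradient_theorem
    (P : S → A → S → ℝ) (g : S → A → ℝ) (γ gmax : ℝ) (μ : S → ℝ)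
    (p : D → S → A) (k : ℕ) (n : ℕ)
    (U : Set (EuclideanSpace ℝ (Fin n)))
    (w : EuclideanSpace ℝ (Fin n) → D → ℝ) (α₀ : EuclideanSpace ℝ (Fin n))
    (hP : ∀ s a, (∀ s', 0 ≤ P s a s') ∧ ∑ s', P s a s' = 1)
    (hg : ∀ s a, |g s a| ≤ gmax)
    (hγ0 : 0 < γ) (hγ1 : γ < 1)
    (hμ : μ ∈ stdSimplex ℝ S)
    (hk : 1 ≤ k)
    (hU : IsOpen U) (hα₀ : α₀ ∈ U)
    (hw_pos : ∀ α ∈ U, ∀ d, 0 < w α d)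
    (hw_dist : ∀ α ∈ U, ∑ d, w α d = 1)
    (hw_diff : ∀ α ∈ U, ∀ d, DifferentiableAt ℝ (fun b => w b d) α)
    (hJ_diff : DifferentiableAt ℝ (fun α => JkInit P g γ p (w α) k μ) α₀) :
    fderiv ℝ (fun α => JkInit P g γ p (w α) k μ) α₀ =
      (1 / (1 - γ ^ k)) •
        ∑ s : S, ∑ d : D,
          (dOcc P γ p (w α₀) k μ s * (w α₀ d * Qk P g γ p (w α₀) k s (p d))) •
            fderiv ℝ (fun α => Real.log (w α d)) α₀ := by
  classical
  have hγk0 : (0:ℝ) < γ ^ k := pow_pos hγ0 k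
  have hγk1 : γ ^ k < 1 := pow_lt_one₀ hγ0.le hγ1 (by omega)
  have hne1 : (1:ℝ) - γ ^ k ≠ 0 := ne_of_gt (by linarith)
  have hv0pos : ∀ d, 0 < w α₀ d := hw_pos α₀ hα₀
  have hv0 : ∀ d, 0 ≤ w α₀ d := fun d => (hv0pos d).le
  have hσ0 : γ ^ k * ∑ d, w α₀ d < 1 := by
    rw [hw_dist α₀ hα₀, mul_one]; exact hγk1
  have hμ0 : ∀ s, 0 ≤ μ s := fun s => hμ.1 s
  have hμ1 : ∑ s, μ s = 1 := hμ.2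
  -- the smooth surrogate function
  set F : (D → ℝ) → ℝ := fun v => ∑ s, μ s *
    ∑ s', Ring.inverse ((1 : Matrix S S ℝ) - LcLM P γ p k v) s s' * cCLM P g γ p k s' v
    with hF_def
  have Feq : ∀ v : D → ℝ, (∀ d, 0 ≤ v d) → γ ^ k * ∑ d, v d < 1 →
      JkInit P g γ p v k μ = F v := by
    intro v hv hσ
    rw [JkInit, hF_def]
    refine Finset.sum_congr rfl fun s _ => ?_
    rw [Jvec_eq hP hγ0 hv hσ s]
    rfl
  -- eventual equality
  have hVopen : IsOpen {v : D → ℝ | (∀ d, 0 < v d) ∧ γ ^ k * ∑ d, v d < 1} := by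
    have h1 : IsOpen {v : D → ℝ | ∀ d, 0 < v d} := by
      have : {v : D → ℝ | ∀ d, 0 < v d} = ⋂ d, {v : D → ℝ | 0 < v d} := by
        ext v; simp
      rw [this]
      exact isOpen_iInter_of_finite fun d => isOpen_lt continuous_const (continuous_apply d)
    have h2 : IsOpen {v : D → ℝ | γ ^ k * ∑ d, v d < 1} :=
      isOpen_lt (continuous_const.mul (continuous_finset_sum _ fun d _ => continuous_apply d))
        continuous_const
    exact h1.inter h2
  have hwcont : ContinuousAt w α₀ :=
    continuousAt_pi.mpr fun d => (hw_diff α₀ hα₀ d).continuousAt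
  have hmemV : w α₀ ∈ {v : D → ℝ | (∀ d, 0 < v d) ∧ γ ^ k * ∑ d, v d < 1} := ⟨hv0pos, hσ0⟩
  have hEv : (fun α => JkInit P g γ p (w α) k μ) =ᶠ[nhds α₀] fun α => F (w α) := by
    filter_upwards [hwcont.preimage_mem_nhds (hVopen.mem_nhds hmemV)] with α hα
    exact Feq (w α) (fun d => (hα.1 d).le) hα.2
  -- derivative of F at w α₀
  set R₀ := Rmat P γ p (w α₀) k with hR₀def
  have hnorm := norm_smul_cor_lt (p := p) hP hγ0 hv0 hσ0
  have hinv0 : HasFDerivAt (Ring.inverse : Matrix S S ℝ → Matrix S S ℝ)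
      (-(ContinuousLinearMap.mulLeftRight ℝ (Matrix S S ℝ) R₀ R₀))
      ((1 : Matrix S S ℝ) - γ ^ k • corKernel P p (w α₀) k) := by
    have h := hasFDerivAt_ringInverse (𝕜 := ℝ)
      (Units.oneSub (γ ^ k • corKernel P p (w α₀) k) hnorm)
    rw [show ((Units.oneSub (γ ^ k • corKernel P p (w α₀) k) hnorm)⁻¹.val : Matrix S S ℝ) = R₀
      from (NormedRing.inverse_one_sub _ hnorm).symm] at h
    rwa [Units.val_oneSub] at h
  have hA : HasFDerivAt (fun v : D → ℝ => (1 : Matrix S S ℝ) - LcLM P γ p k v)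
      (-(LcLM P γ p k)) (w α₀) := (LcLM P γ p k).hasFDerivAt.const_sub 1
  have hDR : HasFDerivAt (fun v : D → ℝ => Ring.inverse ((1 : Matrix S S ℝ) - LcLM P γ p k v))
      ((-(ContinuousLinearMap.mulLeftRight ℝ (Matrix S S ℝ) R₀ R₀)).comp (-(LcLM P γ p k)))
      (w α₀) := by have := hinv0.comp (w α₀) hA; exact this
  have hent : ∀ s s' : S, HasFDerivAt
      (fun v : D → ℝ => Ring.inverse ((1 : Matrix S S ℝ) - LcLM P γ p k v) s s')
      ((entCLM s s').comp
        ((-(ContinuousLinearMap.mulLeftRight ℝ (Matrix S S ℝ) R₀ R₀)).comp (-(LcLM P γ p k))))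
      (w α₀) := fun s s' => (entCLM (S := S) s s').hasFDerivAt.comp (w α₀) hDR
  have hb : ∀ s' : S, HasFDerivAt (fun v : D → ℝ => cCLM P g γ p k s' v)
      (cCLM P g γ p k s') (w α₀) := fun s' => (cCLM P g γ p k s').hasFDerivAt
  set Dtot : (D → ℝ) →L[ℝ] ℝ := ∑ s, μ s • ∑ s' : S,
      (Ring.inverse ((1 : Matrix S S ℝ) - LcLM P γ p k (w α₀)) s s' • cCLM P g γ p k s'
        + cCLM P g γ p k s' (w α₀) • ((entCLM s s').comp
          ((-(ContinuousLinearMap.mulLeftRight ℝ (Matrix S S ℝ) R₀ R₀)).comp (-(LcLM P γ p k)))))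
    with hDtot_def
  have hF : HasFDerivAt F Dtot (w α₀) :=
    HasFDerivAt.fun_sum fun s _ =>
      ((HasFDerivAt.fun_sum fun s' _ => (hent s s').fun_mul (hb s')).const_mul (μ s))
  set Wd : EuclideanSpace ℝ (Fin n) →L[ℝ] (D → ℝ) :=
    ContinuousLinearMap.pi (fun d => fderiv ℝ (fun b => w b d) α₀) with hWd_def
  have hW : HasFDerivAt w Wd α₀ :=
    hasFDerivAt_pi.2 fun d => (hw_diff α₀ hα₀ d).hasFDerivAt
  have hcomp : HasFDerivAt (fun α => F (w α)) (Dtot.comp Wd) α₀ := hF.comp α₀ hW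
  have hfderiv : fderiv ℝ (fun α => JkInit P g γ p (w α) k μ) α₀ = Dtot.comp Wd := by
    rw [hEv.fderiv_eq, hcomp.fderiv]
  rw [hfderiv]
  have hν : ∀ t, ∑ s, μ s * R₀ s t = nuF P γ p (w α₀) k μ t :=
    fun t => (nu_eq hP hγ0 hv0 hσ0 hμ0 hμ1 t).symm
  have hJ : ∀ t, ∑ s', R₀ t s' * blockCost P g γ p (w α₀) k s' = Jk P g γ p (w α₀) k t :=
    fun t => (Jvec_eq hP hγ0 hv0 hσ0 t).symm
  have hlog : ∀ d, fderiv ℝ (fun α => Real.log (w α d)) α₀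
      = (w α₀ d)⁻¹ • fderiv ℝ (fun b => w b d) α₀ := fun d => by
    have := (((Real.hasDerivAt_log (ne_of_gt (hv0pos d))).comp_hasFDerivAt α₀
      (hw_diff α₀ hα₀ d).hasFDerivAt)).fderiv; exact this
  simp only [hlog]
  refine ContinuousLinearMap.ext fun h => ?_
  simp only [hDtot_def, hWd_def, ContinuousLinearMap.coe_comp', Function.comp_apply,
    ContinuousLinearMap.coe_sum', Finset.sum_apply, ContinuousLinearMap.coe_smul',
    Pi.smul_apply, ContinuousLinearMap.add_apply, ContinuousLinearMap.smul_apply,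
    ContinuousLinearMap.neg_apply, ContinuousLinearMap.mulLeftRight_apply,
    ContinuousLinearMap.pi_apply, entCLM_apply, cCLM_apply, LcLM_apply, smul_eq_mul,
    mul_neg, neg_mul, neg_neg]
  set u : D → ℝ := fun d => (fderiv ℝ (fun b => w b d) α₀) h with hu_def
  have hpi : (ContinuousLinearMap.pi fun d => fderiv ℝ (fun b => w b d) α₀) h = u := rfl
  rw [hpi]
  have hsm : ∀ B : Matrix S S ℝ, R₀ * γ ^ k • B * R₀ = γ ^ k • (R₀ * B * R₀) := by
    intro B; rw [mul_smul_comm, smul_mul_assoc]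
  have hE : ∀ x x_1 : S, ((entCLM x x_1).comp ((-(ContinuousLinearMap.mulLeftRight ℝ (Matrix S S ℝ) R₀ R₀)).comp
      (-(LcLM P γ p k)))) u = (R₀ * γ ^ k • corKernel P p u k * R₀) x x_1 := fun x x_1 => by
    change (-(R₀ * (-(γ ^ k • corKernel P p u k)) * R₀)) x x_1 = (R₀ * γ ^ k • corKernel P p u k * R₀) x x_1
    simp
  simp only [hE]
  simp only [hsm, Matrix.smul_apply, smul_eq_mul]
  rw [show Ring.inverse ((1 : Matrix S S ℝ) - γ ^ k • corKernel P p (w α₀) k) = R₀ from rfl]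
  have hbc : ∀ s', blockCost P g γ p u k s' = ∑ d, u d * detCost P g γ (p d) k s' :=
    fun _ => rfl
  have hck : corKernel P p u k = ∑ d, u d • (detKernel P (p d) ^ k) := rfl
  simp only [hbc, hck]
  rw [key_alg μ (nuF P γ p (w α₀) k μ) (Jk P g γ p (w α₀) k) (blockCost P g γ p (w α₀) k)
    R₀ (fun d => detKernel P (p d) ^ k) (fun d s' => detCost P g γ (p d) k s') (γ ^ k) u hν hJ]
  have hQ : ∀ (t : S) (d : D), detCost P g γ (p d) k t
      + γ ^ k * ∑ r, (detKernel P (p d) ^ k) t r * Jk P g γ p (w α₀) k r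
      = Qk P g γ p (w α₀) k t (p d) := fun _ _ => rfl
  simp only [hQ]
  have hdO : ∀ s, dOcc P γ p (w α₀) k μ s = (1 - γ ^ k) * nuF P γ p (w α₀) k μ s :=
    fun s => rfl
  simp only [hdO]
  simp only [Finset.mul_sum]
  rw [Finset.sum_comm]
  refine Finset.sum_congr rfl fun s _ => Finset.sum_congr rfl fun d _ => ?_
  have hwd : w α₀ d ≠ 0 := ne_of_gt (hv0pos d)
  field_simp
  ring

end
end

section
/- Identify correlated policies π̃ with points of the probability simplex Δ(Π_det) ⊂ ℝ^{Π_det} (trivial parametrization) and assume J^{π̃,k}(μ) is differentiable in π̃. Let π̃_crit ∈ Δ(Π_det) be either a point where the gradient of J^{π̃,k}(μ) is zero or a local minimum of J^{π̃,k}(μ) on Δ(Π_det) (possibly on the boundary). Then E_{π_det ∼ π̃_crit}[J^{π_det}(μ)] − J^{π_det^*}(μ) ≤ 8 γ^k g_max / (1−γ), where π_det^* ∈ Π_det minimizes J^{π_det}(μ) over Π_det. -/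
open Finset

noncomputable section

variable {S A D : Type*} [Fintype S] [Fintype A] [Fintype D] [DecidableEq S]

open scoped NNReal Matrix
set_option linter.unusedSectionVars false
attribute [local instance] Matrix.linftyOpNormedAddCommGroup Matrix.linftyOpNormedRing
  Matrix.linftyOpNormedSpace Matrix.linftyOpNormedAlgebra

local instance : CompleteSpace (Matrix S S ℝ) := FiniteDimensional.complete ℝ _

/-- substochastic-ness packaged -/
def StochMat (M : Matrix S S ℝ) : Prop := (∀ s s', 0 ≤ M s s') ∧ ∀ s, ∑ s', M s s' = 1

lemma StochMat.mul {M N : Matrix S S ℝ} (hM : StochMat M) (hN : StochMat N) : StochMat (M * N) := by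
  constructor
  · intro s s'
    exact Finset.sum_nonneg fun i _ => mul_nonneg (hM.1 s i) (hN.1 i s')
  · intro s
    simp only [Matrix.mul_apply]
    rw [Finset.sum_comm]
    calc ∑ i, ∑ s', M s i * N i s' = ∑ i, M s i * ∑ s', N i s' := by
          simp [Finset.mul_sum]
      _ = ∑ i, M s i := by simp only [hN.2, mul_one]
      _ = 1 := hM.2 s

lemma StochMat.pow {M : Matrix S S ℝ} (hM : StochMat M) (n : ℕ) : StochMat (M ^ n) := by
  induction n with
  | zero =>
    refine ⟨fun s s' => ?_, fun s => ?_⟩ <;> simp [Matrix.one_apply]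
    · positivity
  | succ n ih => rw [pow_succ]; exact ih.mul hM

lemma StochMat.norm_le_one {M : Matrix S S ℝ} (hM : StochMat M) : ‖M‖ ≤ 1 := by
  rw [Matrix.linfty_opNorm_def]
  rw [show (1:ℝ) = ((1:ℝ≥0):ℝ) by simp]
  rw [NNReal.coe_le_coe]
  refine Finset.sup_le fun i _ => ?_
  rw [← NNReal.coe_le_coe]
  push_cast
  calc ∑ j, ‖M i j‖ = ∑ j, M i j := by
        refine Finset.sum_congr rfl fun j _ => ?_
        rw [Real.norm_eq_abs, abs_of_nonneg (hM.1 i j)]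
    _ ≤ 1 := le_of_eq (hM.2 i)

set_option linter.unusedSectionVars false

lemma dot_abs_le {ι : Type*} [Fintype ι] {p u : ι → ℝ} {C : ℝ} (hp : ∀ i, 0 ≤ p i) (hps : ∑ i, p i = 1)
    (hu : ∀ i, |u i| ≤ C) : |∑ i, p i * u i| ≤ C := by
  calc |∑ s, p s * u s| ≤ ∑ s, |p s * u s| := Finset.abs_sum_le_sum_abs _ _
    _ = ∑ s, p s * |u s| := by
        refine Finset.sum_congr rfl fun s _ => ?_
        rw [abs_mul, abs_of_nonneg (hp s)]
    _ ≤ ∑ s, p s * C := by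
        refine Finset.sum_le_sum fun s _ => mul_le_mul_of_nonneg_left (hu s) (hp s)
    _ = C := by rw [← Finset.sum_mul, hps, one_mul]

lemma summable_of_geom_bound {f : ℕ → ℝ} {C r : ℝ} (hr0 : 0 ≤ r) (hr1 : r < 1)
    (h : ∀ n, |f n| ≤ C * r ^ n) : Summable f := by
  refine Summable.of_norm_bounded ((summable_geometric_of_lt_one hr0 hr1).mul_left C) ?_
  intro n; simpa [Real.norm_eq_abs] using h n

lemma abs_tsum_le_geom {f : ℕ → ℝ} {C r : ℝ} (hr0 : 0 ≤ r) (hr1 : r < 1)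
    (h : ∀ n, |f n| ≤ C * r ^ n) : |∑' n, f n| ≤ C / (1 - r) := by
  have hsum := summable_of_geom_bound hr0 hr1 h
  have h1 : |∑' n, f n| ≤ ∑' n, |f n| := by
    simpa [Real.norm_eq_abs] using norm_tsum_le_tsum_norm (f := f)
      (by simpa [Real.norm_eq_abs] using hsum.abs)
  refine h1.trans ?_
  have h2 : ∑' n, |f n| ≤ ∑' n, C * r ^ n :=
    hsum.abs.tsum_le_tsum h ((summable_geometric_of_lt_one hr0 hr1).mul_left C)
  refine h2.trans ?_
  rw [tsum_mul_left, tsum_geometric_of_lt_one hr0 hr1]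
  rw [div_eq_mul_inv]

lemma abs_tsum_le_geom_tail {f : ℕ → ℝ} {C r : ℝ} (hr0 : 0 ≤ r) (hr1 : r < 1)
    (h0 : f 0 = 0) (h : ∀ n, |f n| ≤ C * r ^ n) : |∑' n, f n| ≤ C * r / (1 - r) := by
  have hsum := summable_of_geom_bound hr0 hr1 h
  rw [Summable.tsum_eq_zero_add hsum, h0, zero_add]
  have : ∀ n, |f (n + 1)| ≤ (C * r) * r ^ n := by
    intro n
    calc |f (n+1)| ≤ C * r ^ (n+1) := h (n+1)
      _ = C * r * r ^ n := by ring
  exact abs_tsum_le_geom hr0 hr1 this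

/-- evaluation `A ↦ μ ⬝ᵥ (A *ᵥ u)` as a linear map. -/
def evalLM (μ u : S → ℝ) : Matrix S S ℝ →ₗ[ℝ] ℝ where
  toFun A := μ ⬝ᵥ (A *ᵥ u)
  map_add' A B := by simp [Matrix.add_mulVec, dotProduct_add]
  map_smul' c A := by simp [Matrix.smul_mulVec, dotProduct_smul]

lemma hasSum_eval_inv_one_sub {t : Matrix S S ℝ} (ht : ‖t‖ < 1) (μ u : S → ℝ) :
    HasSum (fun n : ℕ => μ ⬝ᵥ (t ^ n *ᵥ u)) (μ ⬝ᵥ (Ring.inverse (1 - t) *ᵥ u)) := by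
  have h := (hasSum_geom_series_inverse t ht).mapL (evalLM μ u).toContinuousLinearMap
  simpa [evalLM] using h

/-- evaluation `A ↦ (A *ᵥ u) s` as a linear map. -/
def evalLM' (u : S → ℝ) (s : S) : Matrix S S ℝ →ₗ[ℝ] ℝ where
  toFun A := (A *ᵥ u) s
  map_add' A B := by simp [Matrix.add_mulVec]
  map_smul' c A := by simp [Matrix.smul_mulVec]

lemma hasSum_eval_inv_one_sub' {t : Matrix S S ℝ} (ht : ‖t‖ < 1) (u : S → ℝ) (s : S) :
    HasSum (fun n : ℕ => (t ^ n *ᵥ u) s) ((Ring.inverse (1 - t) *ᵥ u) s) := by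
  have h := (hasSum_geom_series_inverse t ht).mapL (evalLM' u s).toContinuousLinearMap
  simpa [evalLM'] using h


section Abstract

lemma pvec_vecMul {μ : S → ℝ} (hμ1 : ∀ s, 0 ≤ μ s) (hμ2 : ∑ s, μ s = 1)
    {T : Matrix S S ℝ} (hT : StochMat T) :
    (∀ s, 0 ≤ (μ ᵥ* T) s) ∧ ∑ s, (μ ᵥ* T) s = 1 := by
  constructor
  · intro s'
    simp only [Matrix.vecMul, dotProduct]
    exact Finset.sum_nonneg fun i _ => mul_nonneg (hμ1 i) (hT.1 i s')
  · simp only [Matrix.vecMul, dotProduct]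
    rw [Finset.sum_comm]
    calc ∑ i, ∑ s', μ i * T i s' = ∑ i, μ i * ∑ s', T i s' := by simp [Finset.mul_sum]
      _ = ∑ i, μ i := by simp only [hT.2, mul_one]
      _ = 1 := hμ2

lemma pvec_vecMul_pow {μ : S → ℝ} (hμ1 : ∀ s, 0 ≤ μ s) (hμ2 : ∑ s, μ s = 1)
    {T : Matrix S S ℝ} (hT : StochMat T) (n : ℕ) :
    (∀ s, 0 ≤ (μ ᵥ* T ^ n) s) ∧ ∑ s, (μ ᵥ* T ^ n) s = 1 := by
  induction n with
  | zero => simpa [Matrix.vecMul_one] using ⟨hμ1, hμ2⟩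
  | succ n ih =>
    have : μ ᵥ* T ^ (n + 1) = (μ ᵥ* T ^ n) ᵥ* T := by
      rw [pow_succ, ← Matrix.vecMul_vecMul]
    rw [this]
    exact pvec_vecMul ih.1 ih.2 hT

lemma dot_vecMul_abs_le {μ u : S → ℝ} {C : ℝ} (hμ1 : ∀ s, 0 ≤ μ s) (hμ2 : ∑ s, μ s = 1)
    {T : Matrix S S ℝ} (hT : StochMat T) (n : ℕ) (hu : ∀ s, |u s| ≤ C) :
    |(μ ᵥ* T ^ n) ⬝ᵥ u| ≤ C := by
  have h := pvec_vecMul_pow hμ1 hμ2 hT n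
  exact dot_abs_le h.1 h.2 hu

/-- scalar geometric-series representation of `μ ⬝ᵥ ((1 - β•T)⁻¹ *ᵥ u)`. -/
lemma hasSum_dot_inv {β : ℝ} (hβ0 : 0 ≤ β) {T : Matrix S S ℝ} (hTn : ‖β • T‖ < 1)
    (μ u : S → ℝ) :
    HasSum (fun n : ℕ => β ^ n * ((μ ᵥ* T ^ n) ⬝ᵥ u))
      (μ ⬝ᵥ (Ring.inverse (1 - β • T) *ᵥ u)) := by
  have h := hasSum_eval_inv_one_sub hTn μ u
  have he : ∀ n : ℕ, μ ⬝ᵥ ((β • T) ^ n *ᵥ u) = β ^ n * ((μ ᵥ* T ^ n) ⬝ᵥ u) := by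
    intro n
    rw [smul_pow, Matrix.smul_mulVec, dotProduct_smul, smul_eq_mul,
      Matrix.dotProduct_mulVec]
  simpa only [he] using h

/-- Key estimate (performance-difference + criticality): `μ ⬝ᵥ V - μ ⬝ᵥ W` is small. -/
lemma key_estimate {β Cu : ℝ} (hβ0 : 0 ≤ β) (hβ1 : β < 1)
    {K N : Matrix S S ℝ} (hK : StochMat K) (hN : StochMat N)
    (hKn : ‖β • K‖ < 1) (hNn : ‖β • N‖ < 1)
    {μ V W cs : S → ℝ} (hμ1 : ∀ s, 0 ≤ μ s) (hμ2 : ∑ s, μ s = 1)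
    (hW : W = Ring.inverse (1 - β • N) *ᵥ cs)
    (hu : ∀ s, |(V - (cs + β • (N *ᵥ V))) s| ≤ Cu)
    (hcrit : 0 ≤ μ ⬝ᵥ (Ring.inverse (1 - β • K) *ᵥ ((cs + β • (N *ᵥ V)) - V))) :
    μ ⬝ᵥ V - μ ⬝ᵥ W ≤ 2 * Cu * β / (1 - β) := by
  set u : S → ℝ := V - (cs + β • (N *ᵥ V)) with hudef
  have huN : IsUnit (1 - β • N) := isUnit_one_sub_of_norm_lt_one hNn
  -- (1 - βN) *ᵥ (V - W) = u
  have h1 : (1 - β • N) *ᵥ W = cs := by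
    rw [hW, Matrix.mulVec_mulVec, Ring.mul_inverse_cancel _ huN, Matrix.one_mulVec]
  have h2 : (1 - β • N) *ᵥ (V - W) = u := by
    rw [Matrix.mulVec_sub, h1]
    funext s
    simp only [hudef, Matrix.sub_mulVec, Matrix.one_mulVec, Matrix.smul_mulVec,
      Pi.sub_apply, Pi.add_apply, Pi.smul_apply, smul_eq_mul]
    ring
  have h3 : V - W = Ring.inverse (1 - β • N) *ᵥ u := by
    calc V - W = (1 : Matrix S S ℝ) *ᵥ (V - W) := by rw [Matrix.one_mulVec]
      _ = (Ring.inverse (1 - β • N) * (1 - β • N)) *ᵥ (V - W) := by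
          rw [Ring.inverse_mul_cancel _ huN]
      _ = Ring.inverse (1 - β • N) *ᵥ ((1 - β • N) *ᵥ (V - W)) := by
          rw [Matrix.mulVec_mulVec]
      _ = Ring.inverse (1 - β • N) *ᵥ u := by rw [h2]
  have hdiff : μ ⬝ᵥ V - μ ⬝ᵥ W = μ ⬝ᵥ (Ring.inverse (1 - β • N) *ᵥ u) := by
    rw [← h3, dotProduct_sub]
  -- use criticality to compare against the `K`-occupancy
  have hcrit' : μ ⬝ᵥ (Ring.inverse (1 - β • K) *ᵥ u) ≤ 0 := by
    have : (cs + β • (N *ᵥ V)) - V = -u := by rw [hudef]; abel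
    rw [this] at hcrit
    have hneg : Ring.inverse (1 - β • K) *ᵥ (-u) = -(Ring.inverse (1 - β • K) *ᵥ u) :=
      Matrix.mulVec_neg _ _
    rw [hneg, dotProduct_neg] at hcrit
    linarith
  have hmain : μ ⬝ᵥ V - μ ⬝ᵥ W ≤
      μ ⬝ᵥ (Ring.inverse (1 - β • N) *ᵥ u) - μ ⬝ᵥ (Ring.inverse (1 - β • K) *ᵥ u) := by
    rw [hdiff]; linarith
  refine hmain.trans ?_
  -- series representation of the difference
  have hN' := hasSum_dot_inv hβ0 hNn μ u
  have hK' := hasSum_dot_inv hβ0 hKn μ u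
  have hsub := hN'.sub hK'
  rw [← hsub.tsum_eq]
  have hb : ∀ n : ℕ, |β ^ n * ((μ ᵥ* N ^ n) ⬝ᵥ u) - β ^ n * ((μ ᵥ* K ^ n) ⬝ᵥ u)|
      ≤ (2 * Cu) * β ^ n := by
    intro n
    have b1 := dot_vecMul_abs_le hμ1 hμ2 hN n hu
    have b2 := dot_vecMul_abs_le hμ1 hμ2 hK n hu
    have hβn : 0 ≤ β ^ n := pow_nonneg hβ0 n
    calc |β ^ n * ((μ ᵥ* N ^ n) ⬝ᵥ u) - β ^ n * ((μ ᵥ* K ^ n) ⬝ᵥ u)|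
        ≤ |β ^ n * ((μ ᵥ* N ^ n) ⬝ᵥ u)| + |β ^ n * ((μ ᵥ* K ^ n) ⬝ᵥ u)| := abs_sub _ _
      _ ≤ β ^ n * Cu + β ^ n * Cu := by
          rw [abs_mul, abs_mul, abs_of_nonneg hβn]
          exact add_le_add (mul_le_mul_of_nonneg_left b1 hβn)
            (mul_le_mul_of_nonneg_left b2 hβn)
      _ = (2 * Cu) * β ^ n := by ring
  have h0 : β ^ 0 * ((μ ᵥ* N ^ 0) ⬝ᵥ u) - β ^ 0 * ((μ ᵥ* K ^ 0) ⬝ᵥ u) = 0 := by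
    simp [Matrix.vecMul_one]
  have := abs_tsum_le_geom_tail hβ0 hβ1 h0 hb
  calc ∑' n : ℕ, (β ^ n * ((μ ᵥ* N ^ n) ⬝ᵥ u) - β ^ n * ((μ ᵥ* K ^ n) ⬝ᵥ u))
      ≤ |∑' n : ℕ, (β ^ n * ((μ ᵥ* N ^ n) ⬝ᵥ u) - β ^ n * ((μ ᵥ* K ^ n) ⬝ᵥ u))| :=
        le_abs_self _
    _ ≤ 2 * Cu * β / (1 - β) := this


/-- Step A: expected deterministic value vs correlated `k`-step value. -/
lemma stepA_estimate {β Cc : ℝ} (hβ0 : 0 ≤ β) (hβ1 : β < 1)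
    {w : D → ℝ} (hw1 : ∀ d, 0 ≤ w d) (hw2 : ∑ d, w d = 1)
    {N : D → Matrix S S ℝ} (hN : ∀ d, StochMat (N d)) {K : Matrix S S ℝ} (hK : StochMat K)
    (hKn : ‖β • K‖ < 1) (hNn : ∀ d, ‖β • N d‖ < 1)
    {μ : S → ℝ} (hμ1 : ∀ s, 0 ≤ μ s) (hμ2 : ∑ s, μ s = 1)
    {c : D → S → ℝ} (hc : ∀ d s, |c d s| ≤ Cc) {cbar : S → ℝ}
    (hcbar : ∀ s, cbar s = ∑ d, w d * c d s) :
    ∑ d, w d * (μ ⬝ᵥ (Ring.inverse (1 - β • N d) *ᵥ c d))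
      - μ ⬝ᵥ (Ring.inverse (1 - β • K) *ᵥ cbar) ≤ 2 * Cc * β / (1 - β) := by
  have hd : ∀ d : D, HasSum (fun n : ℕ => w d * (β ^ n * ((μ ᵥ* (N d) ^ n) ⬝ᵥ c d)))
      (w d * (μ ⬝ᵥ (Ring.inverse (1 - β • N d) *ᵥ c d))) :=
    fun d => (hasSum_dot_inv hβ0 (hNn d) μ (c d)).mul_left (w d)
  have hsumD := hasSum_sum (f := fun d (n : ℕ) => w d * (β ^ n * ((μ ᵥ* (N d) ^ n) ⬝ᵥ c d)))
    (s := Finset.univ) (fun d _ => hd d)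
  have hK' := hasSum_dot_inv hβ0 hKn μ cbar
  have hsub := hsumD.sub hK'
  rw [← hsub.tsum_eq]
  have h0 : (∑ d, w d * (β ^ 0 * ((μ ᵥ* (N d) ^ 0) ⬝ᵥ c d)))
      - β ^ 0 * ((μ ᵥ* K ^ 0) ⬝ᵥ cbar) = 0 := by
    simp only [pow_zero, Matrix.vecMul_one, one_mul]
    simp only [dotProduct]
    have hswap : ∑ i, μ i * cbar i = ∑ d, w d * ∑ i, μ i * c d i := by
      simp only [hcbar, Finset.mul_sum]
      rw [Finset.sum_comm]
      exact Finset.sum_congr rfl fun d _ => Finset.sum_congr rfl fun i _ => by ring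
    rw [hswap, sub_self]
  have hb : ∀ n : ℕ, |(∑ d, w d * (β ^ n * ((μ ᵥ* (N d) ^ n) ⬝ᵥ c d)))
      - β ^ n * ((μ ᵥ* K ^ n) ⬝ᵥ cbar)| ≤ (2 * Cc) * β ^ n := by
    intro n
    have hβn : 0 ≤ β ^ n := pow_nonneg hβ0 n
    have b1 : |∑ d, w d * ((μ ᵥ* (N d) ^ n) ⬝ᵥ c d)| ≤ Cc :=
      dot_abs_le hw1 hw2 (fun d => dot_vecMul_abs_le hμ1 hμ2 (hN d) n (hc d))
    have b2 : |(μ ᵥ* K ^ n) ⬝ᵥ cbar| ≤ Cc := by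
      refine dot_vecMul_abs_le hμ1 hμ2 hK n fun s => ?_
      rw [hcbar s]
      exact dot_abs_le hw1 hw2 fun d => hc d s
    have hre : (∑ d, w d * (β ^ n * ((μ ᵥ* (N d) ^ n) ⬝ᵥ c d)))
        = β ^ n * ∑ d, w d * ((μ ᵥ* (N d) ^ n) ⬝ᵥ c d) := by
      rw [Finset.mul_sum]; refine Finset.sum_congr rfl fun d _ => by ring
    rw [hre]
    calc |β ^ n * ∑ d, w d * ((μ ᵥ* (N d) ^ n) ⬝ᵥ c d) - β ^ n * ((μ ᵥ* K ^ n) ⬝ᵥ cbar)|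
        ≤ |β ^ n * ∑ d, w d * ((μ ᵥ* (N d) ^ n) ⬝ᵥ c d)|
          + |β ^ n * ((μ ᵥ* K ^ n) ⬝ᵥ cbar)| := abs_sub _ _
      _ ≤ β ^ n * Cc + β ^ n * Cc := by
          rw [abs_mul, abs_mul, abs_of_nonneg hβn]
          exact add_le_add (mul_le_mul_of_nonneg_left b1 hβn)
            (mul_le_mul_of_nonneg_left b2 hβn)
      _ = (2 * Cc) * β ^ n := by ring
  have := abs_tsum_le_geom_tail hβ0 hβ1 h0 hb
  exact le_trans (le_abs_self _) this


lemma inv_mulVec_abs_le {β Cc : ℝ} (hβ0 : 0 ≤ β) (hβ1 : β < 1)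
    {T : Matrix S S ℝ} (hT : StochMat T) (hTn : ‖β • T‖ < 1)
    {cvec : S → ℝ} (hc : ∀ s, |cvec s| ≤ Cc) (s : S) :
    |(Ring.inverse (1 - β • T) *ᵥ cvec) s| ≤ Cc / (1 - β) := by
  rw [← (hasSum_eval_inv_one_sub' hTn cvec s).tsum_eq]
  refine abs_tsum_le_geom hβ0 hβ1 fun n => ?_
  rw [smul_pow]
  have h1 : ((β ^ n • T ^ n) *ᵥ cvec) s = β ^ n * ((T ^ n *ᵥ cvec) s) := by
    rw [Matrix.smul_mulVec]; simp
  rw [h1, abs_mul, abs_of_nonneg (pow_nonneg hβ0 n), mul_comm]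
  refine mul_le_mul_of_nonneg_right ?_ (pow_nonneg hβ0 n)
  have h2 : (T ^ n *ᵥ cvec) s = ∑ s', (T ^ n) s s' * cvec s' := by
    simp [Matrix.mulVec, dotProduct]
  rw [h2]
  exact dot_abs_le (fun s' => (hT.pow n).1 s s') ((hT.pow n).2 s) hc

end Abstract

section MDP

variable (P : S → A → S → ℝ) (g : S → A → ℝ) (γ gmax : ℝ) (p : D → S → A) (k : ℕ)

lemma detKernel_stoch (hP : ∀ s a, (∀ s', 0 ≤ P s a s') ∧ ∑ s', P s a s' = 1) (pol : S → A) :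
    StochMat (detKernel P pol) :=
  ⟨fun s s' => (hP s (pol s)).1 s', fun s => (hP s (pol s)).2⟩

lemma corKernel_entry (w : D → ℝ) (s s' : S) :
    corKernel P p w k s s' = ∑ d, w d * (detKernel P (p d) ^ k) s s' := by
  simp [corKernel, Matrix.sum_apply, Matrix.smul_apply, smul_eq_mul]

lemma corKernel_stoch (hP : ∀ s a, (∀ s', 0 ≤ P s a s') ∧ ∑ s', P s a s' = 1)
    {w : D → ℝ} (hw : w ∈ stdSimplex ℝ D) : StochMat (corKernel P p w k) := by
  constructor
  · intro s s'
    rw [corKernel_entry]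
    exact Finset.sum_nonneg fun d _ =>
      mul_nonneg (hw.1 d) (((detKernel_stoch P hP (p d)).pow k).1 s s')
  · intro s
    simp only [corKernel_entry]
    rw [Finset.sum_comm]
    calc ∑ d, ∑ s', w d * (detKernel P (p d) ^ k) s s'
        = ∑ d, w d * ∑ s', (detKernel P (p d) ^ k) s s' := by
          simp [Finset.mul_sum]
      _ = ∑ d, w d := by
          refine Finset.sum_congr rfl fun d _ => ?_
          rw [((detKernel_stoch P hP (p d)).pow k).2 s, mul_one]
      _ = 1 := hw.2

lemma norm_corKernel_le (hP : ∀ s a, (∀ s', 0 ≤ P s a s') ∧ ∑ s', P s a s' = 1) (w : D → ℝ) :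
    ‖corKernel P p w k‖ ≤ ∑ d, |w d| := by
  calc ‖corKernel P p w k‖ ≤ ∑ d, ‖w d • (detKernel P (p d) ^ k)‖ := norm_sum_le _ _
    _ ≤ ∑ d, |w d| := by
        refine Finset.sum_le_sum fun d _ => ?_
        rw [norm_smul, Real.norm_eq_abs]
        calc |w d| * ‖detKernel P (p d) ^ k‖ ≤ |w d| * 1 :=
              mul_le_mul_of_nonneg_left (((detKernel_stoch P hP (p d)).pow k).norm_le_one)
                (abs_nonneg _)
          _ = |w d| := mul_one _

lemma detCost_abs_le (hP : ∀ s a, (∀ s', 0 ≤ P s a s') ∧ ∑ s', P s a s' = 1)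
    (hg : ∀ s a, |g s a| ≤ gmax) (hγ0 : 0 ≤ γ) (pol : S → A) (s : S) :
    |detCost P g γ pol k s| ≤ (∑ t ∈ Finset.range k, γ ^ t) * gmax := by
  have hgmax : 0 ≤ gmax := le_trans (abs_nonneg _) (hg s (pol s))
  calc |detCost P g γ pol k s| ≤ ∑ t ∈ Finset.range k,
        |γ ^ t * ∑ s', (detKernel P pol ^ t) s s' * g s' (pol s')| :=
        Finset.abs_sum_le_sum_abs _ _
    _ ≤ ∑ t ∈ Finset.range k, γ ^ t * gmax := by
        refine Finset.sum_le_sum fun t _ => ?_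
        rw [abs_mul, abs_of_nonneg (pow_nonneg hγ0 t)]
        refine mul_le_mul_of_nonneg_left ?_ (pow_nonneg hγ0 t)
        exact dot_abs_le (fun s' => ((detKernel_stoch P hP pol).pow t).1 s s')
          (((detKernel_stoch P hP pol).pow t).2 s) (fun s' => hg s' (pol s'))
    _ = (∑ t ∈ Finset.range k, γ ^ t) * gmax := by rw [Finset.sum_mul]

lemma summable_detJ_terms (hP : ∀ s a, (∀ s', 0 ≤ P s a s') ∧ ∑ s', P s a s' = 1)
    (hg : ∀ s a, |g s a| ≤ gmax) (hγ0 : 0 ≤ γ) (hγ1 : γ < 1) (pol : S → A) (s : S) :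
    Summable fun t : ℕ => γ ^ t * ∑ s', (detKernel P pol ^ t) s s' * g s' (pol s') := by
  refine summable_of_geom_bound hγ0 hγ1 (C := gmax) fun t => ?_
  rw [abs_mul, abs_of_nonneg (pow_nonneg hγ0 t), mul_comm]
  refine mul_le_mul_of_nonneg_right ?_ (pow_nonneg hγ0 t)
  exact dot_abs_le (fun s' => ((detKernel_stoch P hP pol).pow t).1 s s')
    (((detKernel_stoch P hP pol).pow t).2 s) (fun s' => hg s' (pol s'))

lemma detJ_abs_le (hP : ∀ s a, (∀ s', 0 ≤ P s a s') ∧ ∑ s', P s a s' = 1)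
    (hg : ∀ s a, |g s a| ≤ gmax) (hγ0 : 0 ≤ γ) (hγ1 : γ < 1) (pol : S → A) (s : S) :
    |detJ P g γ pol s| ≤ gmax / (1 - γ) := by
  refine abs_tsum_le_geom hγ0 hγ1 fun t => ?_
  rw [abs_mul, abs_of_nonneg (pow_nonneg hγ0 t), mul_comm]
  refine mul_le_mul_of_nonneg_right ?_ (pow_nonneg hγ0 t)
  exact dot_abs_le (fun s' => ((detKernel_stoch P hP pol).pow t).1 s s')
    (((detKernel_stoch P hP pol).pow t).2 s) (fun s' => hg s' (pol s'))

lemma detJ_bellman (hP : ∀ s a, (∀ s', 0 ≤ P s a s') ∧ ∑ s', P s a s' = 1)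
    (hg : ∀ s a, |g s a| ≤ gmax) (hγ0 : 0 ≤ γ) (hγ1 : γ < 1) (pol : S → A) (s : S) :
    detJ P g γ pol s = detCost P g γ pol k s
      + γ ^ k * ∑ s', (detKernel P pol ^ k) s s' * detJ P g γ pol s' := by
  set M := detKernel P pol with hM
  have hsum : ∀ s0, Summable fun t : ℕ => γ ^ t * ∑ s', (M ^ t) s0 s' * g s' (pol s') :=
    fun s0 => summable_detJ_terms P g γ gmax hP hg hγ0 hγ1 pol s0
  have hTshift : ∀ t, ∑ s', (M ^ (t + k)) s s' * g s' (pol s')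
      = ∑ s'', (M ^ k) s s'' * ∑ s', (M ^ t) s'' s' * g s' (pol s') := by
    intro t
    have hpow : M ^ (t + k) = M ^ k * M ^ t := by rw [add_comm, pow_add]
    rw [hpow]
    simp only [Matrix.mul_apply, Finset.sum_mul]
    rw [Finset.sum_comm]
    simp [Finset.mul_sum, mul_assoc]
  have key : ∑' t : ℕ, γ ^ (t + k) * ∑ s', (M ^ (t + k)) s s' * g s' (pol s')
      = γ ^ k * ∑ s'', (M ^ k) s s'' * detJ P g γ pol s'' := by
    calc ∑' t : ℕ, γ ^ (t + k) * ∑ s', (M ^ (t + k)) s s' * g s' (pol s')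
        = ∑' t : ℕ, ∑ s'', γ ^ k * ((M ^ k) s s''
            * (γ ^ t * ∑ s', (M ^ t) s'' s' * g s' (pol s'))) := by
          refine tsum_congr fun t => ?_
          rw [hTshift t, Finset.mul_sum]
          refine Finset.sum_congr rfl fun s'' _ => ?_
          rw [pow_add]; ring
      _ = ∑ s'', ∑' t : ℕ, γ ^ k * ((M ^ k) s s''
            * (γ ^ t * ∑ s', (M ^ t) s'' s' * g s' (pol s'))) := by
          refine Summable.tsum_finsetSum fun s'' _ => ?_
          exact ((hsum s'').mul_left _).mul_left _
      _ = γ ^ k * ∑ s'', (M ^ k) s s'' * detJ P g γ pol s'' := by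
          rw [Finset.mul_sum]
          refine Finset.sum_congr rfl fun s'' _ => ?_
          rw [tsum_mul_left, tsum_mul_left]
          simp only [detJ]
          rfl
  have hsplit := Summable.sum_add_tsum_nat_add (f := fun t : ℕ =>
    γ ^ t * ∑ s', (M ^ t) s s' * g s' (pol s')) k (hsum s)
  simp only [detJ, detCost]
  rw [← hsplit]
  rw [key]
  simp only [detJ]
  rfl

lemma detJ_closed (hP : ∀ s a, (∀ s', 0 ≤ P s a s') ∧ ∑ s', P s a s' = 1)
    (hg : ∀ s a, |g s a| ≤ gmax) (hγ0 : 0 ≤ γ) (hγ1 : γ < 1) (pol : S → A)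
    (hβ : ‖γ ^ k • (detKernel P pol ^ k)‖ < 1) :
    detJ P g γ pol = Ring.inverse (1 - γ ^ k • (detKernel P pol ^ k)) *ᵥ detCost P g γ pol k := by
  set N := detKernel P pol ^ k with hN
  have hb : (1 - γ ^ k • N) *ᵥ detJ P g γ pol = detCost P g γ pol k := by
    funext s
    have hbel := detJ_bellman P g γ gmax k hP hg hγ0 hγ1 pol s
    have hmv : (N *ᵥ detJ P g γ pol) s = ∑ s', N s s' * detJ P g γ pol s' := by
      simp [Matrix.mulVec, dotProduct]
    simp only [Matrix.sub_mulVec, Matrix.one_mulVec, Matrix.smul_mulVec,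
      Pi.sub_apply, Pi.smul_apply, smul_eq_mul]
    rw [hmv]
    rw [hbel]; ring
  have hu : IsUnit (1 - γ ^ k • N) := isUnit_one_sub_of_norm_lt_one hβ
  calc detJ P g γ pol = (1 : Matrix S S ℝ) *ᵥ detJ P g γ pol := by rw [Matrix.one_mulVec]
    _ = (Ring.inverse (1 - γ ^ k • N) * (1 - γ ^ k • N)) *ᵥ detJ P g γ pol := by
        rw [Ring.inverse_mul_cancel _ hu]
    _ = Ring.inverse (1 - γ ^ k • N) *ᵥ ((1 - γ ^ k • N) *ᵥ detJ P g γ pol) := by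
        rw [Matrix.mulVec_mulVec]
    _ = Ring.inverse (1 - γ ^ k • N) *ᵥ detCost P g γ pol k := by rw [hb]

lemma Jk_closed (w : D → ℝ) (hβK : ‖γ ^ k • corKernel P p w k‖ < 1) (s : S) :
    Jk P g γ p w k s
      = (Ring.inverse (1 - γ ^ k • corKernel P p w k) *ᵥ blockCost P g γ p w k) s := by
  have h := hasSum_eval_inv_one_sub' hβK (blockCost P g γ p w k) s
  rw [← h.tsum_eq]
  simp only [Jk]
  refine tsum_congr fun m => ?_
  rw [smul_pow]
  simp only [Matrix.smul_mulVec, Pi.smul_apply, smul_eq_mul]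
  rw [mul_comm m k, pow_mul]
  simp [Matrix.mulVec, dotProduct]

end MDP

section Deriv

variable (P : S → A → S → ℝ) (g : S → A → ℝ) (γ : ℝ) (p : D → S → A) (k : ℕ)

/-- `w ↦ γ^k • corKernel w` as a linear map. -/
def corKernelLM : (D → ℝ) →ₗ[ℝ] Matrix S S ℝ where
  toFun w := γ ^ k • corKernel P p w k
  map_add' w w' := by
    simp only [corKernel, add_smul, Finset.sum_add_distrib, smul_add, Pi.add_apply]
  map_smul' c w := by
    simp only [corKernel, RingHom.id_apply, Finset.smul_sum, Pi.smul_apply, smul_smul,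
      smul_eq_mul]
    congr 1; funext d; rw [mul_left_comm]

/-- `w ↦ blockCost w` as a linear map. -/
def blockCostLM : (D → ℝ) →ₗ[ℝ] (S → ℝ) where
  toFun w := blockCost P g γ p w k
  map_add' w w' := by
    funext s
    simp [blockCost, add_mul, Finset.sum_add_distrib]
  map_smul' c w := by
    funext s
    simp [blockCost, Finset.mul_sum, mul_assoc]

/-- `A ↦ (u ↦ μ ⬝ᵥ (A *ᵥ u))` as a continuous bilinear map. -/
def dotMulCLM (μ : S → ℝ) : Matrix S S ℝ →L[ℝ] (S → ℝ) →L[ℝ] ℝ :=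
  LinearMap.toContinuousLinearMap
  { toFun := fun Amat => LinearMap.toContinuousLinearMap
      { toFun := fun u => μ ⬝ᵥ (Amat *ᵥ u)
        map_add' := fun u v => by simp [Matrix.mulVec_add, dotProduct_add]
        map_smul' := fun c u => by simp [Matrix.mulVec_smul, dotProduct_smul] }
    map_add' := fun Amat B => by
      apply ContinuousLinearMap.ext; intro u
      simp [Matrix.add_mulVec, dotProduct_add]
    map_smul' := fun c Amat => by
      apply ContinuousLinearMap.ext; intro u
      simp [Matrix.smul_mulVec, dotProduct_smul] }

@[simp] lemma dotMulCLM_apply (μ : S → ℝ) (Amat : Matrix S S ℝ) (u : S → ℝ) :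
    dotMulCLM μ Amat u = μ ⬝ᵥ (Amat *ᵥ u) := by
  simp [dotMulCLM]

/-- Derivative of the closed-form objective. -/
lemma hasFDerivAt_F (μ : S → ℝ) (wcrit : D → ℝ)
    (hu : IsUnit ((1 : Matrix S S ℝ) - γ ^ k • corKernel P p wcrit k)) :
    ∃ L : (D → ℝ) →L[ℝ] ℝ,
      HasFDerivAt (fun w : D → ℝ =>
        μ ⬝ᵥ (Ring.inverse ((1 : Matrix S S ℝ) - γ ^ k • corKernel P p w k) *ᵥ
          blockCost P g γ p w k)) L wcrit ∧
      ∀ v : D → ℝ, L v =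
        μ ⬝ᵥ (Ring.inverse ((1 : Matrix S S ℝ) - γ ^ k • corKernel P p wcrit k) *ᵥ
          (blockCost P g γ p v k + γ ^ k • (corKernel P p v k *ᵥ
            (Ring.inverse ((1 : Matrix S S ℝ) - γ ^ k • corKernel P p wcrit k) *ᵥ
              blockCost P g γ p wcrit k)))) := by
  set Kc : (D → ℝ) →L[ℝ] Matrix S S ℝ :=
    LinearMap.toContinuousLinearMap (corKernelLM P γ p k) with hKc
  set Cb : (D → ℝ) →L[ℝ] (S → ℝ) :=
    LinearMap.toContinuousLinearMap (blockCostLM P g γ p k) with hCb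
  set X : Matrix S S ℝ :=
    Ring.inverse ((1 : Matrix S S ℝ) - γ ^ k • corKernel P p wcrit k) with hX
  have hKcv : ∀ v, Kc v = γ ^ k • corKernel P p v k := fun v => rfl
  have hCbv : ∀ v, Cb v = blockCost P g γ p v k := fun v => rfl
  -- derivative of w ↦ 1 - Kc w
  have h1 : HasFDerivAt (fun w : D → ℝ => (1 : Matrix S S ℝ) - Kc w) (-Kc) wcrit :=
    Kc.hasFDerivAt.const_sub 1
  -- derivative of matrix inversion at the unit 1 - Kc wcrit
  have hXinv : (↑hu.unit⁻¹ : Matrix S S ℝ) = X := by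
    rw [hX, ← Ring.inverse_unit hu.unit, hu.unit_spec]
  have h2 : HasFDerivAt Ring.inverse
      (-(ContinuousLinearMap.mulLeftRight ℝ (Matrix S S ℝ) X X))
      ((1 : Matrix S S ℝ) - Kc wcrit) := by
    have h := hasFDerivAt_ringInverse (𝕜 := ℝ) hu.unit
    rw [hXinv] at h
    rwa [hu.unit_spec] at h
  have h3 : HasFDerivAt (fun w : D → ℝ => Ring.inverse ((1 : Matrix S S ℝ) - Kc w))
      ((-(ContinuousLinearMap.mulLeftRight ℝ (Matrix S S ℝ) X X)).comp (-Kc)) wcrit :=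
    by exact h2.comp wcrit h1
  -- derivative of w ↦ dotMulCLM μ (Ring.inverse (1 - Kc w))
  have h4 : HasFDerivAt (fun w : D → ℝ => dotMulCLM μ (Ring.inverse ((1 : Matrix S S ℝ) - Kc w)))
      ((dotMulCLM μ).comp ((-(ContinuousLinearMap.mulLeftRight ℝ (Matrix S S ℝ) X X)).comp (-Kc)))
      wcrit := (dotMulCLM μ).hasFDerivAt.comp wcrit h3
  have h5 := h4.clm_apply Cb.hasFDerivAt
  refine ⟨_, h5, ?_⟩
  intro v
  have hV : Cb wcrit = blockCost P g γ p wcrit k := rfl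
  simp only [ContinuousLinearMap.add_apply, ContinuousLinearMap.coe_comp', Function.comp_apply,
    ContinuousLinearMap.flip_apply, ContinuousLinearMap.neg_apply,
    ContinuousLinearMap.mulLeftRight_apply, mul_neg, neg_mul, neg_neg, dotMulCLM_apply, hKcv, hCbv, hV]
  rw [← hX]
  rw [Matrix.mulVec_add, dotProduct_add]
  congr 1
  show dotMulCLM μ (-(X * (-(Kc v)) * X)) (blockCost P g γ p wcrit k) = _
  rw [dotMulCLM_apply, mul_neg, neg_mul, neg_neg, hKcv, ← Matrix.mulVec_mulVec, ← Matrix.mulVec_mulVec, Matrix.smul_mulVec]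

end Deriv

/-- **Near-optimality of critical points of the k-step objective** (trivial
parametrization of correlated policies as points of the simplex `Δ(Π_det) ⊂ ℝ^{Π_det}`).
If `π̃_crit ∈ Δ(Π_det)` is either a zero-gradient point of `π̃ ↦ J^{π̃,k}(μ)` or a local
minimum of it on the simplex (possibly on the boundary), then
`E_{π_det ∼ π̃_crit}[J^{π_det}(μ)] − J^{π_det^*}(μ) ≤ 8 γ^k g_max / (1−γ)`, where
`π_det^*` minimizes `J^{π_det}(μ)` over `Π_det`. -/
theorem near_optimal_critical_points
    (P : S → A → S → ℝ) (g : S → A → ℝ) (γ gmax : ℝ) (μ : S → ℝ)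
    (p : D → S → A) (k : ℕ) (wcrit : D → ℝ) (dstar : D)
    (hP : ∀ s a, (∀ s', 0 ≤ P s a s') ∧ ∑ s', P s a s' = 1)
    (hg : ∀ s a, |g s a| ≤ gmax)
    (hγ0 : 0 < γ) (hγ1 : γ < 1)
    (hμ : μ ∈ stdSimplex ℝ S)
    (hk : 1 ≤ k)
    (hwcrit : wcrit ∈ stdSimplex ℝ D)
    (hdiff : DifferentiableAt ℝ (fun w : D → ℝ => JkInit P g γ p w k μ) wcrit)
    (hcrit : fderiv ℝ (fun w : D → ℝ => JkInit P g γ p w k μ) wcrit = 0 ∨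
      IsLocalMinOn (fun w : D → ℝ => JkInit P g γ p w k μ) (stdSimplex ℝ D) wcrit)
    (hstar : ∀ d, detJInit P g γ (p dstar) μ ≤ detJInit P g γ (p d) μ) :
    (∑ d, wcrit d * detJInit P g γ (p d) μ) - detJInit P g γ (p dstar) μ ≤
      8 * γ ^ k * gmax / (1 - γ) := by
  classical
  -- Nonemptiness and positivity
  have hS : Nonempty S := by
    by_contra h
    rw [not_nonempty_iff] at h
    have h2 := hμ.2
    rw [Finset.univ_eq_empty, Finset.sum_empty] at h2
    norm_num at h2
  obtain ⟨s0⟩ := hS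
  have hgmax : 0 ≤ gmax := le_trans (abs_nonneg _) (hg s0 (p dstar s0))
  have h1γ : 0 < 1 - γ := by linarith
  have hγk0 : 0 ≤ γ ^ k := pow_nonneg hγ0.le k
  have hγk1 : γ ^ k < 1 := by
    calc γ ^ k ≤ γ ^ 1 := pow_le_pow_of_le_one hγ0.le hγ1.le hk
      _ = γ := pow_one γ
      _ < 1 := hγ1
  have hdet_abs : ∀ pol : S → A, |detJInit P g γ pol μ| ≤ gmax / (1 - γ) := fun pol =>
    dot_abs_le hμ.1 hμ.2 (fun s => detJ_abs_le P g γ gmax hP hg hγ0.le hγ1 pol s)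
  by_cases hβ4 : (1:ℝ)/4 ≤ γ ^ k
  · -- trivial regime: `γ^k` is large, the bound is weaker than the trivial bound
    have h1 : |∑ d, wcrit d * detJInit P g γ (p d) μ| ≤ gmax / (1 - γ) :=
      dot_abs_le hwcrit.1 hwcrit.2 fun d => hdet_abs (p d)
    have h2 := hdet_abs (p dstar)
    have h3 : 2 * (gmax / (1 - γ)) ≤ 8 * γ ^ k * gmax / (1 - γ) := by
      have he : 8 * γ ^ k * gmax / (1 - γ) = (8 * γ ^ k) * (gmax / (1 - γ)) := by ring
      rw [he]
      nlinarith [div_nonneg hgmax h1γ.le]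
    have l1 := abs_le.mp h1
    have l2 := abs_le.mp h2
    linarith [l1.2, l2.1]
  · push_neg at hβ4
    have h1β : 0 < 1 - γ ^ k := by linarith
    -- kernels
    set Nd : D → Matrix S S ℝ := fun d => detKernel P (p d) ^ k with hNd
    have hNst : ∀ d, StochMat (Nd d) := fun d => (detKernel_stoch P hP (p d)).pow k
    have hKst : StochMat (corKernel P p wcrit k) := corKernel_stoch P p k hP hwcrit
    have hKn : ‖γ ^ k • corKernel P p wcrit k‖ < 1 := by
      rw [norm_smul, Real.norm_eq_abs, abs_of_nonneg hγk0]
      calc γ ^ k * ‖corKernel P p wcrit k‖ ≤ γ ^ k * 1 :=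
            mul_le_mul_of_nonneg_left hKst.norm_le_one hγk0
        _ < 1 := by rw [mul_one]; exact hγk1
    have hNn : ∀ d, ‖γ ^ k • Nd d‖ < 1 := by
      intro d
      rw [norm_smul, Real.norm_eq_abs, abs_of_nonneg hγk0]
      calc γ ^ k * ‖Nd d‖ ≤ γ ^ k * 1 :=
            mul_le_mul_of_nonneg_left (hNst d).norm_le_one hγk0
        _ < 1 := by rw [mul_one]; exact hγk1
    have hu : IsUnit ((1 : Matrix S S ℝ) - γ ^ k • corKernel P p wcrit k) :=
      isUnit_one_sub_of_norm_lt_one hKn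
    -- value vector of the correlated policy
    set X : Matrix S S ℝ := Ring.inverse ((1 : Matrix S S ℝ) - γ ^ k • corKernel P p wcrit k)
      with hX
    set cbar : S → ℝ := blockCost P g γ p wcrit k with hcbar
    set V : S → ℝ := X *ᵥ cbar with hV
    set Cc : ℝ := (∑ t ∈ Finset.range k, γ ^ t) * gmax with hCc
    have hcd : ∀ d s, |detCost P g γ (p d) k s| ≤ Cc := fun d s =>
      detCost_abs_le P g γ gmax k hP hg hγ0.le (p d) s
    have hcbar_abs : ∀ s, |cbar s| ≤ Cc := fun s =>
      dot_abs_le hwcrit.1 hwcrit.2 fun d => hcd d s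
    have hVb : ∀ s, |V s| ≤ Cc / (1 - γ ^ k) := fun s =>
      inv_mulVec_abs_le hγk0 hγk1 hKst hKn hcbar_abs s
    have hdetJ_closed : ∀ d, detJ P g γ (p d)
        = Ring.inverse (1 - γ ^ k • Nd d) *ᵥ detCost P g γ (p d) k := fun d =>
      detJ_closed P g γ gmax k hP hg hγ0.le hγ1 (p d) (hNn d)
    -- Bellman identity for V
    have hXmul : ((1 : Matrix S S ℝ) - γ ^ k • corKernel P p wcrit k) * X = 1 :=
      Ring.mul_inverse_cancel _ hu
    have hbell : cbar + γ ^ k • (corKernel P p wcrit k *ᵥ V) = V := by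
      have h1 : ((1 : Matrix S S ℝ) - γ ^ k • corKernel P p wcrit k) *ᵥ V = cbar := by
        rw [hV, Matrix.mulVec_mulVec, hXmul, Matrix.one_mulVec]
      funext s
      have h2 := congrFun h1 s
      simp only [Matrix.sub_mulVec, Matrix.one_mulVec, Matrix.smul_mulVec,
        Pi.sub_apply, Pi.smul_apply, smul_eq_mul] at h2
      simp only [Pi.add_apply, Pi.smul_apply, smul_eq_mul]
      linarith
    -- derivative of the closed-form objective
    obtain ⟨L, hLF, hLv⟩ := hasFDerivAt_F P g γ p k μ wcrit hu
    -- the `k`-step objective agrees with the closed form near `wcrit`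
    have hUopen : IsOpen {w : D → ℝ | ∑ d, |w d| < 2} := by
      have hcont : Continuous fun w : D → ℝ => ∑ d, |w d| :=
        continuous_finset_sum _ fun d _ => (continuous_apply d).abs
      exact isOpen_lt hcont continuous_const
    have hUmem : wcrit ∈ {w : D → ℝ | ∑ d, |w d| < 2} := by
      simp only [Set.mem_setOf_eq]
      calc ∑ d, |wcrit d| = ∑ d, wcrit d :=
            Finset.sum_congr rfl fun d _ => abs_of_nonneg (hwcrit.1 d)
        _ = 1 := hwcrit.2
        _ < 2 := one_lt_two
    have hF_eq : (fun w : D → ℝ => JkInit P g γ p w k μ) =ᶠ[nhds wcrit]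
        (fun w : D → ℝ => μ ⬝ᵥ (Ring.inverse ((1 : Matrix S S ℝ)
          - γ ^ k • corKernel P p w k) *ᵥ blockCost P g γ p w k)) := by
      refine Filter.eventuallyEq_of_mem (hUopen.mem_nhds hUmem) fun w hw => ?_
      have hw' : ∑ d, |w d| < 2 := hw
      have hsw : 0 ≤ ∑ d, |w d| := Finset.sum_nonneg fun d _ => abs_nonneg _
      have hwn : ‖γ ^ k • corKernel P p w k‖ < 1 := by
        rw [norm_smul, Real.norm_eq_abs, abs_of_nonneg hγk0]
        have hKle := norm_corKernel_le P p k hP w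
        have hnn : 0 ≤ ‖corKernel P p w k‖ := norm_nonneg _
        nlinarith
      show JkInit P g γ p w k μ = _
      calc JkInit P g γ p w k μ = ∑ s, μ s * Jk P g γ p w k s := rfl
        _ = ∑ s, μ s * (Ring.inverse ((1 : Matrix S S ℝ) - γ ^ k • corKernel P p w k)
            *ᵥ blockCost P g γ p w k) s :=
            Finset.sum_congr rfl fun s _ => by rw [Jk_closed P g γ p k w hwn s]
        _ = _ := rfl
    have hL' : HasFDerivAt (fun w : D → ℝ => JkInit P g γ p w k μ) L wcrit :=
      hLF.congr_of_eventuallyEq hF_eq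
    -- the direction towards the best deterministic policy
    have hsingle : Pi.single dstar (1:ℝ) ∈ stdSimplex ℝ D := by
      constructor
      · intro d
        rcases eq_or_ne d dstar with h | h
        · subst h; simp
        · simp [Pi.single_eq_of_ne h]
      · simp
    have hLy : 0 ≤ L (Pi.single dstar 1 - wcrit) := by
      rcases hcrit with hzero | hmin
      · have hfd := hL'.fderiv
        rw [hzero] at hfd
        rw [← hfd]
        simp
      · have hseg : segment ℝ wcrit (Pi.single dstar 1) ⊆ stdSimplex ℝ D :=
          (convex_stdSimplex ℝ D).segment_subset hwcrit hsingle
        exact hmin.hasFDerivWithinAt_nonneg hL'.hasFDerivWithinAt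
          (sub_mem_posTangentConeAt_of_segment_subset hseg)
    -- compute the two directional derivatives
    have hcor_single : corKernel P p (Pi.single dstar (1:ℝ)) k = Nd dstar := by
      simp only [corKernel, hNd, Pi.single_apply, ite_smul, one_smul, zero_smul]
      rw [Finset.sum_ite_eq' Finset.univ dstar fun d => detKernel P (p d) ^ k]
      simp
    have hbc_single : blockCost P g γ p (Pi.single dstar (1:ℝ)) k
        = detCost P g γ (p dstar) k := by
      funext s
      simp only [blockCost, Pi.single_apply, ite_mul, one_mul, zero_mul]
      rw [Finset.sum_ite_eq' Finset.univ dstar fun d => detCost P g γ (p d) k s]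
      simp
    have hLsingle : L (Pi.single dstar 1)
        = μ ⬝ᵥ (X *ᵥ (detCost P g γ (p dstar) k + γ ^ k • (Nd dstar *ᵥ V))) := by
      rw [hLv, hcor_single, hbc_single]
    have hLw : L wcrit = μ ⬝ᵥ (X *ᵥ V) := by
      rw [hLv]
      rw [show blockCost P g γ p wcrit k = cbar from rfl]
      rw [show Ring.inverse ((1 : Matrix S S ℝ) - γ ^ k • corKernel P p wcrit k) = X from rfl]
      rw [show X *ᵥ cbar = V from rfl, hbell]
    have hcritineq : 0 ≤ μ ⬝ᵥ (X *ᵥ ((detCost P g γ (p dstar) k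
        + γ ^ k • (Nd dstar *ᵥ V)) - V)) := by
      have h := hLy
      rw [map_sub, hLsingle, hLw] at h
      rwa [Matrix.mulVec_sub, dotProduct_sub]
    -- Step B : performance difference + criticality
    have hQb : ∀ s, |(V - (detCost P g γ (p dstar) k + γ ^ k • (Nd dstar *ᵥ V))) s|
        ≤ Cc / (1 - γ ^ k) + (Cc + γ ^ k * (Cc / (1 - γ ^ k))) := by
      intro s
      have hNV : |(Nd dstar *ᵥ V) s| ≤ Cc / (1 - γ ^ k) := by
        have he : (Nd dstar *ᵥ V) s = ∑ s', Nd dstar s s' * V s' := by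
          simp [Matrix.mulVec, dotProduct]
        rw [he]
        exact dot_abs_le (fun s' => (hNst dstar).1 s s') ((hNst dstar).2 s) hVb
      have h1 := hVb s
      have h2 := hcd dstar s
      simp only [Pi.sub_apply, Pi.add_apply, Pi.smul_apply, smul_eq_mul]
      have habs : |V s - (detCost P g γ (p dstar) k s + γ ^ k * (Nd dstar *ᵥ V) s)|
          ≤ |V s| + (|detCost P g γ (p dstar) k s| + γ ^ k * |(Nd dstar *ᵥ V) s|) := by
        calc |V s - (detCost P g γ (p dstar) k s + γ ^ k * (Nd dstar *ᵥ V) s)|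
            ≤ |V s| + |detCost P g γ (p dstar) k s + γ ^ k * (Nd dstar *ᵥ V) s| :=
              abs_sub _ _
          _ ≤ |V s| + (|detCost P g γ (p dstar) k s| + |γ ^ k * (Nd dstar *ᵥ V) s|) := by
              have := abs_add_le (detCost P g γ (p dstar) k s) (γ ^ k * (Nd dstar *ᵥ V) s)
              linarith
          _ = |V s| + (|detCost P g γ (p dstar) k s| + γ ^ k * |(Nd dstar *ᵥ V) s|) := by
              rw [abs_mul, abs_of_nonneg hγk0]
      have hγkNV : γ ^ k * |(Nd dstar *ᵥ V) s| ≤ γ ^ k * (Cc / (1 - γ ^ k)) :=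
        mul_le_mul_of_nonneg_left hNV hγk0
      linarith
    have hstepB := key_estimate hγk0 hγk1 hKst (hNst dstar) hKn (hNn dstar) hμ.1 hμ.2
      (hdetJ_closed dstar) hQb hcritineq
    -- Step A : decorrelation error
    have hstepA := stepA_estimate (c := fun d => detCost P g γ (p d) k) (cbar := cbar)
      hγk0 hγk1 hwcrit.1 hwcrit.2 hNst hKst hKn hNn hμ.1 hμ.2 hcd (fun s => rfl)
    -- rewrite the goal in closed form
    have hgl : ∑ d, wcrit d * detJInit P g γ (p d) μ
        = ∑ d, wcrit d * (μ ⬝ᵥ (Ring.inverse (1 - γ ^ k • Nd d) *ᵥ detCost P g γ (p d) k)) := by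
      refine Finset.sum_congr rfl fun d _ => ?_
      rw [show detJInit P g γ (p d) μ = μ ⬝ᵥ detJ P g γ (p d) from rfl, hdetJ_closed d]
    -- numerics
    have hCceq : Cc = (1 - γ ^ k) * (gmax / (1 - γ)) := by
      rw [hCc, geom_sum_eq (ne_of_lt hγ1)]
      have hdd : (γ ^ k - 1) / (γ - 1) = (1 - γ ^ k) / (1 - γ) := by
        rw [div_eq_div_iff (by linarith) (by linarith)]; ring
      rw [hdd, div_mul_eq_mul_div, mul_div_assoc]
    set G : ℝ := gmax / (1 - γ) with hG
    have hG0 : 0 ≤ G := div_nonneg hgmax h1γ.le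
    have hCvG : Cc / (1 - γ ^ k) = G := by
      rw [hCceq, mul_comm, mul_div_assoc, div_self (ne_of_gt h1β), mul_one]
    have e1 : 2 * Cc * γ ^ k / (1 - γ ^ k) ≤ 2 * (γ ^ k * G) := by
      rw [hCceq]
      rw [div_le_iff₀ h1β]
      nlinarith
    have e2 : Cc / (1 - γ ^ k) + (Cc + γ ^ k * (Cc / (1 - γ ^ k))) = 2 * G := by
      rw [hCvG, hCceq]; ring
    have hγkG : 0 ≤ γ ^ k * G := mul_nonneg hγk0 hG0
    have e3 : 2 * (2 * G) * γ ^ k / (1 - γ ^ k) ≤ (16/3) * (γ ^ k * G) := by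
      rw [div_le_iff₀ h1β]
      nlinarith [mul_nonneg hγkG (le_of_lt (by linarith : (0:ℝ) < 1 - 4 * γ ^ k))]
    rw [e2] at hstepB
    have hstepA' : ∑ d, wcrit d * (μ ⬝ᵥ (Ring.inverse (1 - γ ^ k • Nd d)
        *ᵥ detCost P g γ (p d) k)) - μ ⬝ᵥ V ≤ 2 * Cc * γ ^ k / (1 - γ ^ k) := hstepA
    have hstepB' : μ ⬝ᵥ V - detJInit P g γ (p dstar) μ
        ≤ 2 * (2 * G) * γ ^ k / (1 - γ ^ k) := hstepB
    have e4 : (8:ℝ) * γ ^ k * gmax / (1 - γ) = 8 * (γ ^ k * G) := by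
      rw [hG]; ring
    rw [hgl, e4]
    linarith [hstepA', hstepB', e1, e3]


end
end

section
/- Suppose J^{π̃,k}(μ), as a function of π̃ on the simplex Δ(Π_det) ⊂ ℝ^{Π_det}, is differentiable and β-smooth with respect to a norm ‖·‖, and let Φ be a differentiable mirror map that is λ-strongly convex with respect to the same norm, with Bregman divergence D_Φ(x,y) = Φ(x) − Φ(y) − ⟨∇Φ(y), x − y⟩. Let π̃_0, π̃_1, …, π̃_T be the mirror descent iterates π̃_{t+1} = argmin_{π̃ ∈ Δ(Π_det)} ⟨∇J^{π̃_t,k}(μ), π̃⟩ + (1/η) D_Φ(π̃, π̃_t) with learning rate η = λ/β. Then for every T ≥ 1, E_{π_det ∼ π̃_T}[J^{π_det}(μ)] − J^{π_det^*}(μ) ≤ 8 γ^k g_max/(1−γ) + (1/T)·(β/λ)·D_Φ(π̃^*, π̃_0), where π_det^* ∈ Π_det minimizes J^{π_det}(μ) over Π_det and π̃^* is the Dirac distribution at π_det^*. -/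
open Finset

noncomputable section

variable {S A D : Type*} [Fintype S] [Fintype A] [Fintype D] [DecidableEq S]

/-- Bregman divergence `D_Φ(x,y) = Φ(x) − Φ(y) − ⟨∇Φ(y), x − y⟩` of a differentiable
mirror map `Φ` on `ℝ^{Π_det}`, the pairing being given by the Fréchet derivative. -/
def bregD (Φ : (D → ℝ) → ℝ) (x y : D → ℝ) : ℝ :=
  Φ x - Φ y - fderiv ℝ Φ y (x - y)


set_option maxHeartbeats 2000000
set_option linter.unusedSectionVars false
section MDAuxSection

namespace MDX

variable {σ : Type*} [Fintype σ] [DecidableEq σ]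

def IsStoch (Q : Matrix σ σ ℝ) : Prop := (∀ i j, 0 ≤ Q i j) ∧ ∀ i, ∑ j, Q i j = 1

lemma IsStoch.one' : IsStoch (1 : Matrix σ σ ℝ) := by
  classical
  constructor
  · intro i j
    by_cases h : i = j <;> simp [Matrix.one_apply, h]
  · intro i
    simp [Matrix.one_apply]

lemma IsStoch.mul {Q R : Matrix σ σ ℝ} (hQ : IsStoch Q) (hR : IsStoch R) :
    IsStoch (Q * R) := by
  constructor
  · intro i j
    rw [Matrix.mul_apply]
    exact Finset.sum_nonneg fun l _ => mul_nonneg (hQ.1 i l) (hR.1 l j)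
  · intro i
    simp only [Matrix.mul_apply]
    rw [Finset.sum_comm]
    calc ∑ l, ∑ j, Q i l * R l j = ∑ l, Q i l * ∑ j, R l j := by
          simp [Finset.mul_sum]
      _ = 1 := by
          simp only [hR.2, mul_one]
          exact hQ.2 i

lemma IsStoch.pow {Q : Matrix σ σ ℝ} (hQ : IsStoch Q) (m : ℕ) : IsStoch (Q ^ m) := by
  induction m with
  | zero => simpa using IsStoch.one'
  | succ n ih => rw [pow_succ]; exact ih.mul hQ

lemma IsStoch.dot_abs_le {Q : Matrix σ σ ℝ} (hQ : IsStoch Q) {c : σ → ℝ} {C : ℝ}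
    (hc : ∀ s, |c s| ≤ C) (i : σ) : |∑ j, Q i j * c j| ≤ C := by
  calc |∑ j, Q i j * c j| ≤ ∑ j, |Q i j * c j| := Finset.abs_sum_le_sum_abs _ _
    _ ≤ ∑ j, Q i j * C := by
        refine Finset.sum_le_sum fun j _ => ?_
        rw [abs_mul, abs_of_nonneg (hQ.1 i j)]
        exact mul_le_mul_of_nonneg_left (hc j) (hQ.1 i j)
    _ = C := by rw [← Finset.sum_mul, hQ.2 i, one_mul]

lemma abs_tsum_le_of_le {f g : ℕ → ℝ} (hg : Summable g) (h : ∀ n, |f n| ≤ g n) :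
    |∑' n, f n| ≤ ∑' n, g n := by
  have hfa : Summable fun n => |f n| :=
    hg.of_nonneg_of_le (fun n => abs_nonneg _) h
  have h1 : Summable fun n => ‖f n‖ := by simpa only [Real.norm_eq_abs] using hfa
  have h2 := norm_tsum_le_tsum_norm h1
  simp only [Real.norm_eq_abs] at h2
  exact h2.trans (Summable.tsum_le_tsum h hfa hg)

def serJ (x : ℝ) (M : Matrix σ σ ℝ) (c : σ → ℝ) (s : σ) : ℝ :=
  ∑' m : ℕ, x ^ m * ∑ s', (M ^ m) s s' * c s'

variable {x : ℝ} {M : Matrix σ σ ℝ} {c : σ → ℝ} {C : ℝ}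

lemma term_abs_le (hx0 : 0 ≤ x) (hM : IsStoch M) (hc : ∀ s, |c s| ≤ C) (m : ℕ) (s : σ) :
    |x ^ m * ∑ s', (M ^ m) s s' * c s'| ≤ x ^ m * C := by
  rw [abs_mul, abs_pow, abs_of_nonneg hx0]
  exact mul_le_mul_of_nonneg_left ((hM.pow m).dot_abs_le hc s) (pow_nonneg hx0 m)

lemma summable_geom_mul (hx0 : 0 ≤ x) (hx1 : x < 1) (C : ℝ) :
    Summable (fun m : ℕ => x ^ m * C) :=
  (summable_geometric_of_lt_one hx0 hx1).mul_right C

lemma tsum_geom_mul (hx0 : 0 ≤ x) (hx1 : x < 1) (C : ℝ) :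
    ∑' m : ℕ, x ^ m * C = (1 - x)⁻¹ * C := by
  rw [tsum_mul_right, tsum_geometric_of_lt_one hx0 hx1, mul_comm]

lemma summable_serJ (hx0 : 0 ≤ x) (hx1 : x < 1) (hM : IsStoch M) (hc : ∀ s, |c s| ≤ C)
    (s : σ) : Summable (fun m : ℕ => x ^ m * ∑ s', (M ^ m) s s' * c s') := by
  have habs : Summable fun m : ℕ => |x ^ m * ∑ s', (M ^ m) s s' * c s'| :=
    (summable_geom_mul hx0 hx1 C).of_nonneg_of_le (fun m => abs_nonneg _)
      (fun m => term_abs_le hx0 hM hc m s)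
  exact habs.of_abs

lemma abs_serJ_le (hx0 : 0 ≤ x) (hx1 : x < 1) (hM : IsStoch M) (hc : ∀ s, |c s| ≤ C)
    (s : σ) : |serJ x M c s| ≤ (1 - x)⁻¹ * C := by
  refine le_trans (abs_tsum_le_of_le (summable_geom_mul hx0 hx1 C)
    (fun m => term_abs_le hx0 hM hc m s)) ?_
  rw [tsum_geom_mul hx0 hx1]

lemma serJ_bellman_pow (hx0 : 0 ≤ x) (hx1 : x < 1) (hM : IsStoch M) (hc : ∀ s, |c s| ≤ C)
    (k : ℕ) (s : σ) :
    serJ x M c s = (∑ t ∈ Finset.range k, x ^ t * ∑ s', (M ^ t) s s' * c s')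
      + x ^ k * ∑ l, (M ^ k) s l * serJ x M c l := by
  have hsum : ∀ l : σ, Summable (fun m : ℕ => x ^ m * ∑ s', (M ^ m) l s' * c s') :=
    fun l => summable_serJ hx0 hx1 hM hc l
  have hpt : ∀ u : ℕ, x ^ (u + k) * ∑ s', (M ^ (u + k)) s s' * c s'
      = ∑ l, (M ^ k) s l * (x ^ k * (x ^ u * ∑ s', (M ^ u) l s' * c s')) := by
    intro u
    have hMP : (M ^ (u + k)) = M ^ k * M ^ u := by rw [add_comm, pow_add]
    rw [hMP, pow_add]
    simp only [Matrix.mul_apply, Finset.sum_mul, Finset.mul_sum]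
    rw [Finset.sum_comm]
    exact Finset.sum_congr rfl fun l _ => Finset.sum_congr rfl fun s' _ => by ring
  have hmain := (Summable.sum_add_tsum_nat_add k (hsum s)).symm
  rw [serJ, hmain]
  congr 1
  calc ∑' u, x ^ (u + k) * ∑ s', (M ^ (u + k)) s s' * c s'
      = ∑' u, ∑ l, (M ^ k) s l * (x ^ k * (x ^ u * ∑ s', (M ^ u) l s' * c s')) :=
        tsum_congr hpt
    _ = ∑ l, ∑' u, (M ^ k) s l * (x ^ k * (x ^ u * ∑ s', (M ^ u) l s' * c s')) := by
        refine Summable.tsum_finsetSum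
          (f := fun l u => (M ^ k) s l * (x ^ k * (x ^ u * ∑ s', (M ^ u) l s' * c s'))) ?_
        exact fun l _ => (((hsum l).mul_left _).mul_left _)
    _ = ∑ l, (M ^ k) s l * (x ^ k * serJ x M c l) := by
        refine Finset.sum_congr rfl fun l _ => ?_
        rw [tsum_mul_left, tsum_mul_left]
        rfl
    _ = x ^ k * ∑ l, (M ^ k) s l * serJ x M c l := by
        rw [Finset.mul_sum]
        exact Finset.sum_congr rfl fun l _ => by ring

lemma serJ_bellman (hx0 : 0 ≤ x) (hx1 : x < 1) (hM : IsStoch M) (hc : ∀ s, |c s| ≤ C)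
    (s : σ) : serJ x M c s = c s + x * ∑ l, M s l * serJ x M c l := by
  have h := serJ_bellman_pow hx0 hx1 hM hc 1 s
  simpa [Finset.sum_range_one, Matrix.one_apply, ite_mul, Finset.sum_ite_eq] using h

lemma serJ_const_mul (a : ℝ) (s : σ) :
    serJ x M (fun s' => a * c s') s = a * serJ x M c s := by
  have h : ∀ m : ℕ, x ^ m * ∑ s', (M ^ m) s s' * (a * c s')
      = a * (x ^ m * ∑ s', (M ^ m) s s' * c s') := by
    intro m
    have h2 : ∑ s', (M ^ m) s s' * (a * c s') = a * ∑ s', (M ^ m) s s' * c s' := by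
      rw [Finset.mul_sum]; exact Finset.sum_congr rfl fun s' _ => by ring
    rw [h2]; ring
  calc serJ x M (fun s' => a * c s') s
      = ∑' m : ℕ, a * (x ^ m * ∑ s', (M ^ m) s s' * c s') := tsum_congr h
    _ = a * serJ x M c s := tsum_mul_left

lemma serJ_shift (hx0 : 0 ≤ x) (hx1 : x < 1) {M' : Matrix σ σ ℝ} (hM' : IsStoch M')
    {c' J : σ → ℝ} {Cc CJ : ℝ} (hc' : ∀ s, |c' s| ≤ Cc) (hJ : ∀ s, |J s| ≤ CJ) (s0 : σ) :
    serJ x M' (fun s => c' s + x * ∑ l, M' s l * J l - J s) s0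
      = serJ x M' c' s0 - J s0 := by
  have hmid : ∀ m : ℕ, ∑ s', (M' ^ m) s0 s' * ∑ l, M' s' l * J l
      = ∑ l, (M' ^ (m+1)) s0 l * J l := by
    intro m
    simp only [Finset.mul_sum, pow_succ, Matrix.mul_apply, Finset.sum_mul]
    rw [Finset.sum_comm]
    exact Finset.sum_congr rfl fun l _ => Finset.sum_congr rfl fun s' _ => by ring
  have hterm : ∀ m : ℕ, x ^ m * ∑ s', (M' ^ m) s0 s' * (c' s' + x * ∑ l, M' s' l * J l - J s')
      = x ^ m * ∑ s', (M' ^ m) s0 s' * c' s'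
        + (x ^ (m+1) * ∑ l, (M' ^ (m+1)) s0 l * J l
           - x ^ m * ∑ s', (M' ^ m) s0 s' * J s') := by
    intro m
    have hexp : ∑ s', (M' ^ m) s0 s' * (c' s' + x * ∑ l, M' s' l * J l - J s')
        = ∑ s', (M' ^ m) s0 s' * c' s'
          + x * ∑ s', (M' ^ m) s0 s' * ∑ l, M' s' l * J l
          - ∑ s', (M' ^ m) s0 s' * J s' := by
      rw [Finset.mul_sum, ← Finset.sum_add_distrib, ← Finset.sum_sub_distrib]
      exact Finset.sum_congr rfl fun s' _ => by ring
    rw [hexp, hmid m]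
    ring
  have hA := summable_serJ hx0 hx1 hM' hc' s0
  have hB : Summable (fun m : ℕ => x ^ m * ∑ s', (M' ^ m) s0 s' * J s') :=
    summable_serJ hx0 hx1 hM' hJ s0
  have hB' : Summable (fun m : ℕ => x ^ (m+1) * ∑ l, (M' ^ (m+1)) s0 l * J l) :=
    (summable_nat_add_iff 1).2 hB
  have hG : Summable (fun m : ℕ => x ^ (m+1) * ∑ l, (M' ^ (m+1)) s0 l * J l
      - x ^ m * ∑ s', (M' ^ m) s0 s' * J s') := hB'.sub hB
  have hshift : ∑' m : ℕ, x ^ (m+1) * ∑ l, (M' ^ (m+1)) s0 l * J l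
      = (∑' m : ℕ, x ^ m * ∑ s', (M' ^ m) s0 s' * J s') - J s0 := by
    have h0 := Summable.tsum_eq_zero_add hB
    have hhead : x ^ 0 * ∑ s', ((M' : Matrix σ σ ℝ) ^ 0) s0 s' * J s' = J s0 := by
      simp [Matrix.one_apply, ite_mul, Finset.sum_ite_eq]
    rw [hhead] at h0
    linarith [h0]
  calc serJ x M' (fun s => c' s + x * ∑ l, M' s l * J l - J s) s0
      = ∑' m : ℕ, (x ^ m * ∑ s', (M' ^ m) s0 s' * c' s'
        + (x ^ (m+1) * ∑ l, (M' ^ (m+1)) s0 l * J l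
           - x ^ m * ∑ s', (M' ^ m) s0 s' * J s')) := tsum_congr hterm
    _ = serJ x M' c' s0 + ((∑' m : ℕ, x ^ (m+1) * ∑ l, (M' ^ (m+1)) s0 l * J l)
          - ∑' m : ℕ, x ^ m * ∑ s', (M' ^ m) s0 s' * J s') := by
        rw [Summable.tsum_add hA hG, Summable.tsum_sub hB' hB]
        rfl
    _ = serJ x M' c' s0 - J s0 := by rw [hshift]; ring

lemma serJ_diff_bound (hx0 : 0 ≤ x) (hx1 : x < 1) {M1 M2 : Matrix σ σ ℝ}
    (h1 : IsStoch M1) (h2 : IsStoch M2) {A : σ → ℝ} {CA : ℝ}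
    (hA : ∀ s, |A s| ≤ CA) (s : σ) :
    |serJ x M1 A s - serJ x M2 A s| ≤ x * ((1 - x)⁻¹ * (2 * CA)) := by
  have hCA : 0 ≤ CA := le_trans (abs_nonneg _) (hA s)
  have hs1 := summable_serJ hx0 hx1 h1 hA s
  have hs2 := summable_serJ hx0 hx1 h2 hA s
  have hg : Summable (fun m : ℕ => if m = 0 then (0:ℝ) else x ^ m * (2 * CA)) := by
    refine (summable_geom_mul hx0 hx1 (2 * CA)).of_nonneg_of_le (fun m => ?_) (fun m => ?_)
    · by_cases h : m = 0
      · simp [h]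
      · simp only [h, if_false]; positivity
    · by_cases h : m = 0
      · simp only [h, if_true]; positivity
      · simp [h]
  have hptw : ∀ m : ℕ, |x ^ m * ∑ s', (M1 ^ m) s s' * A s' - x ^ m * ∑ s', (M2 ^ m) s s' * A s'|
      ≤ (if m = 0 then (0:ℝ) else x ^ m * (2 * CA)) := by
    intro m
    by_cases h : m = 0
    · subst h; simp
    · simp only [h, if_false]
      have b1 := term_abs_le hx0 h1 hA m s
      have b2 := term_abs_le hx0 h2 hA m s
      calc |x ^ m * ∑ s', (M1 ^ m) s s' * A s' - x ^ m * ∑ s', (M2 ^ m) s s' * A s'|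
          ≤ |x ^ m * ∑ s', (M1 ^ m) s s' * A s'|
            + |x ^ m * ∑ s', (M2 ^ m) s s' * A s'| := abs_sub _ _
        _ ≤ x ^ m * CA + x ^ m * CA := add_le_add b1 b2
        _ = x ^ m * (2 * CA) := by ring
  have hgval : ∑' m : ℕ, (if m = 0 then (0:ℝ) else x ^ m * (2 * CA))
      = x * ((1 - x)⁻¹ * (2 * CA)) := by
    rw [Summable.tsum_eq_zero_add hg]
    have hcon : ∀ m : ℕ, (if m + 1 = 0 then (0:ℝ) else x ^ (m+1) * (2 * CA))
        = x * (x ^ m * (2 * CA)) := by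
      intro m; simp only [Nat.succ_ne_zero, if_false]; ring
    rw [tsum_congr hcon, tsum_mul_left, tsum_geom_mul hx0 hx1]
    simp
  calc |serJ x M1 A s - serJ x M2 A s|
      = |∑' m : ℕ, (x ^ m * ∑ s', (M1 ^ m) s s' * A s'
          - x ^ m * ∑ s', (M2 ^ m) s s' * A s')| := by
        rw [Summable.tsum_sub hs1 hs2]; rfl
    _ ≤ ∑' m : ℕ, (if m = 0 then (0:ℝ) else x ^ m * (2 * CA)) := abs_tsum_le_of_le hg hptw
    _ = x * ((1 - x)⁻¹ * (2 * CA)) := hgval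

lemma simplex_dot_abs_le {D : Type*} [Fintype D] {w : D → ℝ} (hw : w ∈ stdSimplex ℝ D)
    {v : D → ℝ} {C : ℝ} (hv : ∀ d, |v d| ≤ C) : |∑ d, w d * v d| ≤ C := by
  calc |∑ d, w d * v d| ≤ ∑ d, |w d * v d| := Finset.abs_sum_le_sum_abs _ _
    _ ≤ ∑ d, w d * C := by
        refine Finset.sum_le_sum fun d _ => ?_
        rw [abs_mul, abs_of_nonneg (hw.1 d)]
        exact mul_le_mul_of_nonneg_left (hv d) (hw.1 d)
    _ = C := by rw [← Finset.sum_mul, hw.2, one_mul]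

lemma bellman_unique {x : ℝ} (hx0 : 0 ≤ x) (hx1 : x < 1) {Q : Matrix σ σ ℝ} (hQ : IsStoch Q)
    {cc z1 z2 : σ → ℝ} (h1 : ∀ s, z1 s = cc s + x * ∑ l, Q s l * z1 l)
    (h2 : ∀ s, z2 s = cc s + x * ∑ l, Q s l * z2 l) (s : σ) : z1 s = z2 s := by
  obtain ⟨s0, -, hs0⟩ := Finset.exists_max_image (Finset.univ : Finset σ)
    (fun s => |z1 s - z2 s|) ⟨s, Finset.mem_univ s⟩
  have hD : ∀ s1, z1 s1 - z2 s1 = x * ∑ l, Q s1 l * (z1 l - z2 l) := by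
    intro s1
    have hd : ∑ l, Q s1 l * (z1 l - z2 l) = ∑ l, Q s1 l * z1 l - ∑ l, Q s1 l * z2 l := by
      rw [← Finset.sum_sub_distrib]
      exact Finset.sum_congr rfl fun l _ => by ring
    rw [h1 s1, h2 s1, hd]; ring
  have hb : |z1 s0 - z2 s0| ≤ x * |z1 s0 - z2 s0| := by
    conv_lhs => rw [hD s0]
    rw [abs_mul, abs_of_nonneg hx0]
    exact mul_le_mul_of_nonneg_left
      (hQ.dot_abs_le (fun l => hs0 l (Finset.mem_univ l)) s0) hx0
  have h0 : |z1 s0 - z2 s0| ≤ 0 := by nlinarith [abs_nonneg (z1 s0 - z2 s0)]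
  have h3 : |z1 s - z2 s| ≤ 0 := le_trans (hs0 s (Finset.mem_univ s)) h0
  have h4 : |z1 s - z2 s| = 0 := le_antisymm h3 (abs_nonneg _)
  have h5 := abs_eq_zero.1 h4
  linarith [sub_eq_zero.1 h5]

lemma deriv_le_of_slope {φ : ℝ → ℝ} {d C : ℝ} (h : HasDerivAt φ d 0)
    (hq : ∀ s : ℝ, s ∈ Set.Ioc (0:ℝ) 1 → φ s - φ 0 ≤ s * C) : d ≤ C := by
  have h1 : Filter.Tendsto (slope φ 0) (nhdsWithin 0 (Set.Ioi (0:ℝ))) (nhds d) :=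
    (hasDerivAt_iff_tendsto_slope.1 h).mono_left
      (nhdsWithin_mono 0 (fun y hy => ne_of_gt hy))
  refine le_of_tendsto h1 ?_
  filter_upwards [Ioc_mem_nhdsGT_of_mem (Set.mem_Ico.2 ⟨le_refl (0:ℝ), zero_lt_one⟩)] with s hs
  have hs0 : 0 < s := hs.1
  rw [slope_def_field, sub_zero, div_le_iff₀ hs0]
  calc φ s - φ 0 ≤ s * C := hq s hs
    _ = C * s := by ring

lemma deriv_nonneg_of_slope {φ : ℝ → ℝ} {d : ℝ} (h : HasDerivAt φ d 0)
    (hq : ∀ s : ℝ, s ∈ Set.Ioc (0:ℝ) 1 → φ 0 ≤ φ s) : 0 ≤ d := by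
  have h2 := deriv_le_of_slope (φ := fun t => -φ t) (d := -d) (C := 0) h.neg
    (fun s hs => by linarith [hq s hs])
  linarith

lemma hasDerivAt_affine {E : Type*} [NormedAddCommGroup E] [NormedSpace ℝ E] (w v : E)
    (t : ℝ) : HasDerivAt (fun s : ℝ => w + s • v) v t := by
  have h := ((hasDerivAt_id t).smul_const v).const_add w
  simpa using h

lemma hasDerivAt_comp_line {E : Type*} [NormedAddCommGroup E] [NormedSpace ℝ E]
    {f : E → ℝ} {w : E} (hf : DifferentiableAt ℝ f w) (v : E) :
    HasDerivAt (fun s : ℝ => f (w + s • v)) (fderiv ℝ f w v) 0 := by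
  have hline := hasDerivAt_affine w v 0
  have hw0 : w + (0:ℝ) • v = w := by simp
  have hF : HasFDerivAt f (fderiv ℝ f w) (w + (0:ℝ) • v) := by
    rw [hw0]; exact hf.hasFDerivAt
  exact hF.comp_hasDerivAt 0 hline

end MDX

end MDAuxSection

section MDDomain

variable (P : S → A → S → ℝ) (g : S → A → ℝ) (γ gmax : ℝ) (p : D → S → A) (k : ℕ)

lemma mdx_isStoch_detKernel
    (hP : ∀ s a, (∀ s', 0 ≤ P s a s') ∧ ∑ s', P s a s' = 1) (pol : S → A) :
    MDX.IsStoch (detKernel P pol) := by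
  constructor
  · intro i j
    show 0 ≤ P i (pol i) j
    exact (hP i (pol i)).1 j
  · intro i
    show ∑ j, P i (pol i) j = 1
    exact (hP i (pol i)).2

lemma mdx_isStoch_corKernel
    (hP : ∀ s a, (∀ s', 0 ≤ P s a s') ∧ ∑ s', P s a s' = 1)
    {w : D → ℝ} (hw : w ∈ stdSimplex ℝ D) :
    MDX.IsStoch (corKernel P p w k) := by
  constructor
  · intro i j
    show 0 ≤ (∑ d, w d • (detKernel P (p d) ^ k)) i j
    simp only [Matrix.sum_apply]
    refine Finset.sum_nonneg fun d _ => ?_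
    rw [Matrix.smul_apply, smul_eq_mul]
    exact mul_nonneg (hw.1 d) (((mdx_isStoch_detKernel P hP (p d)).pow k).1 i j)
  · intro i
    show ∑ j, (∑ d, w d • (detKernel P (p d) ^ k)) i j = 1
    simp only [Matrix.sum_apply, Matrix.smul_apply, smul_eq_mul]
    rw [Finset.sum_comm]
    calc ∑ d, ∑ j, w d * (detKernel P (p d) ^ k) i j
        = ∑ d, w d := by
          refine Finset.sum_congr rfl fun d _ => ?_
          rw [← Finset.mul_sum, ((mdx_isStoch_detKernel P hP (p d)).pow k).2 i, mul_one]
      _ = 1 := hw.2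

lemma mdx_abs_detCost_le
    (hP : ∀ s a, (∀ s', 0 ≤ P s a s') ∧ ∑ s', P s a s' = 1)
    (hg : ∀ s a, |g s a| ≤ gmax) (hγ0 : 0 < γ) (hγ1 : γ < 1) (pol : S → A) (s : S) :
    |detCost P g γ pol k s| ≤ (1 - γ ^ k) * (gmax / (1 - γ)) := by
  have hK := mdx_isStoch_detKernel P hP pol
  have hgeo : ∑ t ∈ Finset.range k, γ ^ t = (1 - γ ^ k) / (1 - γ) := by
    rw [geom_sum_eq (ne_of_lt hγ1) k]
    have h1 : γ - 1 ≠ 0 := by intro h; apply absurd hγ1; rw [sub_eq_zero] at h; simp [h]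
    have h2 : (1:ℝ) - γ ≠ 0 := by intro h; apply h1; linarith [sub_eq_zero.1 h]
    field_simp
    ring
  calc |detCost P g γ pol k s|
      ≤ ∑ t ∈ Finset.range k, |γ ^ t * ∑ s', (detKernel P pol ^ t) s s' * g s' (pol s')| := by
        rw [detCost]; exact Finset.abs_sum_le_sum_abs _ _
    _ ≤ ∑ t ∈ Finset.range k, γ ^ t * gmax := by
        refine Finset.sum_le_sum fun t _ => ?_
        rw [abs_mul, abs_pow, abs_of_nonneg hγ0.le]
        exact mul_le_mul_of_nonneg_left
          ((hK.pow t).dot_abs_le (fun s' => hg s' (pol s')) s) (pow_nonneg hγ0.le t)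
    _ = (1 - γ ^ k) * (gmax / (1 - γ)) := by
        rw [← Finset.sum_mul, hgeo]; ring

lemma mdx_Jk_eq_serJ (w : D → ℝ) (s : S) :
    Jk P g γ p w k s = MDX.serJ (γ ^ k) (corKernel P p w k) (blockCost P g γ p w k) s := by
  rw [Jk, MDX.serJ]
  exact tsum_congr fun m => by rw [mul_comm m k, pow_mul]

lemma mdx_detJ_eq_serJ (pol : S → A) (s : S) :
    detJ P g γ pol s = MDX.serJ γ (detKernel P pol) (fun s' => g s' (pol s')) s := rfl

end MDDomain

/-- **Convergence of mirror descent with the k-step policy gradient.**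
Suppose `π̃ ↦ J^{π̃,k}(μ)` is differentiable and `β`-smooth with respect to a norm `nrm`
on `ℝ^{Π_det}`, and `Φ` is a differentiable mirror map that is `λ`-strongly convex with
respect to the same norm. Let `W 0, W 1, …` be the mirror descent iterates, where
`W (t+1)` minimizes `π̃ ↦ ⟨∇J^{W t,k}(μ), π̃⟩ + (1/η) D_Φ(π̃, W t)` over `Δ(Π_det)` with
learning rate `η = λ/β`. Then for every `T ≥ 1`,
`E_{π_det ∼ W T}[J^{π_det}(μ)] − J^{π_det^*}(μ)
  ≤ 8 γ^k g_max/(1−γ) + (1/T)(β/λ) D_Φ(π̃^*, W 0)`,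
where `π̃^*` is the Dirac distribution at the optimal deterministic policy `p dstar`. -/
theorem mirror_descent_bound
    [DecidableEq D]
    (P : S → A → S → ℝ) (g : S → A → ℝ) (γ gmax β lam : ℝ) (μ : S → ℝ)
    (p : D → S → A) (k : ℕ) (dstar : D)
    (nrm : (D → ℝ) → ℝ) (Φ : (D → ℝ) → ℝ) (W : ℕ → D → ℝ) (wstar : D → ℝ) (T : ℕ)
    (hP : ∀ s a, (∀ s', 0 ≤ P s a s') ∧ ∑ s', P s a s' = 1)
    (hg : ∀ s a, |g s a| ≤ gmax)
    (hγ0 : 0 < γ) (hγ1 : γ < 1)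
    (hμ : μ ∈ stdSimplex ℝ S)
    (hk : 1 ≤ k) (hβ : 0 < β) (hlam : 0 < lam)
    -- `nrm` is a norm on `ℝ^{Π_det}`:
    (hnrm_zero : ∀ x : D → ℝ, nrm x = 0 ↔ x = 0)
    (hnrm_smul : ∀ (c : ℝ) (x : D → ℝ), nrm (c • x) = |c| * nrm x)
    (hnrm_add : ∀ x y : D → ℝ, nrm (x + y) ≤ nrm x + nrm y)
    -- the k-step objective is differentiable and β-smooth w.r.t. `nrm`:
    (hdiff : Differentiable ℝ (fun w : D → ℝ => JkInit P g γ p w k μ))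
    (hsmooth : ∀ x ∈ stdSimplex ℝ D, ∀ y ∈ stdSimplex ℝ D,
      JkInit P g γ p y k μ ≤ JkInit P g γ p x k μ +
        fderiv ℝ (fun w : D → ℝ => JkInit P g γ p w k μ) x (y - x) +
          β / 2 * nrm (y - x) ^ 2)
    -- `Φ` is a differentiable, λ-strongly convex mirror map w.r.t. `nrm`:
    (hΦ : Differentiable ℝ Φ)
    (hsc : ∀ x ∈ stdSimplex ℝ D, ∀ y ∈ stdSimplex ℝ D,
      Φ x + fderiv ℝ Φ x (y - x) + lam / 2 * nrm (y - x) ^ 2 ≤ Φ y)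
    -- mirror descent iterates with learning rate `η = λ/β` (so `1/η = β/λ`):
    (hW0 : W 0 ∈ stdSimplex ℝ D)
    (hstep : ∀ t : ℕ, W (t + 1) ∈ stdSimplex ℝ D ∧ ∀ y ∈ stdSimplex ℝ D,
      fderiv ℝ (fun w : D → ℝ => JkInit P g γ p w k μ) (W t) (W (t + 1)) +
          (β / lam) * bregD Φ (W (t + 1)) (W t) ≤
        fderiv ℝ (fun w : D → ℝ => JkInit P g γ p w k μ) (W t) y +
          (β / lam) * bregD Φ y (W t))
    (hwstar : ∀ d, wstar d = if d = dstar then 1 else 0)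
    (hstar : ∀ d, detJInit P g γ (p dstar) μ ≤ detJInit P g γ (p d) μ)
    (hT : 1 ≤ T) :
    (∑ d, W T d * detJInit P g γ (p d) μ) - detJInit P g γ (p dstar) μ ≤
      8 * γ ^ k * gmax / (1 - γ) + (1 / (T : ℝ)) * (β / lam) * bregD Φ wstar (W 0) := by
  classical
  -- basic positivity and nonemptiness facts
  have hx0 : (0:ℝ) ≤ γ ^ k := pow_nonneg hγ0.le k
  have hx1 : γ ^ k < 1 := pow_lt_one₀ hγ0.le hγ1 (by omega)
  have h1γ : (0:ℝ) < 1 - γ := by linarith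
  have hSne : Nonempty S := by
    by_contra hS
    rw [not_nonempty_iff] at hS
    have h2 := hμ.2
    rw [Finset.univ_eq_empty, Finset.sum_empty] at h2
    exact absurd h2 (by norm_num)
  obtain ⟨s0⟩ := hSne
  have hgmax0 : 0 ≤ gmax := le_trans (abs_nonneg _) (hg s0 (p dstar s0))
  have hG0 : 0 ≤ gmax / (1 - γ) := div_nonneg hgmax0 h1γ.le
  set G := gmax / (1 - γ) with hGdef
  set x := γ ^ k with hxdef
  have hJk_serJ : ∀ (w : D → ℝ) (s : S), Jk P g γ p w k s
      = MDX.serJ x (corKernel P p w k) (blockCost P g γ p w k) s := by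
    intro w s
    rw [hxdef]
    exact mdx_Jk_eq_serJ P g γ p k w s
  -- simplex memberships
  have hwstar_mem : wstar ∈ stdSimplex ℝ D := by
    constructor
    · intro d
      rw [hwstar d]
      by_cases h : d = dstar <;> simp [h]
    · calc ∑ d, wstar d = ∑ d, if d = dstar then (1:ℝ) else 0 :=
            Finset.sum_congr rfl fun d _ => hwstar d
        _ = 1 := by rw [Finset.sum_ite_eq' Finset.univ dstar (fun _ => (1:ℝ))]; simp
  have hWmem : ∀ t, W t ∈ stdSimplex ℝ D := by
    intro t
    cases t with
    | zero => exact hW0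
    | succ n => exact (hstep n).1
  -- Bregman divergence bounds
  have hbreg : ∀ u v : D → ℝ, u ∈ stdSimplex ℝ D → v ∈ stdSimplex ℝ D →
      lam / 2 * nrm (u - v) ^ 2 ≤ bregD Φ u v := by
    intro u v hu hv
    have h := hsc v hv u hu
    rw [bregD]; linarith
  have hbreg0 : ∀ u v : D → ℝ, u ∈ stdSimplex ℝ D → v ∈ stdSimplex ℝ D →
      0 ≤ bregD Φ u v := by
    intro u v hu hv
    refine le_trans ?_ (hbreg u v hu hv)
    have := sq_nonneg (nrm (u - v))
    nlinarith [hlam]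
  have hTpos : (0:ℝ) < (T:ℝ) := by exact_mod_cast Nat.lt_of_lt_of_le Nat.zero_lt_one hT
  have hRHS2 : 0 ≤ 1 / (T:ℝ) * (β / lam) * bregD Φ wstar (W 0) := by
    have hb := hbreg0 wstar (W 0) hwstar_mem (hWmem 0)
    have h1 : (0:ℝ) ≤ 1 / (T:ℝ) := by positivity
    have h2 : (0:ℝ) ≤ β / lam := div_nonneg hβ.le hlam.le
    exact mul_nonneg (mul_nonneg h1 h2) hb
  -- bounds on detJ
  have hKst : ∀ pol : S → A, MDX.IsStoch (detKernel P pol) :=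
    fun pol => mdx_isStoch_detKernel P hP pol
  have habs_g : ∀ pol : S → A, ∀ s' : S, |g s' (pol s')| ≤ gmax := fun pol s' => hg s' (pol s')
  have hinvG : (1 - γ)⁻¹ * gmax = G := by rw [hGdef]; ring
  have habs_detJ : ∀ (pol : S → A) (s : S), |detJ P g γ pol s| ≤ G := by
    intro pol s
    rw [mdx_detJ_eq_serJ]
    have h := MDX.abs_serJ_le hγ0.le hγ1 (hKst pol) (habs_g pol) s
    rwa [hinvG] at h
  have habs_detJInit : ∀ pol : S → A, |detJInit P g γ pol μ| ≤ G := by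
    intro pol
    rw [detJInit]
    exact MDX.simplex_dot_abs_le hμ (habs_detJ pol)
  have hRHSeq : 8 * x * gmax / (1 - γ) = 8 * (x * G) := by
    rw [hGdef]; ring
  -- case split on x ≤ 1/3
  rcases lt_or_ge (1/3 : ℝ) x with hxs | hxs
  · -- trivial case : x > 1/3, the bound 8 x G exceeds the value range 2 G
    have hL1 : ∑ d, W T d * detJInit P g γ (p d) μ ≤ G := by
      refine le_trans (le_abs_self _) ?_
      exact MDX.simplex_dot_abs_le (hWmem T) (fun d => habs_detJInit (p d))
    have hL2 : -G ≤ detJInit P g γ (p dstar) μ := by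
      have := habs_detJInit (p dstar)
      linarith [abs_le.1 this |>.1]
    have h2G : 2 * G ≤ 8 * (x * G) := by nlinarith
    rw [hRHSeq]
    linarith
  · -- main case : x ≤ 1/3
    have h1x : (0:ℝ) < 1 - x := by linarith
    have hxG0 : 0 ≤ x * G := mul_nonneg hx0 hG0
    -- cost bounds
    have habs_detCost : ∀ (pol : S → A) (s : S), |detCost P g γ pol k s| ≤ (1 - x) * G :=
      fun pol s => mdx_abs_detCost_le P g γ gmax k hP hg hγ0 hγ1 pol s
    have habs_blockCost : ∀ w : D → ℝ, w ∈ stdSimplex ℝ D → ∀ s : S,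
        |blockCost P g γ p w k s| ≤ (1 - x) * G := by
      intro w hw s
      rw [blockCost]
      exact MDX.simplex_dot_abs_le hw (fun d => habs_detCost (p d) s)
    have hMst : ∀ w : D → ℝ, w ∈ stdSimplex ℝ D → MDX.IsStoch (corKernel P p w k) :=
      fun w hw => mdx_isStoch_corKernel P p k hP hw
    have hCcG : (1 - x)⁻¹ * ((1 - x) * G) = G := by
      field_simp
    have habs_JkserJ : ∀ w : D → ℝ, w ∈ stdSimplex ℝ D → ∀ s : S,
        |MDX.serJ x (corKernel P p w k) (blockCost P g γ p w k) s| ≤ G := by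
      intro w hw s
      have h := MDX.abs_serJ_le hx0 hx1 (hMst w hw) (habs_blockCost w hw) s
      rwa [hCcG] at h
    have habs_Jk : ∀ w : D → ℝ, w ∈ stdSimplex ℝ D → ∀ s : S, |Jk P g γ p w k s| ≤ G := by
      intro w hw s
      rw [hJk_serJ w s]
      exact habs_JkserJ w hw s
    -- exact value of F at wstar : K10
    have hcorstar : corKernel P p wstar k = detKernel P (p dstar) ^ k := by
      rw [corKernel]
      have hrw : ∀ d : D, wstar d • (detKernel P (p d) ^ k)
          = if d = dstar then detKernel P (p d) ^ k else 0 := by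
        intro d
        rw [hwstar d]
        by_cases h : d = dstar <;> simp [h]
      rw [Finset.sum_congr rfl fun d _ => hrw d,
        Finset.sum_ite_eq' Finset.univ dstar (fun d => detKernel P (p d) ^ k)]
      simp
    have hbcstar : ∀ s, blockCost P g γ p wstar k s = detCost P g γ (p dstar) k s := by
      intro s
      rw [blockCost]
      have hrw : ∀ d : D, wstar d * detCost P g γ (p d) k s
          = if d = dstar then detCost P g γ (p d) k s else 0 := by
        intro d
        rw [hwstar d]
        by_cases h : d = dstar <;> simp [h]
      rw [Finset.sum_congr rfl fun d _ => hrw d,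
        Finset.sum_ite_eq' Finset.univ dstar (fun d => detCost P g γ (p d) k s)]
      simp
    have hJkstar : ∀ s, Jk P g γ p wstar k s = detJ P g γ (p dstar) s := by
      have hQ : MDX.IsStoch (detKernel P (p dstar) ^ k) := (hKst (p dstar)).pow k
      refine MDX.bellman_unique hx0 hx1 hQ (cc := detCost P g γ (p dstar) k) ?_ ?_
      · intro s
        have hb := MDX.serJ_bellman hx0 hx1 (hMst wstar hwstar_mem)
          (habs_blockCost wstar hwstar_mem) s
        simp only [hJk_serJ]
        rw [hb]
        rw [hcorstar, hbcstar s]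
      · intro s
        have hb := MDX.serJ_bellman_pow hγ0.le hγ1 (hKst (p dstar)) (habs_g (p dstar)) k s
        simp only [mdx_detJ_eq_serJ]
        rw [hb, hxdef]
        simp only [detCost]
    have hFstar : JkInit P g γ p wstar k μ = detJInit P g γ (p dstar) μ := by
      rw [JkInit, detJInit]
      exact Finset.sum_congr rfl fun s _ => by rw [hJkstar s]
    -- head-tail bounds : claim (i) ingredients
    have hheadJk : ∀ w : D → ℝ, w ∈ stdSimplex ℝ D → ∀ s : S,
        |Jk P g γ p w k s - blockCost P g γ p w k s| ≤ x * G := by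
      intro w hw s
      have hb := MDX.serJ_bellman hx0 hx1 (hMst w hw) (habs_blockCost w hw) s
      rw [hJk_serJ w s, hb]
      have hd : |∑ l, corKernel P p w k s l
          * MDX.serJ x (corKernel P p w k) (blockCost P g γ p w k) l| ≤ G :=
        (hMst w hw).dot_abs_le (fun l => habs_JkserJ w hw l) s
      rw [show blockCost P g γ p w k s + x * ∑ l, corKernel P p w k s l
          * MDX.serJ x (corKernel P p w k) (blockCost P g γ p w k) l
          - blockCost P g γ p w k s
        = x * ∑ l, corKernel P p w k s l
          * MDX.serJ x (corKernel P p w k) (blockCost P g γ p w k) l from by ring]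
      rw [abs_mul, abs_of_nonneg hx0]
      exact mul_le_mul_of_nonneg_left hd hx0
    have hheaddetJ : ∀ (pol : S → A) (s : S),
        |detJ P g γ pol s - detCost P g γ pol k s| ≤ x * G := by
      intro pol s
      have hb := MDX.serJ_bellman_pow hγ0.le hγ1 (hKst pol) (habs_g pol) k s
      have hhead : (∑ t ∈ Finset.range k, γ ^ t
          * ∑ s', (detKernel P pol ^ t) s s' * g s' (pol s')) = detCost P g γ pol k s := by
        rw [detCost]
      rw [mdx_detJ_eq_serJ, hb, hhead]
      have hd : |∑ l, (detKernel P pol ^ k) s l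
          * MDX.serJ γ (detKernel P pol) (fun s' => g s' (pol s')) l| ≤ G := by
        refine ((hKst pol).pow k).dot_abs_le (fun l => ?_) s
        rw [← mdx_detJ_eq_serJ]
        exact habs_detJ pol l
      have hrw2 : detCost P g γ pol k s + γ ^ k * ∑ l, (detKernel P pol ^ k) s l
            * MDX.serJ γ (detKernel P pol) (fun s' => g s' (pol s')) l
            - detCost P g γ pol k s
          = x * ∑ l, (detKernel P pol ^ k) s l
            * MDX.serJ γ (detKernel P pol) (fun s' => g s' (pol s')) l := by
        rw [hxdef]
        ring
      rw [hrw2, abs_mul, abs_of_nonneg hx0]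
      exact mul_le_mul_of_nonneg_left hd hx0
    -- claim (i) at W T
    have hclaimi : ∑ d, W T d * detJInit P g γ (p d) μ
        ≤ JkInit P g γ p (W T) k μ + 2 * (x * G) := by
      have hpt : ∀ s : S, ∑ d, W T d * detJ P g γ (p d) s - Jk P g γ p (W T) k s
          ≤ 2 * (x * G) := by
        intro s
        have h1 : ∑ d, W T d * detJ P g γ (p d) s - blockCost P g γ p (W T) k s ≤ x * G := by
          have he : ∑ d, W T d * detJ P g γ (p d) s - blockCost P g γ p (W T) k s
              = ∑ d, W T d * (detJ P g γ (p d) s - detCost P g γ (p d) k s) := by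
            rw [blockCost, ← Finset.sum_sub_distrib]
            exact Finset.sum_congr rfl fun d _ => by ring
          rw [he]
          exact le_trans (le_abs_self _)
            (MDX.simplex_dot_abs_le (hWmem T) (fun d => hheaddetJ (p d) s))
        have h2 : blockCost P g γ p (W T) k s - Jk P g γ p (W T) k s ≤ x * G := by
          have := hheadJk (W T) (hWmem T) s
          linarith [abs_le.1 this |>.1]
        linarith
      have hswap : ∑ d, W T d * detJInit P g γ (p d) μ
          = ∑ s, μ s * ∑ d, W T d * detJ P g γ (p d) s := by
        simp only [detJInit, Finset.mul_sum]
        rw [Finset.sum_comm]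
        exact Finset.sum_congr rfl fun s _ => Finset.sum_congr rfl fun d _ => by ring
      have hmusum : ∑ s, μ s * (∑ d, W T d * detJ P g γ (p d) s - Jk P g γ p (W T) k s)
          ≤ 2 * (x * G) := by
        calc ∑ s, μ s * (∑ d, W T d * detJ P g γ (p d) s - Jk P g γ p (W T) k s)
            ≤ ∑ s, μ s * (2 * (x * G)) := by
              exact Finset.sum_le_sum fun s _ =>
                mul_le_mul_of_nonneg_left (hpt s) (hμ.1 s)
          _ = 2 * (x * G) := by rw [← Finset.sum_mul, hμ.2, one_mul]
      have hexp : ∑ s, μ s * (∑ d, W T d * detJ P g γ (p d) s - Jk P g γ p (W T) k s)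
          = (∑ s, μ s * ∑ d, W T d * detJ P g γ (p d) s) - JkInit P g γ p (W T) k μ := by
        rw [JkInit, ← Finset.sum_sub_distrib]
        exact Finset.sum_congr rfl fun s _ => by ring
      rw [hswap]
      rw [hexp] at hmusum
      linarith
    -- the error constant
    have hEEle : x * ((1 - x)⁻¹ * (4 * G)) ≤ 6 * (x * G) := by
      have h23 : (2:ℝ)/3 ≤ 1 - x := by linarith
      have h32 : (1 - x)⁻¹ ≤ 3/2 := by
        have := inv_anti₀ (by norm_num : (0:ℝ) < 2/3) h23
        simpa using this
      calc x * ((1 - x)⁻¹ * (4 * G)) ≤ x * (3/2 * (4 * G)) := by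
            refine mul_le_mul_of_nonneg_left ?_ hx0
            exact mul_le_mul_of_nonneg_right h32 (by linarith)
        _ = 6 * (x * G) := by ring
    -- K2 : value inequality along the segment towards wstar
    have hvalue : ∀ w : D → ℝ, w ∈ stdSimplex ℝ D → ∀ α : ℝ, α ∈ Set.Ioc (0:ℝ) 1 →
        JkInit P g γ p (w + α • (wstar - w)) k μ - JkInit P g γ p w k μ
          ≤ α * ((JkInit P g γ p wstar k μ - JkInit P g γ p w k μ)
              + x * ((1 - x)⁻¹ * (4 * G))) := by
      intro w hw α hα
      set wα := w + α • (wstar - w) with hwαdef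
      have hwαd : ∀ d, wα d = w d + α * (wstar d - w d) := fun d => rfl
      have hwαmem : wα ∈ stdSimplex ℝ D := by
        have hcvx := convex_stdSimplex ℝ D
        have h2 := hcvx hw hwstar_mem (by linarith [hα.2] : (0:ℝ) ≤ 1 - α)
          (le_of_lt hα.1) (by ring)
        have heq : wα = (1 - α) • w + α • wstar := by
          funext d
          simp only [hwαd d, Pi.add_apply, Pi.smul_apply, smul_eq_mul]
          ring
        rw [heq]
        exact h2
      set Mw := corKernel P p w k with hMwdef
      set Ms := corKernel P p wstar k with hMsdef
      set Mα := corKernel P p wα k with hMαdef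
      set cw := blockCost P g γ p w k with hcwdef
      set cs := blockCost P g γ p wstar k with hcsdef
      set cα := blockCost P g γ p wα k with hcαdef
      set Jw := MDX.serJ x Mw cw with hJwdef
      have hJwJk : ∀ s, Jk P g γ p w k s = Jw s := fun s => hJk_serJ w s
      have hJwbell : ∀ s, Jw s = cw s + x * ∑ l, Mw s l * Jw l := fun s =>
        MDX.serJ_bellman hx0 hx1 (hMst w hw) (habs_blockCost w hw) s
      have habsJw : ∀ s, |Jw s| ≤ G := fun s => habs_JkserJ w hw s
      set Af := fun s => cs s + x * ∑ l, Ms s l * Jw l - Jw s with hAfdef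
      have habsAf : ∀ s, |Af s| ≤ 2 * G := by
        intro s
        have h1 : |cs s| ≤ (1 - x) * G := habs_blockCost wstar hwstar_mem s
        have h2 : |∑ l, Ms s l * Jw l| ≤ G :=
          (hMst wstar hwstar_mem).dot_abs_le habsJw s
        have h3 : |Jw s| ≤ G := habsJw s
        have h4 : |x * ∑ l, Ms s l * Jw l| ≤ x * G := by
          rw [abs_mul, abs_of_nonneg hx0]
          exact mul_le_mul_of_nonneg_left h2 hx0
        calc |Af s| = |cs s + x * ∑ l, Ms s l * Jw l - Jw s| := rfl
          _ ≤ |cs s + x * ∑ l, Ms s l * Jw l| + |Jw s| := abs_sub _ _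
          _ ≤ |cs s| + |x * ∑ l, Ms s l * Jw l| + |Jw s| := by
              linarith [abs_add_le (cs s) (x * ∑ l, Ms s l * Jw l)]
          _ ≤ 2 * G := by linarith
      -- linearity of cost and kernel along the segment
      have hcα : ∀ s, cα s = cw s + α * (cs s - cw s) := by
        intro s
        have hterm : ∀ d : D, wα d * detCost P g γ (p d) k s
            = w d * detCost P g γ (p d) k s
              + α * (wstar d * detCost P g γ (p d) k s - w d * detCost P g γ (p d) k s) := by
          intro d
          rw [hwαd d]
          ring
        rw [hcαdef, hcwdef, hcsdef]
        rw [blockCost, blockCost, blockCost]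
        rw [Finset.sum_congr rfl fun d _ => hterm d, Finset.sum_add_distrib,
          ← Finset.mul_sum, Finset.sum_sub_distrib]
      have hMα : ∀ s l, Mα s l = Mw s l + α * (Ms s l - Mw s l) := by
        intro s l
        have hterm : ∀ d : D, wα d * (detKernel P (p d) ^ k) s l
            = w d * (detKernel P (p d) ^ k) s l
              + α * (wstar d * (detKernel P (p d) ^ k) s l
                - w d * (detKernel P (p d) ^ k) s l) := by
          intro d
          rw [hwαd d]
          ring
        rw [hMαdef, hMwdef, hMsdef]
        simp only [corKernel, Matrix.sum_apply, Matrix.smul_apply, smul_eq_mul]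
        rw [Finset.sum_congr rfl fun d _ => hterm d, Finset.sum_add_distrib,
          ← Finset.mul_sum, Finset.sum_sub_distrib]
      -- the shifted cost equals α • Af
      have hu : ∀ s, cα s + x * ∑ l, Mα s l * Jw l - Jw s = α * Af s := by
        intro s
        have h1 : ∑ l, Mα s l * Jw l
            = ∑ l, Mw s l * Jw l + α * (∑ l, Ms s l * Jw l - ∑ l, Mw s l * Jw l) := by
          have hterm : ∀ l, Mα s l * Jw l
              = Mw s l * Jw l + α * (Ms s l * Jw l - Mw s l * Jw l) := by
            intro l
            rw [hMα s l]
            ring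
          rw [Finset.sum_congr rfl fun l _ => hterm l, Finset.sum_add_distrib,
            ← Finset.mul_sum, Finset.sum_sub_distrib]
        have hcw : cw s = Jw s - x * ∑ l, Mw s l * Jw l := by linarith [hJwbell s]
        rw [hcα s, h1, hAfdef, hcw]
        ring
      -- exact identities for the value differences
      have hstep1 : ∀ s, Jk P g γ p wα k s - Jw s = α * MDX.serJ x Mα Af s := by
        intro s
        have hsh := MDX.serJ_shift hx0 hx1 (hMst wα hwαmem)
          (habs_blockCost wα hwαmem) habsJw s
        rw [hJk_serJ wα s]
        rw [← hsh]
        have hfun : (fun s => cα s + x * ∑ l, Mα s l * Jw l - Jw s)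
            = fun s => α * Af s := funext hu
        rw [hfun, MDX.serJ_const_mul]
      have hstep2 : ∀ s, Jk P g γ p wstar k s - Jw s = MDX.serJ x Ms Af s := by
        intro s
        have hsh := MDX.serJ_shift hx0 hx1 (hMst wstar hwstar_mem)
          (habs_blockCost wstar hwstar_mem) habsJw s
        rw [hJk_serJ wstar s]
        rw [← hsh]
      -- per-state comparison of the two series
      have hdiffb : ∀ s, MDX.serJ x Mα Af s ≤ MDX.serJ x Ms Af s
          + x * ((1 - x)⁻¹ * (4 * G)) := by
        intro s
        have hbd := MDX.serJ_diff_bound hx0 hx1 (hMst wα hwαmem) (hMst wstar hwstar_mem)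
          habsAf s
        have h2 : x * ((1 - x)⁻¹ * (2 * (2 * G))) = x * ((1 - x)⁻¹ * (4 * G)) := by ring
        rw [h2] at hbd
        linarith [abs_le.1 hbd |>.2]
      -- average over μ
      have hFdiff1 : JkInit P g γ p wα k μ - JkInit P g γ p w k μ
          = ∑ s, μ s * (α * MDX.serJ x Mα Af s) := by
        rw [JkInit, JkInit, ← Finset.sum_sub_distrib]
        refine Finset.sum_congr rfl fun s _ => ?_
        have := hstep1 s
        rw [hJwJk s]
        have h3 : Jk P g γ p wα k s - Jw s = α * MDX.serJ x Mα Af s := this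
        rw [← mul_sub]
        rw [h3]
      have hFdiff2 : JkInit P g γ p wstar k μ - JkInit P g γ p w k μ
          = ∑ s, μ s * MDX.serJ x Ms Af s := by
        rw [JkInit, JkInit, ← Finset.sum_sub_distrib]
        refine Finset.sum_congr rfl fun s _ => ?_
        rw [hJwJk s, ← mul_sub, hstep2 s]
      rw [hFdiff1]
      calc ∑ s, μ s * (α * MDX.serJ x Mα Af s)
          ≤ ∑ s, μ s * (α * (MDX.serJ x Ms Af s + x * ((1 - x)⁻¹ * (4 * G)))) := by
            refine Finset.sum_le_sum fun s _ => ?_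
            exact mul_le_mul_of_nonneg_left
              (mul_le_mul_of_nonneg_left (hdiffb s) hα.1.le) (hμ.1 s)
        _ = α * ((∑ s, μ s * MDX.serJ x Ms Af s) + x * ((1 - x)⁻¹ * (4 * G))) := by
            have hterm : ∀ s : S, μ s * (α * (MDX.serJ x Ms Af s + x * ((1 - x)⁻¹ * (4 * G))))
                = α * (μ s * MDX.serJ x Ms Af s) + α * (x * ((1 - x)⁻¹ * (4 * G))) * μ s := by
              intro s
              ring
            rw [Finset.sum_congr rfl fun s _ => hterm s, Finset.sum_add_distrib,
              ← Finset.mul_sum, ← Finset.mul_sum, hμ.2]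
            ring
        _ = α * ((JkInit P g γ p wstar k μ - JkInit P g γ p w k μ)
              + x * ((1 - x)⁻¹ * (4 * G))) := by rw [hFdiff2]
    -- K3 : gradient bound via slope
    have hgrad : ∀ w : D → ℝ, w ∈ stdSimplex ℝ D →
        fderiv ℝ (fun w : D → ℝ => JkInit P g γ p w k μ) w (wstar - w)
          ≤ (JkInit P g γ p wstar k μ - JkInit P g γ p w k μ)
            + x * ((1 - x)⁻¹ * (4 * G)) := by
      intro w hw
      have hD := MDX.hasDerivAt_comp_line
        (f := fun w : D → ℝ => JkInit P g γ p w k μ) (hdiff w) (wstar - w)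
      refine MDX.deriv_le_of_slope hD ?_
      intro s hs
      have h := hvalue w hw s hs
      have h0 : w + (0:ℝ) • (wstar - w) = w := by simp
      show JkInit P g γ p (w + s • (wstar - w)) k μ
          - JkInit P g γ p (w + (0:ℝ) • (wstar - w)) k μ
        ≤ s * ((JkInit P g γ p wstar k μ - JkInit P g γ p w k μ)
            + x * ((1 - x)⁻¹ * (4 * G)))
      rw [h0]
      exact h
    -- K4 : three point inequality from the step optimality
    have hthree : ∀ t : ℕ, ∀ y : D → ℝ, y ∈ stdSimplex ℝ D →
        fderiv ℝ (fun w : D → ℝ => JkInit P g γ p w k μ) (W t) (W (t+1))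
          - fderiv ℝ (fun w : D → ℝ => JkInit P g γ p w k μ) (W t) y
        ≤ (β / lam) * (bregD Φ y (W t) - bregD Φ y (W (t+1))
            - bregD Φ (W (t+1)) (W t)) := by
      intro t y hy
      set L1 := fderiv ℝ (fun w : D → ℝ => JkInit P g γ p w k μ) (W t) with hL1def
      set Φ0 := fderiv ℝ Φ (W t) with hΦ0def
      set Φ1 := fderiv ℝ Φ (W (t+1)) with hΦ1def
      set v := y - W (t+1) with hvdef
      set cp := fun s : ℝ => W (t+1) + s • v with hcpdef
      have hcp0 : cp 0 = W (t+1) := by rw [hcpdef]; simp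
      have hc : HasDerivAt cp v 0 := MDX.hasDerivAt_affine (W (t+1)) v 0
      have hd1 : HasDerivAt (fun s => L1 (cp s)) (L1 v) 0 := by
        have h := (L1.hasFDerivAt (x := cp 0)).comp_hasDerivAt 0 hc
        exact h
      have hd2 : HasDerivAt (fun s => Φ (cp s)) (Φ1 v) 0 := by
        have h := ((hΦ (cp 0)).hasFDerivAt).comp_hasDerivAt 0 hc
        rw [hcp0] at h
        exact h
      have hd3 : HasDerivAt (fun s => Φ0 (cp s - W t)) (Φ0 v) 0 := by
        have hcsub : HasDerivAt (fun s => cp s - W t) v 0 := hc.sub_const (W t)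
        have h := (Φ0.hasFDerivAt (x := cp 0 - W t)).comp_hasDerivAt 0 hcsub
        exact h
      have hψ : HasDerivAt
          (fun s => L1 (cp s) + (β / lam) * (Φ (cp s) - Φ (W t) - Φ0 (cp s - W t)))
          (L1 v + (β / lam) * (Φ1 v - Φ0 v)) 0 := by
        have h := hd1.add ((((hd2.sub_const (Φ (W t))).sub hd3)).const_mul (β / lam))
        exact h
      have hmin : 0 ≤ L1 v + (β / lam) * (Φ1 v - Φ0 v) := by
        refine MDX.deriv_nonneg_of_slope hψ ?_
        intro s hs
        have hmem : cp s ∈ stdSimplex ℝ D := by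
          have hcvx := convex_stdSimplex ℝ D
          have h2 := hcvx (hWmem (t+1)) hy (by linarith [hs.2] : (0:ℝ) ≤ 1 - s)
            (le_of_lt hs.1) (by ring)
          have heq : cp s = (1 - s) • W (t+1) + s • y := by
            funext d
            rw [hcpdef]
            simp only [Pi.add_apply, Pi.smul_apply, Pi.sub_apply, smul_eq_mul, hvdef]
            ring
          rw [heq]
          exact h2
        have h2 := (hstep t).2 (cp s) hmem
        simp only [bregD] at h2
        show L1 (cp 0) + (β / lam) * (Φ (cp 0) - Φ (W t) - Φ0 (cp 0 - W t))
          ≤ L1 (cp s) + (β / lam) * (Φ (cp s) - Φ (W t) - Φ0 (cp s - W t))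
        rw [hcp0]
        rw [← hL1def, ← hΦ0def] at h2
        linarith
      have hid : bregD Φ y (W t) - bregD Φ y (W (t+1)) - bregD Φ (W (t+1)) (W t)
          = Φ1 v - Φ0 v := by
        simp only [bregD, ← hΦ0def, ← hΦ1def, hvdef]
        rw [map_sub Φ0 y (W t), map_sub Φ1 y (W (t+1)), map_sub Φ0 (W (t+1)) (W t),
          map_sub Φ0 y (W (t+1))]
        ring
      have hLv : L1 (W (t+1)) - L1 y = -(L1 v) := by
        rw [hvdef, map_sub]
        ring
      rw [hid, hLv]
      linarith
    -- K5 : descent inequality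
    have hdescent : ∀ t : ℕ, ∀ y : D → ℝ, y ∈ stdSimplex ℝ D →
        JkInit P g γ p (W (t+1)) k μ ≤ JkInit P g γ p (W t) k μ
          + (fderiv ℝ (fun w : D → ℝ => JkInit P g γ p w k μ) (W t) y
            - fderiv ℝ (fun w : D → ℝ => JkInit P g γ p w k μ) (W t) (W t))
          + (β / lam) * (bregD Φ y (W t) - bregD Φ y (W (t+1))) := by
      intro t y hy
      have hsm := hsmooth (W t) (hWmem t) (W (t+1)) (hWmem (t+1))
      have hstrong := hbreg (W (t+1)) (W t) (hWmem (t+1)) (hWmem t)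
      have hsq : β / 2 * nrm (W (t+1) - W t) ^ 2
          ≤ (β / lam) * bregD Φ (W (t+1)) (W t) := by
        have heq : β / 2 * nrm (W (t+1) - W t) ^ 2
            = (β / lam) * (lam / 2 * nrm (W (t+1) - W t) ^ 2) := by
          field_simp
        rw [heq]
        exact mul_le_mul_of_nonneg_left hstrong (div_nonneg hβ.le hlam.le)
      have h3 := hthree t y hy
      have hsplit : fderiv ℝ (fun w : D → ℝ => JkInit P g γ p w k μ) (W t) (W (t+1) - W t)
          = (fderiv ℝ (fun w : D → ℝ => JkInit P g γ p w k μ) (W t) (W (t+1))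
              - fderiv ℝ (fun w : D → ℝ => JkInit P g γ p w k μ) (W t) y)
            + (fderiv ℝ (fun w : D → ℝ => JkInit P g γ p w k μ) (W t) y
              - fderiv ℝ (fun w : D → ℝ => JkInit P g γ p w k μ) (W t) (W t)) := by
        rw [map_sub]
        ring
      rw [hsplit] at hsm
      linarith
    -- K6 : per-step progress
    have hper : ∀ t : ℕ, JkInit P g γ p (W (t+1)) k μ - JkInit P g γ p wstar k μ
        ≤ x * ((1 - x)⁻¹ * (4 * G))
          + (β / lam) * (bregD Φ wstar (W t) - bregD Φ wstar (W (t+1))) := by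
      intro t
      have hd := hdescent t wstar hwstar_mem
      have hg1 : fderiv ℝ (fun w : D → ℝ => JkInit P g γ p w k μ) (W t) wstar
          - fderiv ℝ (fun w : D → ℝ => JkInit P g γ p w k μ) (W t) (W t)
          = fderiv ℝ (fun w : D → ℝ => JkInit P g γ p w k μ) (W t) (wstar - W t) := by
        rw [map_sub]
      have hg2 := hgrad (W t) (hWmem t)
      rw [hg1] at hd
      linarith
    -- K7 : monotone decrease
    have hmono : ∀ t : ℕ, JkInit P g γ p (W (t+1)) k μ ≤ JkInit P g γ p (W t) k μ := by
      intro t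
      have hd := hdescent t (W t) (hWmem t)
      have h0 : bregD Φ (W t) (W t) = 0 := by
        simp [bregD]
      have h1 : 0 ≤ bregD Φ (W t) (W (t+1)) := hbreg0 (W t) (W (t+1)) (hWmem t) (hWmem (t+1))
      have hbl : (0:ℝ) ≤ β / lam := div_nonneg hβ.le hlam.le
      have h2 : (β / lam) * (bregD Φ (W t) (W t) - bregD Φ (W t) (W (t+1))) ≤ 0 := by
        rw [h0]
        have := mul_le_mul_of_nonneg_left (by linarith : 0 - bregD Φ (W t) (W (t+1)) ≤ 0) hbl
        simpa using this
      have h3 : fderiv ℝ (fun w : D → ℝ => JkInit P g γ p w k μ) (W t) (W t)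
          - fderiv ℝ (fun w : D → ℝ => JkInit P g γ p w k μ) (W t) (W t) = 0 := sub_self _
      linarith
    -- K8 : telescoping
    have hsum : ∀ n : ℕ, ∑ t ∈ Finset.range n,
        (JkInit P g γ p (W (t+1)) k μ - JkInit P g γ p wstar k μ)
        ≤ n * (x * ((1 - x)⁻¹ * (4 * G)))
          + (β / lam) * (bregD Φ wstar (W 0) - bregD Φ wstar (W n)) := by
      intro n
      induction n with
      | zero => simp
      | succ m ih =>
          rw [Finset.sum_range_succ]
          have hp := hper m
          push_cast
          push_cast at ih
          linarith
    have hanti : Antitone (fun t => JkInit P g γ p (W t) k μ) :=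
      antitone_nat_of_succ_le hmono
    have hfinal_md : JkInit P g γ p (W T) k μ - JkInit P g γ p wstar k μ
        ≤ x * ((1 - x)⁻¹ * (4 * G)) + 1 / (T:ℝ) * (β / lam) * bregD Φ wstar (W 0) := by
      have hcard : (T:ℝ) * (JkInit P g γ p (W T) k μ - JkInit P g γ p wstar k μ)
          ≤ ∑ t ∈ Finset.range T,
            (JkInit P g γ p (W (t+1)) k μ - JkInit P g γ p wstar k μ) := by
        have hle : ∀ t ∈ Finset.range T,
            JkInit P g γ p (W T) k μ - JkInit P g γ p wstar k μ
            ≤ JkInit P g γ p (W (t+1)) k μ - JkInit P g γ p wstar k μ := by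
          intro t ht
          have := hanti (Nat.succ_le_of_lt (Finset.mem_range.1 ht))
          simp only [] at this
          linarith
        calc (T:ℝ) * (JkInit P g γ p (W T) k μ - JkInit P g γ p wstar k μ)
            = ∑ _t ∈ Finset.range T,
              (JkInit P g γ p (W T) k μ - JkInit P g γ p wstar k μ) := by
              rw [Finset.sum_const, Finset.card_range, nsmul_eq_mul]
          _ ≤ _ := Finset.sum_le_sum hle
      have hDT := hbreg0 wstar (W T) hwstar_mem (hWmem T)
      have h2 := hsum T
      have hb : (β / lam) * (bregD Φ wstar (W 0) - bregD Φ wstar (W T))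
          ≤ (β / lam) * bregD Φ wstar (W 0) := by
        have h4 : 0 ≤ (β / lam) * bregD Φ wstar (W T) :=
          mul_nonneg (div_nonneg hβ.le hlam.le) hDT
        rw [mul_sub]
        linarith
      have h3 : (T:ℝ) * (JkInit P g γ p (W T) k μ - JkInit P g γ p wstar k μ)
          ≤ (T:ℝ) * (x * ((1 - x)⁻¹ * (4 * G))) + (β / lam) * bregD Φ wstar (W 0) := by
        calc (T:ℝ) * (JkInit P g γ p (W T) k μ - JkInit P g γ p wstar k μ)
            ≤ ∑ t ∈ Finset.range T,
              (JkInit P g γ p (W (t+1)) k μ - JkInit P g γ p wstar k μ) := hcard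
          _ ≤ (T:ℝ) * (x * ((1 - x)⁻¹ * (4 * G)))
              + (β / lam) * (bregD Φ wstar (W 0) - bregD Φ wstar (W T)) := h2
          _ ≤ (T:ℝ) * (x * ((1 - x)⁻¹ * (4 * G))) + (β / lam) * bregD Φ wstar (W 0) := by
              linarith
      have h5 : JkInit P g γ p (W T) k μ - JkInit P g γ p wstar k μ
          ≤ ((T:ℝ) * (x * ((1 - x)⁻¹ * (4 * G))) + (β / lam) * bregD Φ wstar (W 0)) / T := by
        rw [le_div_iff₀ hTpos]
        calc (JkInit P g γ p (W T) k μ - JkInit P g γ p wstar k μ) * T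
            = (T:ℝ) * (JkInit P g γ p (W T) k μ - JkInit P g γ p wstar k μ) := by ring
          _ ≤ _ := h3
      have h6 : ((T:ℝ) * (x * ((1 - x)⁻¹ * (4 * G))) + (β / lam) * bregD Φ wstar (W 0)) / T
          = x * ((1 - x)⁻¹ * (4 * G)) + 1 / (T:ℝ) * (β / lam) * bregD Φ wstar (W 0) := by
        field_simp
      rw [h6] at h5
      exact h5
    -- final assembly
    have hmain : ∑ d, W T d * detJInit P g γ (p d) μ - detJInit P g γ (p dstar) μ
        ≤ 2 * (x * G) + x * ((1 - x)⁻¹ * (4 * G))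
          + 1 / (T:ℝ) * (β / lam) * bregD Φ wstar (W 0) := by
      have h1 := hclaimi
      have h2 := hfinal_md
      rw [hFstar] at h2
      linarith
    rw [hRHSeq]
    have h8 : 2 * (x * G) + x * ((1 - x)⁻¹ * (4 * G)) ≤ 8 * (x * G) := by
      linarith [hEEle]
    linarith

end
end

section
/- Identify correlated policies with points of the simplex Δ(Π_det) and assume J^{π̃,k}(μ) is differentiable in π̃. For any two correlated policies π̃, π̃' ∈ Δ(Π_det), the directional derivative of J^{π̃,k}(μ) at π̃ in the direction π̃' − π̃ satisfies ∇_{π̃'−π̃} J^{π̃,k}(μ) ≤ (1/(1−γ^k)) · (J^{π̃',k}(μ) − J^{π̃,k}(μ)) + 6 γ^k g_max / ((1−γ^k)(1−γ)). (Approximate gradient dominance.) -/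
open Finset

noncomputable section

variable {S A D : Type*} [Fintype S] [Fintype A] [Fintype D] [DecidableEq S]

section AuxAGD
open Matrix NNReal
set_option linter.unusedSectionVars false
attribute [local instance] Matrix.linftyOpNormedAddCommGroup Matrix.linftyOpNormedSpace
  Matrix.linftyOpNormedRing Matrix.linftyOpNormedAlgebra

/-- Row-stochastic matrix. -/
def IsStoch (X : Matrix S S ℝ) : Prop := (∀ i j, 0 ≤ X i j) ∧ ∀ i, ∑ j, X i j = 1

lemma IsStoch.one : IsStoch (1 : Matrix S S ℝ) := by
  constructor
  · intro i j
    rw [Matrix.one_apply]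
    positivity
  · intro i; simp [Matrix.one_apply]

lemma IsStoch.mul {X Y : Matrix S S ℝ} (hX : IsStoch X) (hY : IsStoch Y) : IsStoch (X * Y) := by
  constructor
  · intro i j
    rw [Matrix.mul_apply]
    exact Finset.sum_nonneg fun c _ => mul_nonneg (hX.1 i c) (hY.1 c j)
  · intro i
    simp_rw [Matrix.mul_apply]
    calc ∑ j, ∑ c, X i c * Y c j = ∑ c, ∑ j, X i c * Y c j := Finset.sum_comm
      _ = ∑ c, X i c * ∑ j, Y c j := by simp_rw [Finset.mul_sum]
      _ = 1 := by simp_rw [hY.2]; simpa using hX.2 i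

lemma IsStoch.pow {X : Matrix S S ℝ} (hX : IsStoch X) (m : ℕ) : IsStoch (X ^ m) := by
  induction m with
  | zero => simpa using IsStoch.one
  | succ n ih => rw [pow_succ]; exact ih.mul hX

lemma isStoch_detKernel {P : S → A → S → ℝ} (hP : ∀ s a, (∀ s', 0 ≤ P s a s') ∧ ∑ s', P s a s' = 1)
    (pol : S → A) : IsStoch (detKernel P pol) :=
  ⟨fun i j => (hP i (pol i)).1 j, fun i => (hP i (pol i)).2⟩

lemma isStoch_combo {X : D → Matrix S S ℝ} (hX : ∀ d, IsStoch (X d)) {v : D → ℝ}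
    (hv : v ∈ stdSimplex ℝ D) : IsStoch (∑ d, v d • X d) := by
  constructor
  · intro i j
    rw [Matrix.sum_apply]
    exact Finset.sum_nonneg fun d _ => by
      simpa using mul_nonneg (hv.1 d) ((hX d).1 i j)
  · intro i
    simp_rw [Matrix.sum_apply, Matrix.smul_apply, smul_eq_mul]
    rw [Finset.sum_comm]
    calc ∑ d, ∑ j, v d * X d i j = ∑ d, v d * ∑ j, X d i j := by
          simp [Finset.mul_sum]
      _ = 1 := by simp_rw [(hX _).2]; simpa using hv.2

lemma IsStoch.norm_le {X : Matrix S S ℝ} (hX : IsStoch X) : ‖X‖ ≤ 1 := by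
  rw [Matrix.linfty_opNorm_def]
  have h : ∀ i, (∑ j, ‖X i j‖₊ : ℝ≥0) ≤ 1 := by
    intro i
    apply le_of_eq
    have : ((∑ j, ‖X i j‖₊ : ℝ≥0) : ℝ) = 1 := by
      push_cast
      rw [← hX.2 i]
      exact Finset.sum_congr rfl fun j _ => abs_of_nonneg (hX.1 i j)
    exact_mod_cast this
  exact_mod_cast Finset.sup_le fun i _ => h i

lemma entry_le_norm (X : Matrix S S ℝ) (i j : S) : |X i j| ≤ ‖X‖ := by
  rw [Matrix.linfty_opNorm_def]
  have h0 : ‖X i j‖₊ ≤ ∑ j', ‖X i j'‖₊ :=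
    Finset.single_le_sum (f := fun j' => ‖X i j'‖₊) (fun _ _ => zero_le) (Finset.mem_univ j)
  have h1 : ‖X i j‖₊ ≤ Finset.univ.sup fun i => ∑ j, ‖X i j‖₊ :=
    le_trans h0 (Finset.le_sup (f := fun i => ∑ j', ‖X i j'‖₊) (Finset.mem_univ i))
  calc |X i j| = (‖X i j‖₊ : ℝ) := by rw [coe_nnnorm, Real.norm_eq_abs]
    _ ≤ _ := by exact_mod_cast h1

/-- Entry evaluation as a continuous linear map (w.r.t. the `L∞`-op norm). -/
def entryCLM (i j : S) : Matrix S S ℝ →L[ℝ] ℝ :=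
  LinearMap.mkContinuous
    { toFun := fun X => X i j, map_add' := fun _ _ => rfl, map_smul' := fun _ _ => rfl } 1
    (fun X => by rw [one_mul, Real.norm_eq_abs]; exact entry_le_norm X i j)

@[simp] lemma entryCLM_apply (i j : S) (X : Matrix S S ℝ) : entryCLM i j X = X i j := rfl

lemma hasSum_inv_entry (X : Matrix S S ℝ) (h : ‖X‖ < 1) (i j : S) :
    HasSum (fun m => (X ^ m) i j) (Ring.inverse (1 - X) i j) := by
  simpa using (hasSum_geom_series_inverse X h).mapL (entryCLM i j)

lemma one_sub_mul_inv (X : Matrix S S ℝ) (h : ‖X‖ < 1) :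
    (1 - X) * Ring.inverse (1 - X) = 1 :=
  Ring.mul_inverse_cancel _ (isUnit_one_sub_of_norm_lt_one h)

lemma inv_mul_one_sub (X : Matrix S S ℝ) (h : ‖X‖ < 1) :
    Ring.inverse (1 - X) * (1 - X) = 1 :=
  Ring.inverse_mul_cancel _ (isUnit_one_sub_of_norm_lt_one h)

lemma smul_norm_lt_one {X : Matrix S S ℝ} (hX : IsStoch X) {β : ℝ} (hβ0 : 0 ≤ β) (hβ1 : β < 1) :
    ‖β • X‖ < 1 := by
  rw [norm_smul, Real.norm_eq_abs, abs_of_nonneg hβ0]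
  calc β * ‖X‖ ≤ β * 1 := by nlinarith [hX.norm_le, norm_nonneg X]
    _ < 1 := by linarith

lemma inv_entry_nonneg {X : Matrix S S ℝ} (hX : IsStoch X) {β : ℝ} (hβ0 : 0 ≤ β) (hβ1 : β < 1)
    (i j : S) : 0 ≤ Ring.inverse (1 - β • X) i j := by
  have h := hasSum_inv_entry (β • X) (smul_norm_lt_one hX hβ0 hβ1) i j
  rw [← h.tsum_eq]
  refine tsum_nonneg fun m => ?_
  rw [smul_pow, Matrix.smul_apply, smul_eq_mul]
  exact mul_nonneg (pow_nonneg hβ0 m) ((hX.pow m).1 i j)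

lemma inv_row_sum {X : Matrix S S ℝ} (hX : IsStoch X) {β : ℝ} (hβ0 : 0 ≤ β) (hβ1 : β < 1)
    (i : S) : ∑ j, Ring.inverse (1 - β • X) i j = (1 - β)⁻¹ := by
  have h : HasSum (fun m => ∑ j, ((β • X) ^ m) i j) (∑ j, Ring.inverse (1 - β • X) i j) :=
    hasSum_sum fun j _ => hasSum_inv_entry (β • X) (smul_norm_lt_one hX hβ0 hβ1) i j
  have h2 : (fun m => ∑ j, ((β • X) ^ m) i j) = fun m => β ^ m := by
    funext m
    simp_rw [smul_pow, Matrix.smul_apply, smul_eq_mul, ← Finset.mul_sum, (hX.pow m).2 i, mul_one]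
  rw [h2] at h
  exact h.unique (hasSum_geometric_of_lt_one hβ0 hβ1)

lemma Jk_eq (P : S → A → S → ℝ) (g : S → A → ℝ) (γ : ℝ) (p : D → S → A) (v : D → ℝ) (k : ℕ)
    (hnorm : ‖γ ^ k • corKernel P p v k‖ < 1) (s : S) :
    Jk P g γ p v k s =
      ∑ t, Ring.inverse (1 - γ ^ k • corKernel P p v k) s t * blockCost P g γ p v k t := by
  have hentry : ∀ t, HasSum (fun m => γ ^ (m * k) * (corKernel P p v k ^ m) s t)
      (Ring.inverse (1 - γ ^ k • corKernel P p v k) s t) := by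
    intro t
    have := hasSum_inv_entry _ hnorm s t
    convert this using 2 with m
    rw [smul_pow, Matrix.smul_apply, smul_eq_mul, ← pow_mul, mul_comm k m]
  unfold Jk
  calc (∑' m : ℕ, γ ^ (m * k) * ∑ t, (corKernel P p v k ^ m) s t * blockCost P g γ p v k t)
      = ∑' m : ℕ, ∑ t, (γ ^ (m * k) * (corKernel P p v k ^ m) s t) * blockCost P g γ p v k t := by
        congr 1 with m
        rw [Finset.mul_sum]
        exact Finset.sum_congr rfl fun t _ => by ring
    _ = ∑ t, ∑' m : ℕ, (γ ^ (m * k) * (corKernel P p v k ^ m) s t) * blockCost P g γ p v k t := by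
        exact Summable.tsum_finsetSum fun t _ => ((hentry t).mul_right _).summable
    _ = _ := Finset.sum_congr rfl fun t _ => ((hentry t).mul_right _).tsum_eq

lemma abs_detCost_le {P : S → A → S → ℝ} {g : S → A → ℝ} {γ gmax : ℝ}
    (hP : ∀ s a, (∀ s', 0 ≤ P s a s') ∧ ∑ s', P s a s' = 1)
    (hg : ∀ s a, |g s a| ≤ gmax) (hγ0 : 0 ≤ γ) (pol : S → A) (k : ℕ) (s : S) :
    |detCost P g γ pol k s| ≤ (∑ t ∈ Finset.range k, γ ^ t) * gmax := by
  unfold detCost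
  refine le_trans (Finset.abs_sum_le_sum_abs _ _) ?_
  rw [Finset.sum_mul]
  refine Finset.sum_le_sum fun t _ => ?_
  rw [abs_mul, abs_pow, abs_of_nonneg hγ0]
  refine mul_le_mul_of_nonneg_left ?_ (pow_nonneg hγ0 t)
  have hst := (isStoch_detKernel hP pol).pow t
  refine le_trans (Finset.abs_sum_le_sum_abs _ _) ?_
  calc ∑ s', |(detKernel P pol ^ t) s s' * g s' (pol s')|
      ≤ ∑ s', (detKernel P pol ^ t) s s' * gmax := Finset.sum_le_sum fun s' _ => by
        rw [abs_mul]
        rw [abs_of_nonneg (hst.1 s s')]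
        exact mul_le_mul_of_nonneg_left (hg _ _) (hst.1 s s')
    _ = gmax := by rw [← Finset.sum_mul, hst.2 s, one_mul]

lemma abs_blockCost_le {P : S → A → S → ℝ} {g : S → A → ℝ} {γ gmax : ℝ} {p : D → S → A}
    (hP : ∀ s a, (∀ s', 0 ≤ P s a s') ∧ ∑ s', P s a s' = 1)
    (hg : ∀ s a, |g s a| ≤ gmax) (hγ0 : 0 ≤ γ) {v : D → ℝ} (hv : v ∈ stdSimplex ℝ D)
    (k : ℕ) (s : S) :
    |blockCost P g γ p v k s| ≤ (∑ t ∈ Finset.range k, γ ^ t) * gmax := by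
  unfold blockCost
  refine le_trans (Finset.abs_sum_le_sum_abs _ _) ?_
  calc ∑ d, |v d * detCost P g γ (p d) k s|
      ≤ ∑ d, v d * ((∑ t ∈ Finset.range k, γ ^ t) * gmax) := Finset.sum_le_sum fun d _ => by
        rw [abs_mul, abs_of_nonneg (hv.1 d)]
        exact mul_le_mul_of_nonneg_left (abs_detCost_le hP hg hγ0 _ _ _) (hv.1 d)
    _ = _ := by rw [← Finset.sum_mul, hv.2, one_mul]

end AuxAGD


section MainAGD
open Matrix NNReal ContinuousLinearMap
set_option linter.unusedSectionVars false
set_option maxHeartbeats 4000000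
attribute [local instance] Matrix.linftyOpNormedAddCommGroup Matrix.linftyOpNormedSpace
  Matrix.linftyOpNormedRing Matrix.linftyOpNormedAlgebra

/-- **Approximate gradient dominance.** Identifying correlated policies with points of
the simplex `Δ(Π_det)`, for any two correlated policies `w, w' ∈ Δ(Π_det)` the
directional derivative of `π̃ ↦ J^{π̃,k}(μ)` at `w` in the direction `w' − w` satisfies
`∇_{π̃'−π̃} J^{π̃,k}(μ) ≤ (1/(1−γ^k))(J^{π̃',k}(μ) − J^{π̃,k}(μ)) + 6 γ^k g_max/((1−γ^k)(1−γ))`. -/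
theorem approximate_gradient_dominance
    (P : S → A → S → ℝ) (g : S → A → ℝ) (γ gmax : ℝ) (μ : S → ℝ)
    (p : D → S → A) (k : ℕ) (w w' : D → ℝ)
    (hP : ∀ s a, (∀ s', 0 ≤ P s a s') ∧ ∑ s', P s a s' = 1)
    (hg : ∀ s a, |g s a| ≤ gmax)
    (hγ0 : 0 < γ) (hγ1 : γ < 1)
    (hμ : μ ∈ stdSimplex ℝ S)
    (hk : 1 ≤ k)
    (hw : w ∈ stdSimplex ℝ D) (hw' : w' ∈ stdSimplex ℝ D)
    (hdiff : DifferentiableAt ℝ (fun v : D → ℝ => JkInit P g γ p v k μ) w) :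
    fderiv ℝ (fun v : D → ℝ => JkInit P g γ p v k μ) w (w' - w) ≤
      (1 / (1 - γ ^ k)) * (JkInit P g γ p w' k μ - JkInit P g γ p w k μ) +
        6 * γ ^ k * gmax / ((1 - γ ^ k) * (1 - γ)) := by
  classical
  have hβ0 : (0:ℝ) < γ ^ k := pow_pos hγ0 k
  have hβ1 : γ ^ k < 1 := pow_lt_one₀ hγ0.le hγ1 (by omega)
  have h1β : (0:ℝ) < 1 - γ ^ k := by linarith
  have h1γ : (0:ℝ) < 1 - γ := by linarith
  have hSne : Nonempty S := by
    by_contra h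
    rw [not_nonempty_iff] at h
    have h2 := hμ.2
    rw [Finset.univ_eq_empty, Finset.sum_empty] at h2
    norm_num at h2
  have hDne : Nonempty D := by
    by_contra h
    rw [not_nonempty_iff] at h
    have h2 := hw.2
    rw [Finset.univ_eq_empty, Finset.sum_empty] at h2
    norm_num at h2
  obtain ⟨s₀⟩ := hSne
  obtain ⟨d₀⟩ := hDne
  have hgmax0 : 0 ≤ gmax := le_trans (abs_nonneg _) (hg s₀ (p d₀ s₀))
  -- stochasticity
  have hKst : ∀ d, IsStoch (detKernel P (p d) ^ k) := fun d => (isStoch_detKernel hP _).pow k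
  have hcor : ∀ v : D → ℝ, v ∈ stdSimplex ℝ D → IsStoch (corKernel P p v k) := fun v hv =>
    isStoch_combo hKst hv
  -- the continuous linear maps
  set Mm : (D → ℝ) →L[ℝ] Matrix S S ℝ :=
    ∑ d, (ContinuousLinearMap.proj d).smulRight (detKernel P (p d) ^ k) with hMmdef
  have hMm : ∀ v, Mm v = corKernel P p v k := by
    intro v
    simp [hMmdef, corKernel, ContinuousLinearMap.sum_apply]
  set Cc : (D → ℝ) →L[ℝ] Matrix S S ℝ :=
    ∑ d, (ContinuousLinearMap.proj d).smulRight
      (Matrix.of fun s _ => detCost P g γ (p d) k s) with hCcdef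
  have hCc : ∀ (v : D → ℝ) (s t : S), Cc v s t = blockCost P g γ p v k s := by
    intro v s t
    simp [hCcdef, blockCost, ContinuousLinearMap.sum_apply, Matrix.sum_apply]
  set Lμ : Matrix S S ℝ →L[ℝ] ℝ := ∑ s, μ s • entryCLM s s₀ with hLμdef
  have hLμ : ∀ X : Matrix S S ℝ, Lμ X = ∑ s, μ s * X s s₀ := by
    intro X
    simp [hLμdef, ContinuousLinearMap.sum_apply]
  -- norms
  have hnw : ‖γ ^ k • Mm w‖ < 1 := by
    rw [hMm]; exact smul_norm_lt_one (hcor w hw) hβ0.le hβ1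
  have hnw' : ‖γ ^ k • Mm w'‖ < 1 := by
    rw [hMm]; exact smul_norm_lt_one (hcor w' hw') hβ0.le hβ1
  -- inverse matrices
  set R : Matrix S S ℝ := Ring.inverse (1 - γ ^ k • Mm w) with hRdef
  set R' : Matrix S S ℝ := Ring.inverse (1 - γ ^ k • Mm w') with hR'def
  set Jmat : Matrix S S ℝ := R * Cc w with hJdef
  set Amat : Matrix S S ℝ := Cc w' + γ ^ k • (Mm w' * Jmat) with hAdef
  -- closed form on a neighborhood
  have hclosed : ∀ v : D → ℝ, ‖γ ^ k • Mm v‖ < 1 →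
      JkInit P g γ p v k μ = Lμ (Ring.inverse (1 - γ ^ k • Mm v) * Cc v) := by
    intro v hv
    have hv' : ‖γ ^ k • corKernel P p v k‖ < 1 := by rw [← hMm]; exact hv
    have hJk : ∀ s, Jk P g γ p v k s =
        ∑ t, Ring.inverse (1 - γ ^ k • Mm v) s t * blockCost P g γ p v k t := by
      intro s
      rw [hMm]
      exact Jk_eq P g γ p v k hv' s
    rw [hLμ]
    unfold JkInit
    refine Finset.sum_congr rfl fun s _ => ?_
    rw [hJk s, Matrix.mul_apply]
    congr 1
    refine Finset.sum_congr rfl fun t _ => ?_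
    rw [hCc]
  -- Bellman identities
  have hmulinv : (1 - γ ^ k • Mm w) * R = 1 := one_sub_mul_inv _ hnw
  have hinvmul' : R' * (1 - γ ^ k • Mm w') = 1 := inv_mul_one_sub _ hnw'
  have hBell : Jmat = Cc w + γ ^ k • (Mm w * Jmat) := by
    have h1 : (1 - γ ^ k • Mm w) * Jmat = Cc w := by
      rw [hJdef, ← Matrix.mul_assoc, hmulinv, Matrix.one_mul]
    have h2 : Jmat - γ ^ k • (Mm w * Jmat) = Cc w := by
      rw [← h1, Matrix.sub_mul, Matrix.one_mul, Matrix.smul_mul]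
    rw [← h2]; abel
  -- derivative computation
  have hfderiv : fderiv ℝ (fun v : D → ℝ => JkInit P g γ p v k μ) w (w' - w) =
      Lμ (R * Cc (w' - w) + (R * (γ ^ k • Mm (w' - w)) * R) * Cc w) := by
    have hΦ : HasFDerivAt (fun v : D → ℝ => (1 : Matrix S S ℝ) - γ ^ k • Mm v)
        (-(γ ^ k • Mm)) w := by
      have h := ((γ ^ k • Mm).hasFDerivAt (x := w)).const_sub (1 : Matrix S S ℝ)
      exact h
    have hu : IsUnit ((1 : Matrix S S ℝ) - γ ^ k • Mm w) := isUnit_one_sub_of_norm_lt_one hnw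
    obtain ⟨uw, huw⟩ := hu
    have hRu : ((uw⁻¹ : (Matrix S S ℝ)ˣ) : Matrix S S ℝ) = R := by
      rw [← Ring.inverse_unit, huw]
    have hInv : HasFDerivAt Ring.inverse
        (-(ContinuousLinearMap.mulLeftRight ℝ (Matrix S S ℝ) R R))
        ((1 : Matrix S S ℝ) - γ ^ k • Mm w) := by
      have h := hasFDerivAt_ringInverse (𝕜 := ℝ) uw
      rw [hRu, huw] at h
      exact h
    have hN := hInv.comp w hΦ
    have hCd : HasFDerivAt (fun v : D → ℝ => Cc v) Cc w := Cc.hasFDerivAt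
    have hG := hN.mul' hCd
    have hFd := Lμ.hasFDerivAt.comp w hG
    have hopen : IsOpen {v : D → ℝ | ‖γ ^ k • Mm v‖ < 1} :=
      by
        have hc := (γ ^ k • Mm).continuous.norm
        simp only [ContinuousLinearMap.smul_apply] at hc
        exact isOpen_lt hc continuous_const
    have hee : (fun v : D → ℝ => JkInit P g γ p v k μ) =ᶠ[nhds w]
        (fun v => Lμ (Ring.inverse (1 - γ ^ k • Mm v) * Cc v)) := by
      filter_upwards [hopen.mem_nhds hnw] with v hv
      exact hclosed v hv
    have hFd' : HasFDerivAt (fun v : D → ℝ => Lμ (Ring.inverse (1 - γ ^ k • Mm v) * Cc v))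
        _ w := hFd
    rw [hee.fderiv_eq, hFd'.fderiv]
    change Lμ (Ring.inverse (1 - γ ^ k • Mm w) * Cc (w' - w) +
      -(R * (-(γ ^ k • Mm (w' - w))) * R) * Cc w) = _
    rw [← hRdef]
    simp only [Matrix.mul_neg, Matrix.neg_mul, neg_neg]
  -- value identities
  have hfw : JkInit P g γ p w k μ = Lμ Jmat := by
    rw [hclosed w hnw]
  have hfw' : JkInit P g γ p w' k μ = Lμ (R' * Cc w') := by
    rw [hclosed w' hnw']
  -- rewrite the derivative as Lμ (R * (Amat - Jmat))
  have hEexp : R * Cc (w' - w) + (R * (γ ^ k • Mm (w' - w)) * R) * Cc w =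
      R * (Amat - Jmat) := by
    have hCsub : Cc (w' - w) = Cc w' - Cc w := map_sub _ _ _
    have hMsub : Mm (w' - w) = Mm w' - Mm w := map_sub _ _ _
    rw [hCsub, hMsub, hAdef]
    have : Cc w' - Cc w + (γ ^ k • (Mm w' - Mm w)) * Jmat =
        Cc w' + γ ^ k • (Mm w' * Jmat) - Jmat := by
      rw [Matrix.smul_mul, Matrix.sub_mul, smul_sub]
      calc Cc w' - Cc w + (γ ^ k • (Mm w' * Jmat) - γ ^ k • (Mm w * Jmat))
          = Cc w' + γ ^ k • (Mm w' * Jmat) - (Cc w + γ ^ k • (Mm w * Jmat)) := by abel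
        _ = Cc w' + γ ^ k • (Mm w' * Jmat) - Jmat := by rw [← hBell]
    calc R * (Cc w' - Cc w) + R * (γ ^ k • (Mm w' - Mm w)) * R * Cc w
        = R * (Cc w' - Cc w) + R * ((γ ^ k • (Mm w' - Mm w)) * (R * Cc w)) := by
          rw [Matrix.mul_assoc, Matrix.mul_assoc]
      _ = R * ((Cc w' - Cc w) + (γ ^ k • (Mm w' - Mm w)) * Jmat) := by
          rw [Matrix.mul_add, hJdef]
      _ = R * (Amat - Jmat) := by rw [hAdef, ← this]
  -- PDL
  have hPDL : JkInit P g γ p w' k μ - JkInit P g γ p w k μ = Lμ (R' * (Amat - Jmat)) := by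
    have h3 : Amat - Jmat = Cc w' - (1 - γ ^ k • Mm w') * Jmat := by
      rw [hAdef, Matrix.sub_mul, Matrix.one_mul, Matrix.smul_mul]
      abel
    have h4 : R' * (Amat - Jmat) = R' * Cc w' - Jmat := by
      rw [h3, Matrix.mul_sub, ← Matrix.mul_assoc, hinvmul', Matrix.one_mul]
    rw [h4, map_sub, hfw, hfw']
  -- scalar quantities
  have hRpos : ∀ i j, 0 ≤ R i j := by
    intro i j
    rw [hRdef, hMm]
    exact inv_entry_nonneg (hcor w hw) hβ0.le hβ1 i j
  have hR'pos : ∀ i j, 0 ≤ R' i j := by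
    intro i j
    rw [hR'def, hMm]
    exact inv_entry_nonneg (hcor w' hw') hβ0.le hβ1 i j
  have hRrow : ∀ i, ∑ j, R i j = (1 - γ ^ k)⁻¹ := by
    intro i
    rw [hRdef]
    simp_rw [hMm]
    exact inv_row_sum (hcor w hw) hβ0.le hβ1 i
  have hR'row : ∀ i, ∑ j, R' i j = (1 - γ ^ k)⁻¹ := by
    intro i
    rw [hR'def]
    simp_rw [hMm]
    exact inv_row_sum (hcor w' hw') hβ0.le hβ1 i
  -- the geometric sum value
  have hsum : (∑ t ∈ Finset.range k, γ ^ t) = (1 - γ ^ k) / (1 - γ) := by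
    rw [eq_div_iff h1γ.ne']
    linear_combination -(geom_sum_mul γ k)
  have hBval : (∑ t ∈ Finset.range k, γ ^ t) * gmax = (1 - γ ^ k) * (gmax / (1 - γ)) := by
    rw [hsum]; ring
  -- bound on the value vector
  have hvecb : ∀ (Y : Matrix S S ℝ) (v : D → ℝ), v ∈ stdSimplex ℝ D →
      (∀ i j, 0 ≤ Y i j) → (∀ i, ∑ j, Y i j = (1 - γ ^ k)⁻¹) →
      ∀ t r, |(Y * Cc v) t r| ≤ gmax / (1 - γ) := by
    intro Y v hv hYpos hYrow t r
    rw [Matrix.mul_apply]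
    refine le_trans (Finset.abs_sum_le_sum_abs _ _) ?_
    calc ∑ x, |Y t x * Cc v x r|
        ≤ ∑ x, Y t x * ((1 - γ ^ k) * (gmax / (1 - γ))) := by
          refine Finset.sum_le_sum fun x _ => ?_
          rw [abs_mul, abs_of_nonneg (hYpos t x)]
          refine mul_le_mul_of_nonneg_left ?_ (hYpos t x)
          rw [hCc]
          exact le_trans (abs_blockCost_le hP hg hγ0.le hv k x) (le_of_eq hBval)
      _ = (1 - γ ^ k)⁻¹ * ((1 - γ ^ k) * (gmax / (1 - γ))) := by
          rw [← Finset.sum_mul, hYrow t]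
      _ = gmax / (1 - γ) := by
          rw [← mul_assoc, inv_mul_cancel₀ h1β.ne', one_mul]
  have hJvb : ∀ t, |Jmat t s₀| ≤ gmax / (1 - γ) := by
    intro t
    rw [hJdef]
    exact hvecb R w hw hRpos hRrow t s₀
  have hM'st : IsStoch (Mm w') := by rw [hMm]; exact hcor w' hw'
  have hMst : IsStoch (Mm w) := by rw [hMm]; exact hcor w hw
  have hAb : ∀ t, |Amat t s₀| ≤ gmax / (1 - γ) := by
    intro t
    have hAentry : Amat t s₀ = Cc w' t s₀ + γ ^ k * (Mm w' * Jmat) t s₀ := by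
      rw [hAdef, Matrix.add_apply, Matrix.smul_apply, smul_eq_mul]
    rw [hAentry]
    have h1 : |Cc w' t s₀| ≤ (1 - γ ^ k) * (gmax / (1 - γ)) := by
      rw [hCc]
      exact le_trans (abs_blockCost_le hP hg hγ0.le hw' k t) (le_of_eq hBval)
    have h2 : |(Mm w' * Jmat) t s₀| ≤ gmax / (1 - γ) := by
      rw [Matrix.mul_apply]
      refine le_trans (Finset.abs_sum_le_sum_abs _ _) ?_
      calc ∑ r, |Mm w' t r * Jmat r s₀|
          ≤ ∑ r, Mm w' t r * (gmax / (1 - γ)) := by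
            refine Finset.sum_le_sum fun r _ => ?_
            rw [abs_mul, abs_of_nonneg (hM'st.1 t r)]
            exact mul_le_mul_of_nonneg_left (hJvb r) (hM'st.1 t r)
        _ = gmax / (1 - γ) := by rw [← Finset.sum_mul, hM'st.2 t, one_mul]
    calc |Cc w' t s₀ + γ ^ k * (Mm w' * Jmat) t s₀|
        ≤ |Cc w' t s₀| + γ ^ k * |(Mm w' * Jmat) t s₀| := by
          refine le_trans (abs_add_le _ _) ?_
          rw [abs_mul, abs_of_nonneg hβ0.le]
      _ ≤ (1 - γ ^ k) * (gmax / (1 - γ)) + γ ^ k * (gmax / (1 - γ)) := by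
          refine add_le_add h1 (mul_le_mul_of_nonneg_left h2 hβ0.le)
      _ = gmax / (1 - γ) := by ring
  have hDvb : ∀ t, |(Amat - Jmat) t s₀| ≤ 2 * (gmax / (1 - γ)) := by
    intro t
    rw [Matrix.sub_apply]
    refine le_trans (abs_sub _ _) ?_
    have := hAb t
    have := hJvb t
    linarith
  -- scalarization of Lμ (X * (Amat - Jmat))
  have hLsc : ∀ X : Matrix S S ℝ, Lμ (X * (Amat - Jmat)) =
      ∑ t, (∑ s, μ s * X s t) * (Amat - Jmat) t s₀ := by
    intro X
    rw [hLμ]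
    simp_rw [Matrix.mul_apply, Finset.mul_sum]
    rw [Finset.sum_comm]
    refine Finset.sum_congr rfl fun t _ => ?_
    rw [Finset.sum_mul]
    exact Finset.sum_congr rfl fun s _ => by ring
  -- occupancy decomposition
  have hRdec : R = 1 + γ ^ k • (Mm w * R) := by
    have h5 : R - γ ^ k • (Mm w * R) = 1 := by
      have h6 := hmulinv
      rw [Matrix.sub_mul, Matrix.one_mul, Matrix.smul_mul] at h6
      exact h6
    rw [← h5]; abel
  have hmulinv' : (1 - γ ^ k • Mm w') * R' = 1 := one_sub_mul_inv _ hnw'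
  have hR'dec : R' = 1 + γ ^ k • (Mm w' * R') := by
    have h5 : R' - γ ^ k • (Mm w' * R') = 1 := by
      have h6 := hmulinv'
      rw [Matrix.sub_mul, Matrix.one_mul, Matrix.smul_mul] at h6
      exact h6
    rw [← h5]; abel
  -- occupancy facts
  have hMRpos : ∀ s t, 0 ≤ (Mm w * R) s t := fun s t => by
    rw [Matrix.mul_apply]
    exact Finset.sum_nonneg fun r _ => mul_nonneg (hMst.1 s r) (hRpos r t)
  have hM'Rpos : ∀ s t, 0 ≤ (Mm w' * R') s t := fun s t => by
    rw [Matrix.mul_apply]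
    exact Finset.sum_nonneg fun r _ => mul_nonneg (hM'st.1 s r) (hR'pos r t)
  have hMRrow : ∀ s, ∑ t, (Mm w * R) s t = (1 - γ ^ k)⁻¹ := by
    intro s
    simp_rw [Matrix.mul_apply]
    rw [Finset.sum_comm]
    calc ∑ r, ∑ t, Mm w s r * R r t = ∑ r, Mm w s r * ∑ t, R r t := by
          simp_rw [Finset.mul_sum]
      _ = (1 - γ ^ k)⁻¹ := by
          simp_rw [hRrow]
          rw [← Finset.sum_mul, hMst.2 s, one_mul]
  have hM'Rrow : ∀ s, ∑ t, (Mm w' * R') s t = (1 - γ ^ k)⁻¹ := by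
    intro s
    simp_rw [Matrix.mul_apply]
    rw [Finset.sum_comm]
    calc ∑ r, ∑ t, Mm w' s r * R' r t = ∑ r, Mm w' s r * ∑ t, R' r t := by
          simp_rw [Finset.mul_sum]
      _ = (1 - γ ^ k)⁻¹ := by
          simp_rw [hR'row]
          rw [← Finset.sum_mul, hM'st.2 s, one_mul]
  have hρpos : ∀ t, 0 ≤ ∑ s, μ s * (Mm w * R) s t := fun t =>
    Finset.sum_nonneg fun s _ => mul_nonneg (hμ.1 s) (hMRpos s t)
  have hρ'pos : ∀ t, 0 ≤ ∑ s, μ s * (Mm w' * R') s t := fun t =>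
    Finset.sum_nonneg fun s _ => mul_nonneg (hμ.1 s) (hM'Rpos s t)
  have hρsum : ∑ t, ∑ s, μ s * (Mm w * R) s t = (1 - γ ^ k)⁻¹ := by
    rw [Finset.sum_comm]
    calc ∑ s, ∑ t, μ s * (Mm w * R) s t = ∑ s, μ s * ∑ t, (Mm w * R) s t := by
          simp_rw [Finset.mul_sum]
      _ = (1 - γ ^ k)⁻¹ := by
          simp_rw [hMRrow]
          rw [← Finset.sum_mul, hμ.2, one_mul]
  have hρ'sum : ∑ t, ∑ s, μ s * (Mm w' * R') s t = (1 - γ ^ k)⁻¹ := by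
    rw [Finset.sum_comm]
    calc ∑ s, ∑ t, μ s * (Mm w' * R') s t = ∑ s, μ s * ∑ t, (Mm w' * R') s t := by
          simp_rw [Finset.mul_sum]
      _ = (1 - γ ^ k)⁻¹ := by
          simp_rw [hM'Rrow]
          rw [← Finset.sum_mul, hμ.2, one_mul]
  have hν : ∀ t, (∑ s, μ s * R s t) = μ t + γ ^ k * ∑ s, μ s * (Mm w * R) s t := by
    intro t
    conv_lhs => rw [hRdec]
    calc ∑ s, μ s * (1 + γ ^ k • (Mm w * R)) s t
        = ∑ s, (μ s * (1 : Matrix S S ℝ) s t + γ ^ k * (μ s * (Mm w * R) s t)) := by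
          refine Finset.sum_congr rfl fun s _ => ?_
          rw [Matrix.add_apply, Matrix.smul_apply, smul_eq_mul]
          ring
      _ = μ t + γ ^ k * ∑ s, μ s * (Mm w * R) s t := by
          rw [Finset.sum_add_distrib, ← Finset.mul_sum]
          congr 1
          simp [Matrix.one_apply, mul_ite]
  have hν' : ∀ t, (∑ s, μ s * R' s t) = μ t + γ ^ k * ∑ s, μ s * (Mm w' * R') s t := by
    intro t
    conv_lhs => rw [hR'dec]
    calc ∑ s, μ s * (1 + γ ^ k • (Mm w' * R')) s t
        = ∑ s, (μ s * (1 : Matrix S S ℝ) s t + γ ^ k * (μ s * (Mm w' * R') s t)) := by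
          refine Finset.sum_congr rfl fun s _ => ?_
          rw [Matrix.add_apply, Matrix.smul_apply, smul_eq_mul]
          ring
      _ = μ t + γ ^ k * ∑ s, μ s * (Mm w' * R') s t := by
          rw [Finset.sum_add_distrib, ← Finset.mul_sum]
          congr 1
          simp [Matrix.one_apply, mul_ite]
  have hνdiff : ∑ t, |(∑ s, μ s * R s t) - (∑ s, μ s * R' s t)| ≤
      2 * γ ^ k * (1 - γ ^ k)⁻¹ := by
    calc ∑ t, |(∑ s, μ s * R s t) - (∑ s, μ s * R' s t)|
        ≤ ∑ t, γ ^ k * ((∑ s, μ s * (Mm w * R) s t) + ∑ s, μ s * (Mm w' * R') s t) := by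
          refine Finset.sum_le_sum fun t _ => ?_
          rw [hν t, hν' t, add_sub_add_left_eq_sub, ← mul_sub, abs_mul,
            abs_of_nonneg hβ0.le]
          refine mul_le_mul_of_nonneg_left ?_ hβ0.le
          rw [abs_sub_le_iff]
          constructor <;> linarith [hρpos t, hρ'pos t]
      _ = γ ^ k * ((1 - γ ^ k)⁻¹ + (1 - γ ^ k)⁻¹) := by
          rw [← Finset.mul_sum, Finset.sum_add_distrib, hρsum, hρ'sum]
      _ = 2 * γ ^ k * (1 - γ ^ k)⁻¹ := by ring
  -- the derivative and the performance difference as sums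
  have hE : fderiv ℝ (fun v : D → ℝ => JkInit P g γ p v k μ) w (w' - w) =
      ∑ t, (∑ s, μ s * R s t) * (Amat - Jmat) t s₀ := by
    rw [hfderiv, hEexp, hLsc R]
  have hΔ : JkInit P g γ p w' k μ - JkInit P g γ p w k μ =
      ∑ t, (∑ s, μ s * R' s t) * (Amat - Jmat) t s₀ := by
    rw [hPDL, hLsc R']
  have hkey : fderiv ℝ (fun v : D → ℝ => JkInit P g γ p v k μ) w (w' - w) -
      (JkInit P g γ p w' k μ - JkInit P g γ p w k μ) ≤
      2 * γ ^ k * (1 - γ ^ k)⁻¹ * (2 * (gmax / (1 - γ))) := by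
    rw [hE, hΔ, ← Finset.sum_sub_distrib]
    calc ∑ t, ((∑ s, μ s * R s t) * (Amat - Jmat) t s₀ -
          (∑ s, μ s * R' s t) * (Amat - Jmat) t s₀)
        ≤ ∑ t, |(∑ s, μ s * R s t) - (∑ s, μ s * R' s t)| * (2 * (gmax / (1 - γ))) := by
          refine Finset.sum_le_sum fun t _ => ?_
          have h9 : (∑ s, μ s * R s t) * (Amat - Jmat) t s₀ -
              (∑ s, μ s * R' s t) * (Amat - Jmat) t s₀ =
              ((∑ s, μ s * R s t) - ∑ s, μ s * R' s t) * (Amat - Jmat) t s₀ := by ring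
          rw [h9]
          calc ((∑ s, μ s * R s t) - ∑ s, μ s * R' s t) * (Amat - Jmat) t s₀
              ≤ |((∑ s, μ s * R s t) - ∑ s, μ s * R' s t) * (Amat - Jmat) t s₀| :=
                le_abs_self _
            _ = |(∑ s, μ s * R s t) - ∑ s, μ s * R' s t| * |(Amat - Jmat) t s₀| :=
                abs_mul _ _
            _ ≤ |(∑ s, μ s * R s t) - ∑ s, μ s * R' s t| * (2 * (gmax / (1 - γ))) :=
                mul_le_mul_of_nonneg_left (hDvb t) (abs_nonneg _)
      _ = (∑ t, |(∑ s, μ s * R s t) - ∑ s, μ s * R' s t|) * (2 * (gmax / (1 - γ))) :=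
          (Finset.sum_mul _ _ _).symm
      _ ≤ 2 * γ ^ k * (1 - γ ^ k)⁻¹ * (2 * (gmax / (1 - γ))) := by
          refine mul_le_mul_of_nonneg_right hνdiff ?_
          positivity
  -- bounds on the values
  have hfwb : |JkInit P g γ p w k μ| ≤ gmax / (1 - γ) := by
    rw [hfw, hLμ]
    refine le_trans (Finset.abs_sum_le_sum_abs _ _) ?_
    calc ∑ s, |μ s * Jmat s s₀| ≤ ∑ s, μ s * (gmax / (1 - γ)) := by
          refine Finset.sum_le_sum fun s _ => ?_
          rw [abs_mul, abs_of_nonneg (hμ.1 s)]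
          exact mul_le_mul_of_nonneg_left (hJvb s) (hμ.1 s)
      _ = gmax / (1 - γ) := by rw [← Finset.sum_mul, hμ.2, one_mul]
  have hfw'b : |JkInit P g γ p w' k μ| ≤ gmax / (1 - γ) := by
    rw [hfw', hLμ]
    refine le_trans (Finset.abs_sum_le_sum_abs _ _) ?_
    calc ∑ s, |μ s * (R' * Cc w') s s₀| ≤ ∑ s, μ s * (gmax / (1 - γ)) := by
          refine Finset.sum_le_sum fun s _ => ?_
          rw [abs_mul, abs_of_nonneg (hμ.1 s)]
          exact mul_le_mul_of_nonneg_left (hvecb R' w' hw' hR'pos hR'row s s₀) (hμ.1 s)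
      _ = gmax / (1 - γ) := by rw [← Finset.sum_mul, hμ.2, one_mul]
  -- final arithmetic
  have h6eq : 6 * γ ^ k * gmax / ((1 - γ ^ k) * (1 - γ)) =
      6 * γ ^ k * (1 - γ ^ k)⁻¹ * (gmax / (1 - γ)) := by
    field_simp
  have hqeq : (1 : ℝ) / (1 - γ ^ k) = 1 + γ ^ k * (1 - γ ^ k)⁻¹ := by
    field_simp
    ring
  have hmain : 0 ≤ γ ^ k * (1 - γ ^ k)⁻¹ *
      (JkInit P g γ p w' k μ - JkInit P g γ p w k μ + 2 * (gmax / (1 - γ))) := by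
    refine mul_nonneg (by positivity) ?_
    have h10 := (abs_le.mp hfwb).2
    have h11 := (abs_le.mp hfw'b).1
    linarith
  rw [h6eq, hqeq]
  nlinarith [hkey, hmain]

end MainAGD

end
end
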